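/- arXiv:math/0210209 — 4 statements merged into one kernel-verified Lean document; each statement's English description precedes it below -/
import Mathlib

section
/- Fix m ≥ 1. The ideals occurring in the classification of colength-m ideals of R are pairwise distinct: if I^m_i(a) = I^m_{i'}(a') (with 1 ≤ i, i' ≤ m−1 and a, a' ∈ ℂ nonzero) then i = i' and a = a'; if Q^m_i = Q^m_{i'} (with 1 ≤ i, i' ≤ m) then i = i'; and no ideal I^m_i(a) is equal to any ideal Q^m_{i'}. -/
noncomputable section

open MvPolynomial

/-- The polynomial ring `ℂ[x,y]`. -/
abbrev Pc : Type := MvPolynomial (Fin 2) ℂ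

/-- The ideal `(xy)` of `ℂ[x,y]`. -/
def nodeIdeal : Ideal Pc := Ideal.span {X 0 * X 1}

/-- The affine coordinate ring `ℂ[x,y]/(xy)` of the node. -/
abbrev Anode : Type := Pc ⧸ nodeIdeal

/-- The class of `x` in `ℂ[x,y]/(xy)`. -/
def xA : Anode := Ideal.Quotient.mk nodeIdeal (X 0)

/-- The class of `y` in `ℂ[x,y]/(xy)`. -/
def yA : Anode := Ideal.Quotient.mk nodeIdeal (X 1)

/-- The maximal ideal `(x,y)` of `ℂ[x,y]/(xy)`. -/
def mA : Ideal Anode := Ideal.span {xA, yA}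

/-- Evaluation of polynomials at the origin. -/
def evalO : Pc →+* ℂ := (aeval (fun _ => (0:ℂ)) : Pc →ₐ[ℂ] ℂ).toRingHom

lemma node_le_ker : nodeIdeal ≤ RingHom.ker evalO := by
  rw [nodeIdeal, Ideal.span_le, Set.singleton_subset_iff]
  simp [evalO, RingHom.mem_ker]

/-- Evaluation at the origin, descended to `ℂ[x,y]/(xy)`. -/
def εA : Anode →+* ℂ := Ideal.Quotient.lift nodeIdeal evalO node_le_ker

lemma sub_const_mem (p : Pc) :
    p - C (constantCoeff p) ∈ (Ideal.span {(X 0 : Pc), X 1}) := by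
  induction p using MvPolynomial.induction_on with
  | C a => simp
  | add p q hp hq =>
      have : p + q - C (constantCoeff (p + q)) =
          (p - C (constantCoeff p)) + (q - C (constantCoeff q)) := by
        rw [map_add, map_add]; ring
      rw [this]; exact Ideal.add_mem _ hp hq
  | mul_X p i hp =>
      have h0 : constantCoeff (p * X i) = 0 := by
        rw [map_mul, constantCoeff_X, mul_zero]
      rw [h0, map_zero, sub_zero]
      refine Ideal.mul_mem_left _ p (Ideal.subset_span ?_)
      fin_cases i <;> simp

lemma mA_eq_ker : mA = RingHom.ker εA := by
  apply le_antisymm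
  · rw [mA, Ideal.span_le]
    rintro z hz
    simp only [Set.mem_insert_iff, Set.mem_singleton_iff] at hz
    rcases hz with rfl | rfl <;>
      simp [RingHom.mem_ker, xA, yA, εA, evalO, Ideal.Quotient.lift_mk]
  · intro z hz
    obtain ⟨p, rfl⟩ := Ideal.Quotient.mk_surjective z
    have hev : constantCoeff p = 0 := by
      have : εA (Ideal.Quotient.mk nodeIdeal p) = evalO p := rfl
      rw [RingHom.mem_ker, this] at hz
      simpa [evalO] using hz
    have hp : p ∈ (Ideal.span {(X 0 : Pc), X 1}) := by
      have := sub_const_mem p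
      rwa [hev, map_zero, sub_zero] at this
    have : Ideal.Quotient.mk nodeIdeal p ∈
        Ideal.map (Ideal.Quotient.mk nodeIdeal) (Ideal.span {(X 0 : Pc), X 1}) :=
      Ideal.mem_map_of_mem _ hp
    rwa [Ideal.map_span, Set.image_insert_eq, Set.image_singleton] at this

instance : mA.IsPrime := mA_eq_ker ▸ RingHom.ker_isPrime εA

/-- `R`, the localization of `ℂ[x,y]/(xy)` at the maximal ideal `(x,y)`. -/
abbrev Rnode : Type := Localization.AtPrime mA

/-- The element `x` of `R`. -/
def x : Rnode := algebraMap Anode Rnode xA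

/-- The element `y` of `R`. -/
def y : Rnode := algebraMap Anode Rnode yA

instance : Algebra ℂ Rnode :=
  ((algebraMap Anode Rnode).comp (algebraMap ℂ Anode)).toAlgebra

-- auxiliary development
def Ψx : Pc →ₐ[ℂ] PowerSeries ℂ := aeval ![PowerSeries.X, 0]
def Ψy : Pc →ₐ[ℂ] PowerSeries ℂ := aeval ![0, PowerSeries.X]

lemma node_le_ker_x : nodeIdeal ≤ RingHom.ker Ψx.toRingHom := by
  rw [nodeIdeal, Ideal.span_le, Set.singleton_subset_iff]
  simp [Ψx, RingHom.mem_ker]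

lemma node_le_ker_y : nodeIdeal ≤ RingHom.ker Ψy.toRingHom := by
  rw [nodeIdeal, Ideal.span_le, Set.singleton_subset_iff]
  simp [Ψy, RingHom.mem_ker]

def ψx : Anode →+* PowerSeries ℂ := Ideal.Quotient.lift nodeIdeal Ψx.toRingHom node_le_ker_x
def ψy : Anode →+* PowerSeries ℂ := Ideal.Quotient.lift nodeIdeal Ψy.toRingHom node_le_ker_y

lemma cc_ψx : (PowerSeries.constantCoeff (R := ℂ)).comp ψx = εA := by
  have h : (PowerSeries.constantCoeff (R := ℂ)).comp Ψx.toRingHom = evalO := by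
    apply MvPolynomial.ringHom_ext
    · intro a; simp [Ψx, evalO, PowerSeries.algebraMap_apply]
    · intro i; fin_cases i <;> simp [Ψx, evalO]
  refine RingHom.ext fun z => ?_
  obtain ⟨p, rfl⟩ := Ideal.Quotient.mk_surjective z
  have := RingHom.congr_fun h p
  exact this

lemma cc_ψy : (PowerSeries.constantCoeff (R := ℂ)).comp ψy = εA := by
  have h : (PowerSeries.constantCoeff (R := ℂ)).comp Ψy.toRingHom = evalO := by
    apply MvPolynomial.ringHom_ext
    · intro a; simp [Ψy, evalO, PowerSeries.algebraMap_apply]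
    · intro i; fin_cases i <;> simp [Ψy, evalO]
  refine RingHom.ext fun z => ?_
  obtain ⟨p, rfl⟩ := Ideal.Quotient.mk_surjective z
  have := RingHom.congr_fun h p
  exact this

lemma ψ_unit {ψ : Anode →+* PowerSeries ℂ} (hψ : (PowerSeries.constantCoeff (R := ℂ)).comp ψ = εA)
    (s : mA.primeCompl) : IsUnit (ψ s) := by
  rw [PowerSeries.isUnit_iff_constantCoeff]
  have : (PowerSeries.constantCoeff (R := ℂ)) (ψ s) = εA s := RingHom.congr_fun hψ s
  rw [this]
  refine isUnit_iff_ne_zero.mpr fun h => ?_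
  obtain ⟨c, hc⟩ := s
  have h2 : c ∉ mA := hc
  rw [mA_eq_ker] at h2
  exact h2 (RingHom.mem_ker.mpr h)

def φx : Rnode →+* PowerSeries ℂ := IsLocalization.lift (M := mA.primeCompl) (ψ_unit cc_ψx)
def φy : Rnode →+* PowerSeries ℂ := IsLocalization.lift (M := mA.primeCompl) (ψ_unit cc_ψy)

lemma φx_alg (z : Anode) : φx (algebraMap Anode Rnode z) = ψx z :=
  IsLocalization.lift_eq _ z
lemma φy_alg (z : Anode) : φy (algebraMap Anode Rnode z) = ψy z :=
  IsLocalization.lift_eq _ z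

lemma φx_x : φx x = PowerSeries.X := by
  rw [x, φx_alg]; simp [ψx, xA, Ψx]
lemma φx_y : φx y = 0 := by
  rw [y, φx_alg]; simp [ψx, yA, Ψx]
lemma φy_x : φy x = 0 := by
  rw [x, φy_alg]; simp [ψy, xA, Ψy]
lemma φy_y : φy y = PowerSeries.X := by
  rw [y, φy_alg]; simp [ψy, yA, Ψy]

lemma smul_eq_mul' (a : ℂ) (r : Rnode) :
    a • r = algebraMap Anode Rnode (algebraMap ℂ Anode a) * r := by
  induction r using Localization.induction_on with
  | H p =>
    rw [Localization.smul_mk, ← Localization.mk_one_eq_algebraMap, Localization.mk_mul,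
        one_mul]
    congr 1
    exact Algebra.smul_def a p.1

lemma φx_smul (a : ℂ) (r : Rnode) : φx (a • r) = PowerSeries.C (R := ℂ) a * φx r := by
  rw [smul_eq_mul', map_mul, φx_alg]
  congr 1
  have h : algebraMap ℂ Anode a = Ideal.Quotient.mk nodeIdeal (C a) := rfl
  rw [h]
  simp [ψx, Ψx, PowerSeries.algebraMap_apply]

lemma φy_smul (a : ℂ) (r : Rnode) : φy (a • r) = PowerSeries.C (R := ℂ) a * φy r := by
  rw [smul_eq_mul', map_mul, φy_alg]
  congr 1
  have h : algebraMap ℂ Anode a = Ideal.Quotient.mk nodeIdeal (C a) := rfl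
  rw [h]
  simp [ψy, Ψy, PowerSeries.algebraMap_apply]

lemma cc_φ : (PowerSeries.constantCoeff (R := ℂ)).comp φx = (PowerSeries.constantCoeff (R := ℂ)).comp φy := by
  apply IsLocalization.ringHom_ext mA.primeCompl
  rw [RingHom.comp_assoc, RingHom.comp_assoc]
  have hx : φx.comp (algebraMap Anode Rnode) = ψx := RingHom.ext φx_alg
  have hy : φy.comp (algebraMap Anode Rnode) = ψy := RingHom.ext φy_alg
  rw [hx, hy, cc_ψx, cc_ψy]

lemma X_pow_span_inj {k l : ℕ}
    (h : (Ideal.span {(PowerSeries.X : PowerSeries ℂ) ^ k} : Ideal (PowerSeries ℂ)) =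
      Ideal.span {(PowerSeries.X : PowerSeries ℂ) ^ l}) : k = l := by
  have h1 : (PowerSeries.X : PowerSeries ℂ) ^ l ∣ PowerSeries.X ^ k :=
    Ideal.span_singleton_le_span_singleton.mp h.le
  have h2 : (PowerSeries.X : PowerSeries ℂ) ^ k ∣ PowerSeries.X ^ l :=
    Ideal.span_singleton_le_span_singleton.mp h.ge
  have hk : l ≤ k := by
    by_contra hkl
    push_neg at hkl
    have := PowerSeries.X_pow_dvd_iff.mp h1 k hkl
    simp [PowerSeries.coeff_X_pow] at this
  have hl : k ≤ l := by
    by_contra hkl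
    push_neg at hkl
    have := PowerSeries.X_pow_dvd_iff.mp h2 l hkl
    simp [PowerSeries.coeff_X_pow] at this
  omega

lemma span_C_mul (a : ℂ) (ha : a ≠ 0) (f : PowerSeries ℂ) :
    Ideal.span {PowerSeries.C (R := ℂ) a * f} = Ideal.span {f} :=
  Ideal.span_singleton_mul_left_unit
    (by simpa [PowerSeries.isUnit_iff_constantCoeff] using isUnit_iff_ne_zero.mpr ha) f

lemma φx_gen (i k : ℕ) (hi : 1 ≤ i) (a : ℂ) :
    φx (y ^ i + a • x ^ k) = PowerSeries.C (R := ℂ) a * PowerSeries.X ^ k := by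
  rw [map_add, map_pow, φx_y, zero_pow (by omega), zero_add, φx_smul, map_pow, φx_x]

lemma φy_gen (i k : ℕ) (hk : 1 ≤ k) (a : ℂ) :
    φy (y ^ i + a • x ^ k) = PowerSeries.X ^ i := by
  rw [map_add, map_pow, φy_y, φy_smul, map_pow, φy_x, zero_pow (by omega), mul_zero, add_zero]


theorem classification_ideals_pairwise_distinct (m : ℕ) (hm : 1 ≤ m) :
    (∀ i i' : ℕ, ∀ a a' : ℂ, 1 ≤ i → i ≤ m - 1 → 1 ≤ i' → i' ≤ m - 1 → a ≠ 0 → a' ≠ 0 →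
      Ideal.span {y ^ i + a • x ^ (m - i)} = Ideal.span {y ^ i' + a' • x ^ (m - i')} →
      i = i' ∧ a = a') ∧
    (∀ i i' : ℕ, 1 ≤ i → i ≤ m → 1 ≤ i' → i' ≤ m →
      (Ideal.span {x ^ (m - i + 1), y ^ i} : Ideal Rnode) =
        Ideal.span {x ^ (m - i' + 1), y ^ i'} →
      i = i') ∧
    (∀ i i' : ℕ, ∀ a : ℂ, 1 ≤ i → i ≤ m - 1 → a ≠ 0 → 1 ≤ i' → i' ≤ m →
      (Ideal.span {y ^ i + a • x ^ (m - i)} : Ideal Rnode) ≠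
        Ideal.span {x ^ (m - i' + 1), y ^ i'}) := by
  refine ⟨?_, ?_, ?_⟩
  · intro i i' a a' hi1 him hi1' him' ha ha' hspan
    have hii : i = i' := by
      have hmapy := congrArg (Ideal.map φy) hspan
      rw [Ideal.map_span, Ideal.map_span, Set.image_singleton, Set.image_singleton,
        φy_gen i (m - i) (by omega) a, φy_gen i' (m - i') (by omega) a'] at hmapy
      exact X_pow_span_inj hmapy
    subst hii
    refine ⟨rfl, ?_⟩
    have hmem : y ^ i + a • x ^ (m - i) ∈ Ideal.span {y ^ i + a' • x ^ (m - i)} := by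
      rw [← hspan]; exact Ideal.subset_span rfl
    obtain ⟨r, hr⟩ := Ideal.mem_span_singleton.mp hmem
    -- hr : y ^ i + a • x ^ (m - i) = (y ^ i + a' • x ^ (m - i)) * r
    have hry : φy r = 1 := by
      have := congrArg φy hr
      rw [map_mul, φy_gen i (m - i) (by omega) a, φy_gen i (m - i) (by omega) a'] at this
      have hX : (PowerSeries.X : PowerSeries ℂ) ^ i ≠ 0 :=
        pow_ne_zero _ PowerSeries.X_ne_zero
      exact mul_left_cancel₀ hX (by rw [mul_one]; exact this.symm)
    have hrx : PowerSeries.C (R := ℂ) a = PowerSeries.C (R := ℂ) a' * φx r := by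
      have := congrArg φx hr
      rw [map_mul, φx_gen i (m - i) (by omega) a, φx_gen i (m - i) (by omega) a'] at this
      have hX : (PowerSeries.X : PowerSeries ℂ) ^ (m - i) ≠ 0 :=
        pow_ne_zero _ PowerSeries.X_ne_zero
      apply mul_right_cancel₀ hX
      rw [this]; ring
    have hcc : PowerSeries.constantCoeff (R := ℂ) (φx r) = PowerSeries.constantCoeff (R := ℂ) (φy r) :=
      RingHom.congr_fun cc_φ r
    have := congrArg (PowerSeries.constantCoeff (R := ℂ)) hrx
    rw [map_mul, PowerSeries.constantCoeff_C, PowerSeries.constantCoeff_C, hcc, hry,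
      map_one, mul_one] at this
    exact this
  · intro i i' hi1 him hi1' him' hspan
    have hmapy := congrArg (Ideal.map φy) hspan
    rw [Ideal.map_span, Ideal.map_span, Set.image_insert_eq, Set.image_singleton,
      Set.image_insert_eq, Set.image_singleton] at hmapy
    rw [map_pow, map_pow, map_pow, map_pow, φy_x, φy_y,
      zero_pow (by omega : m - i + 1 ≠ 0), zero_pow (by omega : m - i' + 1 ≠ 0)] at hmapy
    rw [Ideal.span, Ideal.span, Submodule.span_insert_zero, Submodule.span_insert_zero] at hmapy
    exact X_pow_span_inj hmapy
  · intro i i' a hi1 him ha hi1' him' hspan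
    have hii : i = i' := by
      have hmapy := congrArg (Ideal.map φy) hspan
      rw [Ideal.map_span, Ideal.map_span, Set.image_singleton, Set.image_insert_eq,
        Set.image_singleton, φy_gen i (m - i) (by omega) a, map_pow, map_pow, φy_x, φy_y,
        zero_pow (by omega : m - i' + 1 ≠ 0)] at hmapy
      rw [show Ideal.span {(0 : PowerSeries ℂ), PowerSeries.X ^ i'} =
          Ideal.span {(PowerSeries.X : PowerSeries ℂ) ^ i'} from
        Submodule.span_insert_zero] at hmapy
      exact X_pow_span_inj hmapy
    subst hii
    have hmapx := congrArg (Ideal.map φx) hspan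
    rw [Ideal.map_span, Ideal.map_span, Set.image_singleton, Set.image_insert_eq,
      Set.image_singleton, φx_gen i (m - i) (by omega) a, map_pow, map_pow, φx_x, φx_y,
      zero_pow (by omega : i ≠ 0), span_C_mul a ha] at hmapx
    rw [show ({(PowerSeries.X : PowerSeries ℂ) ^ (m - i + 1), 0} : Set (PowerSeries ℂ)) =
        insert 0 {(PowerSeries.X : PowerSeries ℂ) ^ (m - i + 1)} from Set.pair_comm _ _] at hmapx
    rw [show Ideal.span (insert 0 {(PowerSeries.X : PowerSeries ℂ) ^ (m - i + 1)}) =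
        Ideal.span {(PowerSeries.X : PowerSeries ℂ) ^ (m - i + 1)} from
      Submodule.span_insert_zero] at hmapx
    have := X_pow_span_inj hmapx
    omega

end
end

section
/- Let m ≥ 2, 1 ≤ i ≤ m−1 and a ∈ ℂ with a ≠ 0. Then the unique ideal J of R with I^m_i(a) ⊆ J and dim_ℂ(R/J) = m−1 is Q^{m−1}_i = (x^{m−i}, y^i). -/
noncomputable section

open MvPolynomial

instance : CommRing Rnode := inferInstance

instance (I : Ideal Rnode) : Algebra ℂ (Rnode ⧸ I) := Ideal.Quotient.algebra ℂ

namespace NodeAux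

set_option synthInstance.maxHeartbeats 1000000
set_option maxHeartbeats 2000000

open Finset

/-- Exponent vector `x^j y^k`. -/
def E (j k : ℕ) : Fin 2 →₀ ℕ := Finsupp.single 0 j + Finsupp.single 1 k

lemma E_apply0 (j k : ℕ) : E j k 0 = j := by
  simp [E, Finsupp.single_apply]

lemma E_apply1 (j k : ℕ) : E j k 1 = k := by
  simp [E, Finsupp.single_apply]

lemma E_eq_iff {j k j' k' : ℕ} : E j k = E j' k' ↔ j = j' ∧ k = k' := by
  constructor
  · intro h
    constructor
    · rw [← E_apply0 j k, h, E_apply0]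
    · rw [← E_apply1 j k, h, E_apply1]
  · rintro ⟨rfl, rfl⟩; rfl

lemma E_le_iff {j k j' k' : ℕ} : E j k ≤ E j' k' ↔ j ≤ j' ∧ k ≤ k' := by
  rw [Finsupp.le_def]
  constructor
  · intro h
    exact ⟨by simpa [E_apply0] using h 0, by simpa [E_apply1] using h 1⟩
  · rintro ⟨h1, h2⟩ s
    fin_cases s <;> simpa [E_apply0, E_apply1]

lemma E_sub {j k j' k' : ℕ} : E j' k' - E j k = E (j' - j) (k' - k) := by
  ext s
  fin_cases s <;> simp [Finsupp.tsub_apply, E_apply0, E_apply1]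

lemma E_add {j k j' k' : ℕ} : E j k + E j' k' = E (j + j') (k + k') := by
  ext s
  fin_cases s <;> simp [Finsupp.add_apply, E_apply0, E_apply1]

open MvPolynomial

lemma X0_pow (j : ℕ) : (X 0 : Pc) ^ j = monomial (E j 0) 1 := by
  rw [X_pow_eq_monomial]
  congr 1
  simp [E]

lemma X1_pow (k : ℕ) : (X 1 : Pc) ^ k = monomial (E 0 k) 1 := by
  rw [X_pow_eq_monomial]
  congr 1
  simp [E]

lemma XY_mon : (X 0 * X 1 : Pc) = monomial (E 1 1) 1 := by
  rw [X, X, monomial_mul]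
  simp [E]

lemma mono_mul_mono (j k j' k' : ℕ) (r r' : ℂ) :
    (monomial (E j k) r : Pc) * monomial (E j' k') r' = monomial (E (j+j') (k+k')) (r * r') := by
  rw [monomial_mul, E_add]

/-- coefficient of `x^j y^k`. -/
def co (j k : ℕ) (p : Pc) : ℂ := MvPolynomial.coeff (E j k) p

lemma co_add (j k : ℕ) (p q : Pc) : co j k (p + q) = co j k p + co j k q :=
  coeff_add _ _ _

lemma co_smul (j k : ℕ) (c : ℂ) (p : Pc) : co j k (c • p) = c * co j k p :=
  coeff_smul _ _ _

lemma co_mul_mono (j k j0 k0 : ℕ) (r : ℂ) (q : Pc) :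
    co j k (q * monomial (E j0 k0) r) =
      if j0 ≤ j ∧ k0 ≤ k then co (j - j0) (k - k0) q * r else 0 := by
  rw [co, coeff_mul_monomial']
  by_cases h : j0 ≤ j ∧ k0 ≤ k
  · rw [if_pos (E_le_iff.mpr h), if_pos h, E_sub, co]
  · rw [if_neg (fun hc => h (E_le_iff.mp hc)), if_neg h]

lemma co_monomial (j k j0 k0 : ℕ) (r : ℂ) :
    co j k (monomial (E j0 k0) r : Pc) = if j0 = j ∧ k0 = k then r else 0 := by
  rw [co, coeff_monomial]
  by_cases h : j0 = j ∧ k0 = k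
  · rw [if_pos (E_eq_iff.mpr h), if_pos h]
  · rw [if_neg (fun hc => h (E_eq_iff.mp hc)), if_neg h]

/-- coefficient as linear map -/
def lco (j k : ℕ) : Pc →ₗ[ℂ] ℂ := MvPolynomial.lcoeff ℂ (E j k)

@[simp] lemma lco_apply (j k : ℕ) (p : Pc) : lco j k p = co j k p := rfl

end NodeAux
namespace NodeAux

set_option synthInstance.maxHeartbeats 1000000
set_option maxHeartbeats 2000000

open Finset MvPolynomial

section Params

variable (n i : ℕ) (a : ℂ)

def gP : Pc := X 1 ^ i + C a * X 0 ^ n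

lemma gP_eq : gP n i a = monomial (E 0 i) 1 + monomial (E n 0) a := by
  rw [gP, X1_pow, X0_pow, C_mul_monomial, mul_one]

def Ig : Ideal Pc := Ideal.span {X 0 * X 1, gP n i a}

def Lq : Ideal Pc := Ideal.span {X 0 * X 1, X 0 ^ n, X 1 ^ i}

lemma xy_mem_Ig : (X 0 * X 1 : Pc) ∈ Ig n i a :=
  Ideal.subset_span (by simp)

lemma gP_mem_Ig : gP n i a ∈ Ig n i a :=
  Ideal.subset_span (by simp)

variable {n i a}

/-- the coefficient conditions cutting out `Ig`. -/
def Zc (p : Pc) : Prop :=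
  (∀ j < n, co j 0 p = 0) ∧ (co n 0 p = a * co 0 i p) ∧
    (∀ k, 1 ≤ k → k < i → co 0 k p = 0)

lemma Zc_of_mem (hn : 1 ≤ n) (hi : 1 ≤ i) {p : Pc} (hp : p ∈ Ig n i a) : Zc (n := n) (i := i) (a := a) p := by
  rw [Ig, Ideal.mem_span_pair] at hp
  obtain ⟨u, v, rfl⟩ := hp
  have hrw : ∀ j k : ℕ, co j k (u * (X 0 * X 1) + v * gP n i a) =
      co j k (u * monomial (E 1 1) 1) + (co j k (v * monomial (E 0 i) 1)
        + co j k (v * monomial (E n 0) a)) := by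
    intro j k
    rw [XY_mon, gP_eq, mul_add, co_add, co_add]
  refine ⟨?_, ?_, ?_⟩
  · intro j hj
    rw [hrw]
    rw [co_mul_mono, co_mul_mono, co_mul_mono]
    rw [if_neg (by omega), if_neg (by omega), if_neg (by omega)]
    ring
  · have h1 : co n 0 (u * (X 0 * X 1) + v * gP n i a) = co 0 0 v * a := by
      rw [hrw, co_mul_mono, co_mul_mono, co_mul_mono]
      rw [if_neg (by omega), if_neg (by omega), if_pos (by omega)]
      simp [Nat.sub_self]
    have h2 : co 0 i (u * (X 0 * X 1) + v * gP n i a) = co 0 0 v := by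
      rw [hrw, co_mul_mono, co_mul_mono, co_mul_mono]
      rw [if_neg (by omega), if_pos (by omega), if_neg (by omega)]
      simp [Nat.sub_self]
    rw [h1, h2]; ring
  · intro k hk1 hk2
    rw [hrw, co_mul_mono, co_mul_mono, co_mul_mono]
    rw [if_neg (by omega), if_neg (by omega), if_neg (by omega)]
    ring

variable (n i a)

/-- normal form -/
def NF (p : Pc) : Pc :=
  (∑ j ∈ range n, co j 0 p • X 0 ^ j)
  + (co n 0 p - a * co 0 i p) • X 0 ^ n
  + ∑ k ∈ Ico 1 i, co 0 k p • X 1 ^ k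

variable {n i a}

lemma NF_add (p q : Pc) : NF n i a (p + q) = NF n i a p + NF n i a q := by
  simp only [NF, co_add]
  rw [show co n 0 p + co n 0 q - a * (co 0 i p + co 0 i q)
      = (co n 0 p - a * co 0 i p) + (co n 0 q - a * co 0 i q) by ring]
  simp only [add_smul, Finset.sum_add_distrib]
  abel

lemma xpow_mem (hn : 1 ≤ n) (hi : 1 ≤ i) (ha : a ≠ 0) {j : ℕ} (hj : n + 1 ≤ j) :
    (X 0 : Pc) ^ j ∈ Ig n i a := by
  obtain ⟨i', rfl⟩ : ∃ i', i = i' + 1 := ⟨i - 1, by omega⟩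
  have key : (X 0 : Pc) ^ (n + 1) =
      C a⁻¹ * (X 0 * gP n (i' + 1) a - X 1 ^ i' * (X 0 * X 1)) := by
    rw [gP]
    rw [show (X 0 : Pc) * (X 1 ^ (i' + 1) + C a * X 0 ^ n) - X 1 ^ i' * (X 0 * X 1)
        = C a * X 0 ^ (n + 1) by ring]
    rw [← mul_assoc, ← C_mul, inv_mul_cancel₀ ha, C_1, one_mul]
  obtain ⟨d, rfl⟩ : ∃ d, j = (n + 1) + d := ⟨j - (n + 1), by omega⟩
  rw [pow_add, key]
  apply Ideal.mul_mem_right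
  apply Ideal.mul_mem_left
  exact Ideal.sub_mem _ (Ideal.mul_mem_left _ _ (gP_mem_Ig _ _ _))
    (Ideal.mul_mem_left _ _ (xy_mem_Ig _ _ _))

lemma ypow_mem (hn : 1 ≤ n) {k : ℕ} (hk : i + 1 ≤ k) :
    (X 1 : Pc) ^ k ∈ Ig n i a := by
  obtain ⟨n', rfl⟩ : ∃ n', n = n' + 1 := ⟨n - 1, by omega⟩
  have key : (X 1 : Pc) ^ (i + 1) =
      X 1 * gP (n' + 1) i a - C a * X 0 ^ n' * (X 0 * X 1) := by
    rw [gP]; ring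
  obtain ⟨d, rfl⟩ : ∃ d, k = (i + 1) + d := ⟨k - (i + 1), by omega⟩
  rw [pow_add, key]
  apply Ideal.mul_mem_right
  exact Ideal.sub_mem _ (Ideal.mul_mem_left _ _ (gP_mem_Ig _ _ _))
    (Ideal.mul_mem_left _ _ (xy_mem_Ig _ _ _))

lemma mixed_mem {j k : ℕ} (hj : 1 ≤ j) (hk : 1 ≤ k) (r : ℂ) :
    (monomial (E j k) r : Pc) ∈ Ig n i a := by
  have hj' : j - 1 + 1 = j := by omega
  have hk' : k - 1 + 1 = k := by omega
  have h : (monomial (E (j-1) (k-1)) r : Pc) * (X 0 * X 1) = monomial (E j k) r := by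
    rw [XY_mon, mono_mul_mono, mul_one, hj', hk']
  rw [← h]
  exact Ideal.mul_mem_left _ _ (xy_mem_Ig _ _ _)

end Params

end NodeAux
namespace NodeAux

set_option synthInstance.maxHeartbeats 1000000
set_option maxHeartbeats 2000000

open Finset MvPolynomial

section Params
variable {n i : ℕ} {a : ℂ}

lemma mono_as_CXY (j k : ℕ) (r : ℂ) :
    (monomial (E j k) r : Pc) = C r * X 0 ^ j * X 1 ^ k := by
  rw [X0_pow, X1_pow, mul_assoc, mono_mul_mono, C_mul_monomial]
  norm_num

lemma fin2_eq (d : Fin 2 →₀ ℕ) : d = E (d 0) (d 1) := by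
  ext s
  fin_cases s <;> simp [E_apply0, E_apply1]

lemma sub_NF_monomial (hn : 1 ≤ n) (hi : 1 ≤ i) (ha : a ≠ 0) (j0 k0 : ℕ) (r : ℂ) :
    (monomial (E j0 k0) r : Pc) - NF n i a (monomial (E j0 k0) r) ∈ Ig n i a := by
  by_cases hk : k0 = 0
  · subst hk
    have hS2 : ∑ k ∈ Ico 1 i, co 0 k (monomial (E j0 0) r : Pc) • (X 1 : Pc) ^ k = 0 :=
      Finset.sum_eq_zero (fun k hk => by
        rw [co_monomial, if_neg (by have := (Finset.mem_Ico.mp hk).1; omega), zero_smul])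
    rcases lt_trichotomy j0 n with hjn | hje | hjg
    · have h1 : ∑ j ∈ range n, co j 0 (monomial (E j0 0) r : Pc) • (X 0 : Pc) ^ j = r • (X 0 : Pc) ^ j0 := by
        rw [Finset.sum_eq_single j0]
        · rw [co_monomial, if_pos ⟨rfl, rfl⟩]
        · intro b _ hne
          rw [co_monomial, if_neg (by omega), zero_smul]
        · intro h
          exact absurd (Finset.mem_range.mpr hjn) h
      have hNF : NF n i a (monomial (E j0 0) r) = r • (X 0 : Pc) ^ j0 := by
        rw [NF, h1, hS2, co_monomial, co_monomial,
          if_neg (by omega), if_neg (by omega)]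
        norm_num
      rw [hNF]
      have : (monomial (E j0 0) r : Pc) - r • X 0 ^ j0 = 0 := by
        rw [mono_as_CXY, smul_eq_C_mul]; ring
      rw [this]; exact zero_mem _
    · subst hje
      have h1 : ∑ j ∈ range j0, co j 0 (monomial (E j0 0) r : Pc) • (X 0 : Pc) ^ j = 0 :=
        Finset.sum_eq_zero (fun j hj => by
          rw [co_monomial, if_neg (by have := Finset.mem_range.mp hj; omega), zero_smul])
      have hNF : NF j0 i a (monomial (E j0 0) r) = r • (X 0 : Pc) ^ j0 := by
        rw [NF, h1, hS2, co_monomial, co_monomial, if_pos ⟨rfl, rfl⟩, if_neg (by omega)]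
        norm_num
      rw [hNF]
      have : (monomial (E j0 0) r : Pc) - r • X 0 ^ j0 = 0 := by
        rw [mono_as_CXY, smul_eq_C_mul]; ring
      rw [this]; exact zero_mem _
    · have h1 : ∑ j ∈ range n, co j 0 (monomial (E j0 0) r : Pc) • (X 0 : Pc) ^ j = 0 :=
        Finset.sum_eq_zero (fun j hj => by
          rw [co_monomial, if_neg (by have := Finset.mem_range.mp hj; omega), zero_smul])
      have hNF : NF n i a (monomial (E j0 0) r) = 0 := by
        rw [NF, h1, hS2, co_monomial, co_monomial, if_neg (by omega), if_neg (by omega)]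
        norm_num
      rw [hNF, sub_zero]
      have : (monomial (E j0 0) r : Pc) = C r * X 0 ^ j0 := by
        rw [mono_as_CXY]; ring
      rw [this]
      exact Ideal.mul_mem_left _ _ (xpow_mem hn hi ha (by omega))
  · by_cases hj : 1 ≤ j0
    · -- mixed monomial
      have h1 : ∑ j ∈ range n, co j 0 (monomial (E j0 k0) r : Pc) • (X 0 : Pc) ^ j = 0 :=
        Finset.sum_eq_zero (fun j hj => by rw [co_monomial, if_neg (by omega), zero_smul])
      have hS2 : ∑ k ∈ Ico 1 i, co 0 k (monomial (E j0 k0) r : Pc) • (X 1 : Pc) ^ k = 0 :=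
        Finset.sum_eq_zero (fun k hk => by rw [co_monomial, if_neg (by omega), zero_smul])
      have hNF : NF n i a (monomial (E j0 k0) r) = 0 := by
        rw [NF, h1, hS2, co_monomial, co_monomial, if_neg (by omega), if_neg (by omega)]
        norm_num
      rw [hNF, sub_zero]
      exact mixed_mem hj (by omega) r
    · have hj0 : j0 = 0 := by omega
      subst hj0
      have h1 : ∑ j ∈ range n, co j 0 (monomial (E 0 k0) r : Pc) • (X 0 : Pc) ^ j = 0 :=
        Finset.sum_eq_zero (fun j hj => by rw [co_monomial, if_neg (by omega), zero_smul])
      rcases lt_trichotomy k0 i with hki | hke | hkg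
      · have hS2 : ∑ k ∈ Ico 1 i, co 0 k (monomial (E 0 k0) r : Pc) • (X 1 : Pc) ^ k = r • (X 1 : Pc) ^ k0 := by
          rw [Finset.sum_eq_single k0]
          · rw [co_monomial, if_pos ⟨rfl, rfl⟩]
          · intro b _ hne
            rw [co_monomial, if_neg (by omega), zero_smul]
          · intro h
            exact absurd (Finset.mem_Ico.mpr ⟨by omega, hki⟩) h
        have hNF : NF n i a (monomial (E 0 k0) r) = r • (X 1 : Pc) ^ k0 := by
          rw [NF, h1, hS2, co_monomial, co_monomial, if_neg (by omega), if_neg (by omega)]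
          norm_num
        rw [hNF]
        have : (monomial (E 0 k0) r : Pc) - r • X 1 ^ k0 = 0 := by
          rw [mono_as_CXY, smul_eq_C_mul]; ring
        rw [this]; exact zero_mem _
      · subst hke
        have hS2 : ∑ k ∈ Ico 1 k0, co 0 k (monomial (E 0 k0) r : Pc) • (X 1 : Pc) ^ k = 0 :=
          Finset.sum_eq_zero (fun k hk => by
            rw [co_monomial, if_neg (by have := (Finset.mem_Ico.mp hk).2; omega), zero_smul])
        have hNF : NF n k0 a (monomial (E 0 k0) r) = (0 - a * r) • X 0 ^ n := by
          rw [NF, h1, hS2, co_monomial, co_monomial, if_neg (by omega), if_pos ⟨rfl, rfl⟩]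
          norm_num
        rw [hNF]
        have : (monomial (E 0 k0) r : Pc) - (0 - a * r) • X 0 ^ n = r • gP n k0 a := by
          rw [mono_as_CXY, smul_eq_C_mul, smul_eq_C_mul, gP]
          simp only [map_sub, map_mul, map_zero, C_mul]
          ring
        rw [this, smul_eq_C_mul]
        exact Ideal.mul_mem_left _ _ (gP_mem_Ig _ _ _)
      · have hS2 : ∑ k ∈ Ico 1 i, co 0 k (monomial (E 0 k0) r : Pc) • (X 1 : Pc) ^ k = 0 :=
          Finset.sum_eq_zero (fun k hk => by
            rw [co_monomial, if_neg (by have := (Finset.mem_Ico.mp hk).2; omega), zero_smul])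
        have hNF : NF n i a (monomial (E 0 k0) r) = 0 := by
          rw [NF, h1, hS2, co_monomial, co_monomial, if_neg (by omega), if_neg (by omega)]
          norm_num
        rw [hNF, sub_zero]
        have : (monomial (E 0 k0) r : Pc) = C r * X 1 ^ k0 := by
          rw [mono_as_CXY]; ring
        rw [this]
        exact Ideal.mul_mem_left _ _ (ypow_mem hn (by omega))

lemma sub_NF_mem (hn : 1 ≤ n) (hi : 1 ≤ i) (ha : a ≠ 0) (p : Pc) :
    p - NF n i a p ∈ Ig n i a := by
  induction p using MvPolynomial.induction_on' with
  | monomial d r =>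
      obtain ⟨j0, k0, rfl⟩ : ∃ j0 k0, d = E j0 k0 := ⟨d 0, d 1, fin2_eq d⟩
      exact sub_NF_monomial hn hi ha j0 k0 r
  | add p q hp hq =>
      have h : p + q - NF n i a (p + q) = (p - NF n i a p) + (q - NF n i a q) := by
        rw [NF_add]; ring
      rw [h]
      exact Ideal.add_mem _ hp hq

lemma mem_Ig_iff (hn : 1 ≤ n) (hi : 1 ≤ i) (ha : a ≠ 0) (p : Pc) :
    p ∈ Ig n i a ↔ Zc (n := n) (i := i) (a := a) p := by
  constructor
  · exact Zc_of_mem hn hi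
  · intro hz
    have h := sub_NF_mem hn hi ha p
    have hNF : NF n i a p = 0 := by
      rw [NF,
        Finset.sum_eq_zero (fun j hj => by rw [hz.1 j (Finset.mem_range.mp hj), zero_smul]),
        Finset.sum_eq_zero (fun k hk => by
          rw [hz.2.2 k (Finset.mem_Ico.mp hk).1 (Finset.mem_Ico.mp hk).2, zero_smul]),
        hz.2.1]
      norm_num
    rwa [hNF, sub_zero] at h

end Params

end NodeAux
namespace NodeAux

set_option synthInstance.maxHeartbeats 1000000
set_option maxHeartbeats 2000000

open Finset MvPolynomial

section Params
variable {n i : ℕ} {a : ℂ}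

lemma ZL_of_mem (hn : 1 ≤ n) (hi : 1 ≤ i) {p : Pc} (hp : p ∈ Lq n i) :
    (∀ j < n, co j 0 p = 0) ∧ (∀ k, 1 ≤ k → k < i → co 0 k p = 0) := by
  rw [Lq, Ideal.span_insert, Submodule.mem_sup] at hp
  obtain ⟨u₁, hu₁, z, hz, rfl⟩ := hp
  rw [Ideal.mem_span_singleton'] at hu₁
  obtain ⟨u, rfl⟩ := hu₁
  rw [Ideal.mem_span_pair] at hz
  obtain ⟨v, w, rfl⟩ := hz
  have hrw : ∀ j k : ℕ, co j k (u * (X 0 * X 1) + (v * X 0 ^ n + w * X 1 ^ i)) =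
      co j k (u * monomial (E 1 1) 1) + (co j k (v * monomial (E n 0) 1)
        + co j k (w * monomial (E 0 i) 1)) := by
    intro j k
    rw [XY_mon, X0_pow, X1_pow, co_add, co_add]
  constructor
  · intro j hj
    rw [hrw, co_mul_mono, co_mul_mono, co_mul_mono,
      if_neg (by omega), if_neg (by omega), if_neg (by omega)]
    ring
  · intro k hk1 hk2
    rw [hrw, co_mul_mono, co_mul_mono, co_mul_mono,
      if_neg (by omega), if_neg (by omega), if_neg (by omega)]
    ring

def NFL (n i : ℕ) (p : Pc) : Pc :=
  (∑ j ∈ range n, co j 0 p • X 0 ^ j) + ∑ k ∈ Ico 1 i, co 0 k p • X 1 ^ k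

lemma NFL_add (p q : Pc) : NFL n i (p + q) = NFL n i p + NFL n i q := by
  simp only [NFL, co_add, add_smul, Finset.sum_add_distrib]
  abel

lemma xy_mem_Lq : (X 0 * X 1 : Pc) ∈ Lq n i := Ideal.subset_span (by simp)
lemma x_pow_mem_Lq : (X 0 : Pc) ^ n ∈ Lq n i := Ideal.subset_span (by simp)
lemma y_pow_mem_Lq : (X 1 : Pc) ^ i ∈ Lq n i := Ideal.subset_span (by simp)

lemma xpow_mem_Lq {j : ℕ} (hj : n ≤ j) : (X 0 : Pc) ^ j ∈ Lq n i := by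
  obtain ⟨d, rfl⟩ : ∃ d, j = d + n := ⟨j - n, by omega⟩
  rw [pow_add]
  exact Ideal.mul_mem_left _ _ x_pow_mem_Lq

lemma ypow_mem_Lq {k : ℕ} (hk : i ≤ k) : (X 1 : Pc) ^ k ∈ Lq n i := by
  obtain ⟨d, rfl⟩ : ∃ d, k = d + i := ⟨k - i, by omega⟩
  rw [pow_add]
  exact Ideal.mul_mem_left _ _ y_pow_mem_Lq

lemma mixed_mem_Lq {j k : ℕ} (hj : 1 ≤ j) (hk : 1 ≤ k) (r : ℂ) :
    (monomial (E j k) r : Pc) ∈ Lq n i := by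
  have hj' : j - 1 + 1 = j := by omega
  have hk' : k - 1 + 1 = k := by omega
  have h : (monomial (E (j-1) (k-1)) r : Pc) * (X 0 * X 1) = monomial (E j k) r := by
    rw [XY_mon, mono_mul_mono, mul_one, hj', hk']
  rw [← h]
  exact Ideal.mul_mem_left _ _ xy_mem_Lq

lemma sub_NFL_monomial (hn : 1 ≤ n) (hi : 1 ≤ i) (j0 k0 : ℕ) (r : ℂ) :
    (monomial (E j0 k0) r : Pc) - NFL n i (monomial (E j0 k0) r) ∈ Lq n i := by
  by_cases hk : k0 = 0
  · subst hk
    have hS2 : ∑ k ∈ Ico 1 i, co 0 k (monomial (E j0 0) r : Pc) • (X 1 : Pc) ^ k = 0 :=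
      Finset.sum_eq_zero (fun k hk => by
        rw [co_monomial, if_neg (by have := (Finset.mem_Ico.mp hk).1; omega), zero_smul])
    by_cases hjn : j0 < n
    · have h1 : ∑ j ∈ range n, co j 0 (monomial (E j0 0) r : Pc) • (X 0 : Pc) ^ j
          = r • (X 0 : Pc) ^ j0 := by
        rw [Finset.sum_eq_single j0]
        · rw [co_monomial, if_pos ⟨rfl, rfl⟩]
        · intro b _ hne
          rw [co_monomial, if_neg (by omega), zero_smul]
        · intro h
          exact absurd (Finset.mem_range.mpr hjn) h
      have hNF : NFL n i (monomial (E j0 0) r) = r • (X 0 : Pc) ^ j0 := by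
        rw [NFL, h1, hS2, add_zero]
      rw [hNF]
      have : (monomial (E j0 0) r : Pc) - r • X 0 ^ j0 = 0 := by
        rw [mono_as_CXY, smul_eq_C_mul]; ring
      rw [this]; exact zero_mem _
    · have h1 : ∑ j ∈ range n, co j 0 (monomial (E j0 0) r : Pc) • (X 0 : Pc) ^ j = 0 :=
        Finset.sum_eq_zero (fun j hj => by
          rw [co_monomial, if_neg (by have := Finset.mem_range.mp hj; omega), zero_smul])
      have hNF : NFL n i (monomial (E j0 0) r) = 0 := by
        rw [NFL, h1, hS2, add_zero]
      rw [hNF, sub_zero]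
      have : (monomial (E j0 0) r : Pc) = C r * X 0 ^ j0 := by
        rw [mono_as_CXY]; ring
      rw [this]
      exact Ideal.mul_mem_left _ _ (xpow_mem_Lq (by omega))
  · by_cases hj : 1 ≤ j0
    · have h1 : ∑ j ∈ range n, co j 0 (monomial (E j0 k0) r : Pc) • (X 0 : Pc) ^ j = 0 :=
        Finset.sum_eq_zero (fun j hj => by rw [co_monomial, if_neg (by omega), zero_smul])
      have hS2 : ∑ k ∈ Ico 1 i, co 0 k (monomial (E j0 k0) r : Pc) • (X 1 : Pc) ^ k = 0 :=
        Finset.sum_eq_zero (fun k hk => by rw [co_monomial, if_neg (by omega), zero_smul])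
      have hNF : NFL n i (monomial (E j0 k0) r) = 0 := by
        rw [NFL, h1, hS2, add_zero]
      rw [hNF, sub_zero]
      exact mixed_mem_Lq hj (by omega) r
    · have hj0 : j0 = 0 := by omega
      subst hj0
      have h1 : ∑ j ∈ range n, co j 0 (monomial (E 0 k0) r : Pc) • (X 0 : Pc) ^ j = 0 :=
        Finset.sum_eq_zero (fun j hj => by rw [co_monomial, if_neg (by omega), zero_smul])
      by_cases hki : k0 < i
      · have hS2 : ∑ k ∈ Ico 1 i, co 0 k (monomial (E 0 k0) r : Pc) • (X 1 : Pc) ^ k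
            = r • (X 1 : Pc) ^ k0 := by
          rw [Finset.sum_eq_single k0]
          · rw [co_monomial, if_pos ⟨rfl, rfl⟩]
          · intro b _ hne
            rw [co_monomial, if_neg (by omega), zero_smul]
          · intro h
            exact absurd (Finset.mem_Ico.mpr ⟨by omega, hki⟩) h
        have hNF : NFL n i (monomial (E 0 k0) r) = r • (X 1 : Pc) ^ k0 := by
          rw [NFL, h1, hS2, zero_add]
        rw [hNF]
        have : (monomial (E 0 k0) r : Pc) - r • X 1 ^ k0 = 0 := by
          rw [mono_as_CXY, smul_eq_C_mul]; ring
        rw [this]; exact zero_mem _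
      · have hS2 : ∑ k ∈ Ico 1 i, co 0 k (monomial (E 0 k0) r : Pc) • (X 1 : Pc) ^ k = 0 :=
          Finset.sum_eq_zero (fun k hk => by
            rw [co_monomial, if_neg (by have := (Finset.mem_Ico.mp hk).2; omega), zero_smul])
        have hNF : NFL n i (monomial (E 0 k0) r) = 0 := by
          rw [NFL, h1, hS2, add_zero]
        rw [hNF, sub_zero]
        have : (monomial (E 0 k0) r : Pc) = C r * X 1 ^ k0 := by
          rw [mono_as_CXY]; ring
        rw [this]
        exact Ideal.mul_mem_left _ _ (ypow_mem_Lq (by omega))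

lemma sub_NFL_mem (hn : 1 ≤ n) (hi : 1 ≤ i) (p : Pc) :
    p - NFL n i p ∈ Lq n i := by
  induction p using MvPolynomial.induction_on' with
  | monomial d r =>
      obtain ⟨j0, k0, rfl⟩ : ∃ j0 k0, d = E j0 k0 := ⟨d 0, d 1, fin2_eq d⟩
      exact sub_NFL_monomial hn hi j0 k0 r
  | add p q hp hq =>
      have h : p + q - NFL n i (p + q) = (p - NFL n i p) + (q - NFL n i q) := by
        rw [NFL_add]; ring
      rw [h]
      exact Ideal.add_mem _ hp hq

end Params

end NodeAux
namespace NodeAux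

set_option synthInstance.maxHeartbeats 1000000
set_option maxHeartbeats 2000000

open Finset MvPolynomial

section QuotBasis

lemma quot_basis (I : Ideal Pc) {ι : Type} [Fintype ι] [DecidableEq ι] (bp : ι → Pc)
    (cf : ι → Pc →ₗ[ℂ] ℂ)
    (hmem : ∀ p : Pc, p - ∑ t, cf t p • bp t ∈ I)
    (hvanish : ∀ t, ∀ p ∈ I, cf t p = 0)
    (hdual : ∀ t t', cf t (bp t') = if t' = t then 1 else 0) :
    ∃ b : Module.Basis ι ℂ (Pc ⧸ I), ∀ t, b t = Ideal.Quotient.mk I (bp t) := by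
  set π := (Ideal.Quotient.mkₐ ℂ I).toLinearMap with hπ
  set v : ι → Pc ⧸ I := fun t => π (bp t) with hv
  have hindep : LinearIndependent ℂ v := by
    rw [Fintype.linearIndependent_iff]
    intro g hg t
    have h0 : π (∑ t', g t' • bp t') = 0 := by
      rw [map_sum]
      simp only [map_smul]
      exact hg
    have hmem0 : (∑ t', g t' • bp t') ∈ I := by
      rwa [hπ, AlgHom.toLinearMap_apply, Ideal.Quotient.mkₐ_eq_mk,
        Ideal.Quotient.eq_zero_iff_mem] at h0
    have := hvanish t _ hmem0
    rw [map_sum] at this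
    simp only [map_smul, smul_eq_mul, hdual] at this
    rw [Finset.sum_congr rfl (fun t' _ => by
        rw [show g t' * (if t' = t then 1 else 0) = if t' = t then g t' else 0 by
          split <;> simp])] at this
    rwa [Finset.sum_ite_eq' Finset.univ t g, if_pos (Finset.mem_univ t)] at this
  have hspan : ⊤ ≤ Submodule.span ℂ (Set.range v) := by
    intro z _
    obtain ⟨p, rfl⟩ := Ideal.Quotient.mk_surjective z
    have : Ideal.Quotient.mk I p = ∑ t, cf t p • v t := by
      have h1 : Ideal.Quotient.mk I p = Ideal.Quotient.mk I (∑ t, cf t p • bp t) := by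
        rw [Ideal.Quotient.mk_eq_mk_iff_sub_mem]
        exact hmem p
      rw [h1]
      show π (∑ t, cf t p • bp t) = _
      rw [map_sum]
      simp only [map_smul]
      rfl
    rw [this]
    exact Submodule.sum_smul_mem _ _ (fun t _ => Submodule.subset_span ⟨t, rfl⟩)
  refine ⟨Module.Basis.mk hindep hspan, fun t => ?_⟩
  rw [Module.Basis.mk_apply]
  simp [hv, hπ, Ideal.Quotient.mkₐ_eq_mk]

lemma quot_finrank (I : Ideal Pc) {ι : Type} [Fintype ι] [DecidableEq ι] (bp : ι → Pc)
    (cf : ι → Pc →ₗ[ℂ] ℂ)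
    (hmem : ∀ p : Pc, p - ∑ t, cf t p • bp t ∈ I)
    (hvanish : ∀ t, ∀ p ∈ I, cf t p = 0)
    (hdual : ∀ t t', cf t (bp t') = if t' = t then 1 else 0) :
    Module.finrank ℂ (Pc ⧸ I) = Fintype.card ι ∧ FiniteDimensional ℂ (Pc ⧸ I) := by
  obtain ⟨b, -⟩ := quot_basis I bp cf hmem hvanish hdual
  haveI := Module.Basis.finiteDimensional_of_finite b
  exact ⟨Module.finrank_eq_card_basis b, inferInstance⟩

/-- The factor map as a `ℂ`-linear map. -/
def factorL (I J : Ideal Pc) (h : I ≤ J) : (Pc ⧸ I) →ₗ[ℂ] (Pc ⧸ J) where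
  toFun := Ideal.Quotient.factor h
  map_add' a b := RingHom.map_add _ a b
  map_smul' c z := by
    obtain ⟨p, rfl⟩ := Ideal.Quotient.mk_surjective z
    have h1 : c • Ideal.Quotient.mk I p = Ideal.Quotient.mk I (c • p) := by
      rw [← Ideal.Quotient.mkₐ_eq_mk ℂ, ← map_smul]
    have h2 : c • Ideal.Quotient.mk J p = Ideal.Quotient.mk J (c • p) := by
      rw [← Ideal.Quotient.mkₐ_eq_mk ℂ, ← map_smul]
    show Ideal.Quotient.factor h (c • Ideal.Quotient.mk I p)
        = c • Ideal.Quotient.factor h (Ideal.Quotient.mk I p)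
    rw [h1, Ideal.Quotient.factor_mk, Ideal.Quotient.factor_mk, h2]

lemma factorL_mk (I J : Ideal Pc) (h : I ≤ J) (p : Pc) :
    factorL I J h (Ideal.Quotient.mk I p) = Ideal.Quotient.mk J p :=
  Ideal.Quotient.factor_mk h p

lemma factorL_surj (I J : Ideal Pc) (h : I ≤ J) : Function.Surjective (factorL I J h) := by
  intro z
  obtain ⟨p, rfl⟩ := Ideal.Quotient.mk_surjective z
  exact ⟨Ideal.Quotient.mk I p, factorL_mk I J h p⟩

lemma mem_ker_factorL (I J : Ideal Pc) (h : I ≤ J) (p : Pc) :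
    Ideal.Quotient.mk I p ∈ LinearMap.ker (factorL I J h) ↔ p ∈ J := by
  rw [LinearMap.mem_ker, factorL_mk, Ideal.Quotient.eq_zero_iff_mem]

lemma finrank_quot_add (I J : Ideal Pc) (h : I ≤ J) [FiniteDimensional ℂ (Pc ⧸ I)] :
    Module.finrank ℂ (Pc ⧸ I)
      = Module.finrank ℂ (Pc ⧸ J) + Module.finrank ℂ (LinearMap.ker (factorL I J h)) := by
  have h1 := LinearMap.finrank_range_add_finrank_ker (factorL I J h)
  rw [LinearMap.range_eq_top.mpr (factorL_surj I J h), finrank_top] at h1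
  omega

lemma ideal_eq_of_finrank (I J : Ideal Pc) (h : I ≤ J) [FiniteDimensional ℂ (Pc ⧸ I)]
    (he : Module.finrank ℂ (Pc ⧸ I) = Module.finrank ℂ (Pc ⧸ J)) : I = J := by
  have h2 := finrank_quot_add I J h
  have hker : LinearMap.ker (factorL I J h) = ⊥ := by
    have h3 : Module.finrank ℂ (LinearMap.ker (factorL I J h)) = 0 := by omega
    exact Submodule.finrank_eq_zero.mp h3
  refine le_antisymm h (fun p hp => ?_)
  have := (mem_ker_factorL I J h p).mpr hp
  rw [hker, Submodule.mem_bot] at this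
  rwa [Ideal.Quotient.eq_zero_iff_mem] at this

end QuotBasis

end NodeAux
namespace NodeAux

set_option synthInstance.maxHeartbeats 1000000
set_option maxHeartbeats 2000000

open Finset MvPolynomial

section Inst
variable (n i : ℕ) (a : ℂ)

def bpI : Fin (n+1) ⊕ Fin (i-1) → Pc :=
  Sum.elim (fun j => X 0 ^ (j : ℕ)) (fun k => X 1 ^ ((k : ℕ) + 1))

def cfI : Fin (n+1) ⊕ Fin (i-1) → (Pc →ₗ[ℂ] ℂ) :=
  Sum.elim (fun j => if (j : ℕ) = n then lco n 0 - a • lco 0 i else lco (j : ℕ) 0)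
    (fun k => lco 0 ((k : ℕ) + 1))

def bpL : Fin n ⊕ Fin (i-1) → Pc :=
  Sum.elim (fun j => X 0 ^ (j : ℕ)) (fun k => X 1 ^ ((k : ℕ) + 1))

def cfL : Fin n ⊕ Fin (i-1) → (Pc →ₗ[ℂ] ℂ) :=
  Sum.elim (fun j => lco (j : ℕ) 0) (fun k => lco 0 ((k : ℕ) + 1))

variable {n i a}

lemma sum_cfI (p : Pc) : ∑ t, cfI n i a t p • bpI n i t = NF n i a p := by
  rw [Fintype.sum_sum_type]
  have e1 : ∑ j : Fin (n+1), cfI n i a (Sum.inl j) p • bpI n i (Sum.inl j)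
      = ∑ j ∈ range (n+1), (if j = n then co n 0 p - a * co 0 i p
          else co j 0 p) • (X 0 : Pc) ^ j := by
    rw [← Fin.sum_univ_eq_sum_range (fun j => (if j = n then co n 0 p - a * co 0 i p
        else co j 0 p) • (X 0 : Pc) ^ j) (n+1)]
    apply Finset.sum_congr rfl
    intro j _
    by_cases h : (j : ℕ) = n
    · simp [cfI, bpI, h]
    · simp [cfI, bpI, h]
  have e2 : ∑ j ∈ range (n+1), (if j = n then co n 0 p - a * co 0 i p
          else co j 0 p) • (X 0 : Pc) ^ j
      = (∑ j ∈ range n, co j 0 p • (X 0 : Pc) ^ j)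
        + (co n 0 p - a * co 0 i p) • (X 0 : Pc) ^ n := by
    rw [Finset.sum_range_succ, if_pos rfl]
    congr 1
    exact Finset.sum_congr rfl (fun j hj => by
      rw [if_neg (by have := Finset.mem_range.mp hj; omega)])
  have h2 : ∑ k : Fin (i-1), cfI n i a (Sum.inr k) p • bpI n i (Sum.inr k)
      = ∑ k ∈ Ico 1 i, co 0 k p • (X 1 : Pc) ^ k := by
    rw [Finset.sum_Ico_eq_sum_range,
      ← Fin.sum_univ_eq_sum_range (fun k => co 0 (1 + k) p • (X 1 : Pc) ^ (1 + k)) (i-1)]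
    apply Finset.sum_congr rfl
    intro k _
    simp [cfI, bpI, Nat.add_comm 1 (k : ℕ)]
  rw [e1, e2, h2, NF]

lemma sum_cfL (p : Pc) : ∑ t, cfL n i t p • bpL n i t = NFL n i p := by
  rw [Fintype.sum_sum_type]
  have h1 : ∑ j : Fin n, cfL n i (Sum.inl j) p • bpL n i (Sum.inl j)
      = ∑ j ∈ range n, co j 0 p • (X 0 : Pc) ^ j := by
    rw [← Fin.sum_univ_eq_sum_range (fun j => co j 0 p • (X 0 : Pc) ^ j) n]
    apply Finset.sum_congr rfl
    intro j _
    simp [cfL, bpL]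
  have h2 : ∑ k : Fin (i-1), cfL n i (Sum.inr k) p • bpL n i (Sum.inr k)
      = ∑ k ∈ Ico 1 i, co 0 k p • (X 1 : Pc) ^ k := by
    rw [Finset.sum_Ico_eq_sum_range,
      ← Fin.sum_univ_eq_sum_range (fun k => co 0 (1 + k) p • (X 1 : Pc) ^ (1 + k)) (i-1)]
    apply Finset.sum_congr rfl
    intro k _
    simp [cfL, bpL, Nat.add_comm 1 (k : ℕ)]
  rw [h1, h2, NFL]

lemma vanish_cfI (hn : 1 ≤ n) (hi : 1 ≤ i) :
    ∀ t, ∀ p ∈ Ig n i a, cfI n i a t p = 0 := by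
  intro t p hp
  have hz := Zc_of_mem hn hi hp
  cases t with
  | inl j =>
      simp only [cfI, Sum.elim_inl]
      by_cases h : (j : ℕ) = n
      · rw [if_pos h]
        simp only [LinearMap.sub_apply, LinearMap.smul_apply, lco_apply, smul_eq_mul]
        rw [hz.2.1]; ring
      · rw [if_neg h]
        have hj : (j : ℕ) < n := by have := j.isLt; omega
        simpa using hz.1 _ hj
  | inr k =>
      simp only [cfI, Sum.elim_inr, lco_apply]
      exact hz.2.2 ((k : ℕ) + 1) (by omega) (by have := k.isLt; omega)

lemma vanish_cfL (hn : 1 ≤ n) (hi : 1 ≤ i) :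
    ∀ t, ∀ p ∈ Lq n i, cfL n i t p = 0 := by
  intro t p hp
  have hz := ZL_of_mem hn hi hp
  cases t with
  | inl j =>
      simp only [cfL, Sum.elim_inl, lco_apply]
      exact hz.1 _ j.isLt
  | inr k =>
      simp only [cfL, Sum.elim_inr, lco_apply]
      exact hz.2 ((k : ℕ) + 1) (by omega) (by have := k.isLt; omega)

lemma dual_cfI (hi : 1 ≤ i) :
    ∀ t t', cfI n i a t (bpI n i t') = if t' = t then 1 else 0 := by
  intro t t'
  cases t with
  | inl j =>
      cases t' with
      | inl j' =>
          simp only [cfI, bpI, Sum.elim_inl]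
          rw [X0_pow]
          have hcond : (Sum.inl j' = (Sum.inl j : Fin (n+1) ⊕ Fin (i-1)))
              ↔ (j' : ℕ) = (j : ℕ) := by
            rw [Sum.inl.injEq, Fin.ext_iff]
          by_cases h : (j : ℕ) = n
          · rw [if_pos h]
            simp only [LinearMap.sub_apply, LinearMap.smul_apply, lco_apply, smul_eq_mul]
            have c2 : co 0 i ((monomial (E (j' : ℕ) 0)) (1:ℂ) : Pc) = 0 := by
              rw [co_monomial, if_neg (by omega)]
            rw [c2, co_monomial]
            by_cases h' : (j' : ℕ) = n
            · rw [if_pos ⟨h', rfl⟩, if_pos (hcond.mpr (by omega))]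
              ring
            · rw [if_neg (by omega), if_neg (by rw [hcond]; omega)]
              ring
          · rw [if_neg h, lco_apply, co_monomial]
            by_cases h' : (j' : ℕ) = (j : ℕ)
            · rw [if_pos ⟨h', rfl⟩, if_pos (hcond.mpr h')]
            · rw [if_neg (by omega), if_neg (by rw [hcond]; omega)]
      | inr k' =>
          simp only [cfI, bpI, Sum.elim_inl, Sum.elim_inr]
          rw [X1_pow]
          have hk' : (k' : ℕ) + 1 < i := by have := k'.isLt; omega
          by_cases h : (j : ℕ) = n
          · rw [if_pos h]
            simp only [LinearMap.sub_apply, LinearMap.smul_apply, lco_apply, smul_eq_mul]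
            rw [co_monomial, co_monomial]
            rw [if_neg (by omega), if_neg (by omega), if_neg (by simp)]
            ring
          · rw [if_neg h, lco_apply, co_monomial]
            rw [if_neg (by omega), if_neg (by simp)]
  | inr k =>
      cases t' with
      | inl j' =>
          simp only [cfI, bpI, Sum.elim_inl, Sum.elim_inr, lco_apply]
          rw [X0_pow, co_monomial]
          rw [if_neg (by omega), if_neg (by simp)]
      | inr k' =>
          simp only [cfI, bpI, Sum.elim_inr, lco_apply]
          rw [X1_pow, co_monomial]
          by_cases h : (k' : ℕ) = (k : ℕ)
          · rw [if_pos ⟨rfl, by omega⟩, if_pos (by rw [Sum.inr.injEq, Fin.ext_iff]; omega)]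
          · rw [if_neg (by omega), if_neg (by rw [Sum.inr.injEq, Fin.ext_iff]; omega)]

lemma dual_cfL (hi : 1 ≤ i) :
    ∀ t t', cfL n i t (bpL n i t') = if t' = t then 1 else 0 := by
  intro t t'
  cases t with
  | inl j =>
      cases t' with
      | inl j' =>
          simp only [cfL, bpL, Sum.elim_inl, lco_apply]
          rw [X0_pow, co_monomial]
          by_cases h' : (j' : ℕ) = (j : ℕ)
          · rw [if_pos ⟨h', rfl⟩, if_pos (by rw [Sum.inl.injEq, Fin.ext_iff]; omega)]
          · rw [if_neg (by omega), if_neg (by rw [Sum.inl.injEq, Fin.ext_iff]; omega)]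
      | inr k' =>
          simp only [cfL, bpL, Sum.elim_inl, Sum.elim_inr, lco_apply]
          rw [X1_pow, co_monomial]
          rw [if_neg (by omega), if_neg (by simp)]
  | inr k =>
      cases t' with
      | inl j' =>
          simp only [cfL, bpL, Sum.elim_inl, Sum.elim_inr, lco_apply]
          rw [X0_pow, co_monomial]
          rw [if_neg (by omega), if_neg (by simp)]
      | inr k' =>
          simp only [cfL, bpL, Sum.elim_inr, lco_apply]
          rw [X1_pow, co_monomial]
          by_cases h : (k' : ℕ) = (k : ℕ)
          · rw [if_pos ⟨rfl, by omega⟩, if_pos (by rw [Sum.inr.injEq, Fin.ext_iff]; omega)]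
          · rw [if_neg (by omega), if_neg (by rw [Sum.inr.injEq, Fin.ext_iff]; omega)]

lemma finrank_Ig (hn : 1 ≤ n) (hi : 1 ≤ i) (ha : a ≠ 0) :
    Module.finrank ℂ (Pc ⧸ Ig n i a) = n + i ∧ FiniteDimensional ℂ (Pc ⧸ Ig n i a) := by
  have h := quot_finrank (Ig n i a) (bpI n i) (cfI n i a)
    (fun p => by rw [sum_cfI]; exact sub_NF_mem hn hi ha p)
    (vanish_cfI hn hi) (dual_cfI hi)
  rwa [Fintype.card_sum, Fintype.card_fin, Fintype.card_fin,
    show n + 1 + (i - 1) = n + i by omega] at h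

lemma finrank_Lq (hn : 1 ≤ n) (hi : 1 ≤ i) :
    Module.finrank ℂ (Pc ⧸ Lq n i) = n + i - 1 ∧ FiniteDimensional ℂ (Pc ⧸ Lq n i) := by
  have h := quot_finrank (Lq n i) (bpL n i) (cfL n i)
    (fun p => by rw [sum_cfL]; exact sub_NFL_mem hn hi p)
    (vanish_cfL hn hi) (dual_cfL hi)
  rwa [Fintype.card_sum, Fintype.card_fin, Fintype.card_fin,
    show n + (i - 1) = n + i - 1 by omega] at h

end Inst

end NodeAux
namespace NodeAux

set_option synthInstance.maxHeartbeats 1000000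
set_option maxHeartbeats 2000000

open Finset MvPolynomial

lemma mk_smul (I : Ideal Pc) (c : ℂ) (p : Pc) :
    Ideal.Quotient.mk I (c • p) = c • Ideal.Quotient.mk I p := by
  rw [← Ideal.Quotient.mkₐ_eq_mk ℂ, map_smul]

lemma co_X0_mul (j k : ℕ) (p : Pc) :
    co j k (X 0 * p) = if 1 ≤ j then co (j-1) k p else 0 := by
  have hx : (X 0 : Pc) = monomial (E 1 0) 1 := by rw [← X0_pow 1, pow_one]
  rw [mul_comm, hx, co_mul_mono]
  by_cases h : 1 ≤ j
  · rw [if_pos ⟨h, Nat.zero_le k⟩, if_pos h, mul_one, Nat.sub_zero]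
  · rw [if_neg (fun hc => h hc.1), if_neg h]

lemma co_X1_mul (j k : ℕ) (p : Pc) :
    co j k (X 1 * p) = if 1 ≤ k then co j (k-1) p else 0 := by
  have hx : (X 1 : Pc) = monomial (E 0 1) 1 := by rw [← X1_pow 1, pow_one]
  rw [mul_comm, hx, co_mul_mono]
  by_cases h : 1 ≤ k
  · rw [if_pos ⟨Nat.zero_le j, h⟩, if_pos h, mul_one, Nat.sub_zero]
  · rw [if_neg (fun hc => h hc.2), if_neg h]

set_option maxHeartbeats 2000000 in
theorem polyMain (n i : ℕ) (a : ℂ) (hn : 1 ≤ n) (hi : 1 ≤ i) (ha : a ≠ 0)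
    (K : Ideal Pc) (hIK : Ig n i a ≤ K)
    (hfr : Module.finrank ℂ (Pc ⧸ K) = n + i - 1) :
    K = Lq n i := by
  obtain ⟨frIg, fdIg⟩ := finrank_Ig hn hi ha
  obtain ⟨frLq, fdLq⟩ := finrank_Lq hn hi
  haveI := fdIg
  haveI := fdLq
  have hXn : (X 0 : Pc) ^ n ∈ K := by
    have hrank := finrank_quot_add (Ig n i a) K hIK
    rw [frIg, hfr] at hrank
    have hker1 : Module.finrank ℂ (LinearMap.ker (factorL (Ig n i a) K hIK)) = 1 := by omega
    have hne : LinearMap.ker (factorL (Ig n i a) K hIK) ≠ ⊥ := by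
      intro hbot
      rw [hbot, finrank_bot] at hker1
      omega
    obtain ⟨z, hzU, hz0⟩ := (Submodule.ne_bot_iff _).mp hne
    have hspan : Submodule.span ℂ {z} = LinearMap.ker (factorL (Ig n i a) K hIK) := by
      apply Submodule.eq_of_le_of_finrank_le
      · rw [Submodule.span_le, Set.singleton_subset_iff]
        exact hzU
      · rw [hker1, finrank_span_singleton hz0]
    have hmul : ∀ (q : Pc) (w : Pc ⧸ Ig n i a),
        w ∈ LinearMap.ker (factorL (Ig n i a) K hIK) →
        Ideal.Quotient.mk (Ig n i a) q * w ∈ LinearMap.ker (factorL (Ig n i a) K hIK) := by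
      intro q w hw
      rw [LinearMap.mem_ker] at hw ⊢
      have heq : factorL (Ig n i a) K hIK (Ideal.Quotient.mk (Ig n i a) q * w)
          = Ideal.Quotient.factor hIK (Ideal.Quotient.mk (Ig n i a) q)
            * factorL (Ig n i a) K hIK w := by
        show Ideal.Quotient.factor hIK (_ * _) = _
        rw [map_mul]
        rfl
      rw [heq, hw, mul_zero]
    obtain ⟨p, rfl⟩ := Ideal.Quotient.mk_surjective z
    -- multiplication by x and y kills z
    have key : ∀ q : Pc, (Ideal.Quotient.mk (Ig n i a) q) ^ (n + i) = 0 →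
        q * p ∈ Ig n i a := by
      intro q hqnil
      have hqz : Ideal.Quotient.mk (Ig n i a) q * Ideal.Quotient.mk (Ig n i a) p
          ∈ Submodule.span ℂ {Ideal.Quotient.mk (Ig n i a) p} := by
        rw [hspan]
        exact hmul q _ hzU
      rw [Submodule.mem_span_singleton] at hqz
      obtain ⟨c, hc⟩ := hqz
      have hcpow : ∀ t : ℕ, (Ideal.Quotient.mk (Ig n i a) q) ^ t
          * Ideal.Quotient.mk (Ig n i a) p = c ^ t • Ideal.Quotient.mk (Ig n i a) p := by
        intro t
        induction t with
        | zero => simp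
        | succ t ih =>
            rw [pow_succ, pow_succ, mul_assoc, ← hc, mul_smul_comm, ih, smul_smul, mul_comm c (c ^ t)]
      have h0 : c ^ (n + i) • Ideal.Quotient.mk (Ig n i a) p = 0 := by
        rw [← hcpow, hqnil, zero_mul]
      have hc0 : c = 0 := by
        rcases smul_eq_zero.mp h0 with h | h
        · exact pow_eq_zero_iff (show n + i ≠ 0 by omega) |>.mp h
        · exact absurd h hz0
      rw [← Ideal.Quotient.eq_zero_iff_mem, map_mul, ← hc, hc0, zero_smul]
    have hX0p : X 0 * p ∈ Ig n i a := by
      apply key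
      rw [← map_pow, Ideal.Quotient.eq_zero_iff_mem]
      exact xpow_mem hn hi ha (by omega)
    have hX1p : X 1 * p ∈ Ig n i a := by
      apply key
      rw [← map_pow, Ideal.Quotient.eq_zero_iff_mem]
      exact ypow_mem hn (by omega)
    have ZX := (mem_Ig_iff hn hi ha _).mp hX0p
    have ZY := (mem_Ig_iff hn hi ha _).mp hX1p
    have hj : ∀ j, j < n → co j 0 p = 0 := by
      intro j hjn
      rcases Nat.lt_or_ge j (n-1) with h | h
      · have h1 := ZX.1 (j+1) (by omega)
        rw [co_X0_mul, if_pos (by omega)] at h1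
        simpa using h1
      · have hj' : j = n - 1 := by omega
        subst hj'
        have h2 := ZX.2.1
        rw [co_X0_mul, co_X0_mul, if_pos (by omega), if_neg (by omega), mul_zero] at h2
        exact h2
    have hk : ∀ k, 1 ≤ k → k < i → co 0 k p = 0 := by
      intro k hk1 hki
      rcases Nat.lt_or_ge k (i-1) with h | h
      · have h1 := ZY.2.2 (k+1) (by omega) (by omega)
        rw [co_X1_mul, if_pos (by omega)] at h1
        simpa using h1
      · have hk' : k = i - 1 := by omega
        subst hk'
        have h2 := ZY.2.1
        rw [co_X1_mul, co_X1_mul, if_neg (by omega), if_pos (by omega)] at h2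
        exact ((mul_eq_zero.mp h2.symm).resolve_left ha)
    have hNFp : NF n i a p = (co n 0 p - a * co 0 i p) • (X 0 : Pc) ^ n := by
      rw [NF,
        Finset.sum_eq_zero (fun j hjr => by
          rw [hj j (Finset.mem_range.mp hjr), zero_smul]),
        Finset.sum_eq_zero (fun k hkr => by
          rw [hk k (Finset.mem_Ico.mp hkr).1 (Finset.mem_Ico.mp hkr).2, zero_smul]),
        zero_add, add_zero]
    set μ := co n 0 p - a * co 0 i p with hμdef
    have hzeq : Ideal.Quotient.mk (Ig n i a) p
        = μ • Ideal.Quotient.mk (Ig n i a) ((X 0 : Pc) ^ n) := by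
      have hsub := sub_NF_mem hn hi ha p
      rw [hNFp] at hsub
      have h1 : Ideal.Quotient.mk (Ig n i a) (p - μ • (X 0 : Pc) ^ n) = 0 :=
        Ideal.Quotient.eq_zero_iff_mem.mpr hsub
      rw [map_sub, sub_eq_zero] at h1
      rw [h1, mk_smul]
    have hμ0 : μ ≠ 0 := by
      intro h0
      rw [h0, zero_smul] at hzeq
      exact hz0 hzeq
    have hXnU : Ideal.Quotient.mk (Ig n i a) ((X 0 : Pc) ^ n)
        ∈ LinearMap.ker (factorL (Ig n i a) K hIK) := by
      have h1 : Ideal.Quotient.mk (Ig n i a) ((X 0 : Pc) ^ n)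
          = μ⁻¹ • Ideal.Quotient.mk (Ig n i a) p := by
        rw [hzeq, smul_smul, inv_mul_cancel₀ hμ0, one_smul]
      rw [h1]
      exact Submodule.smul_mem _ _ hzU
    exact (mem_ker_factorL _ _ hIK _).mp hXnU
  have hLqK : Lq n i ≤ K := by
    rw [Lq, Ideal.span_le]
    rintro q hq
    simp only [Set.mem_insert_iff, Set.mem_singleton_iff] at hq
    rcases hq with rfl | rfl | rfl
    · exact hIK (xy_mem_Ig n i a)
    · exact hXn
    · have h1 : (X 1 : Pc) ^ i = gP n i a - C a * (X 0 : Pc) ^ n := by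
        rw [gP]; ring
      rw [h1]
      exact Ideal.sub_mem _ (hIK (gP_mem_Ig n i a)) (Ideal.mul_mem_left _ _ hXn)
  exact (ideal_eq_of_finrank (Lq n i) K hLqK (by rw [frLq, hfr])).symm

end NodeAux
namespace NodeAux

set_option synthInstance.maxHeartbeats 1000000
set_option maxHeartbeats 2000000

open Finset MvPolynomial

/-- the canonical map `ℂ[x,y] → R`. -/
def phiR : Pc →+* Rnode :=
  (algebraMap Anode Rnode).comp (Ideal.Quotient.mk nodeIdeal)

lemma phiR_X0 : phiR (X 0) = x := rfl
lemma phiR_X1 : phiR (X 1) = y := rfl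
lemma phiR_C (c : ℂ) : phiR (C c) = algebraMap ℂ Rnode c := rfl

/-- the canonical map as an `AlgHom`. -/
def phiA : Pc →ₐ[ℂ] Rnode where
  toRingHom := phiR
  commutes' := fun _ => rfl

lemma xy_zero : x * y = 0 := by
  rw [x, y, ← map_mul]
  have h : xA * yA = 0 := by
    rw [xA, yA, ← map_mul, Ideal.Quotient.eq_zero_iff_mem]
    exact Ideal.subset_span rfl
  rw [h, map_zero]

section Transfer

variable (T : Ideal Pc) (hT : nodeIdeal ≤ T)

/-- `ℂ[x,y]/(xy) → ℂ[x,y]/T`. -/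
def chiT : Anode →+* Pc ⧸ T :=
  Ideal.Quotient.lift nodeIdeal (Ideal.Quotient.mk T)
    (fun q hq => (Ideal.Quotient.eq_zero_iff_mem).mpr (hT hq))

lemma chiT_mk (p : Pc) :
    chiT T hT (Ideal.Quotient.mk nodeIdeal p) = Ideal.Quotient.mk T p :=
  Ideal.Quotient.lift_mk _ _ _

lemma chiT_unit (hunit : ∀ p : Pc, constantCoeff p ≠ 0 → IsUnit (Ideal.Quotient.mk T p))
    (s : mA.primeCompl) : IsUnit (chiT T hT s) := by
  obtain ⟨p, hp⟩ := Ideal.Quotient.mk_surjective (s : Anode)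
  have hs : (s : Anode) ∉ mA := s.2
  have hmem_iff : ∀ z : Anode, z ∈ mA ↔ εA z = 0 := fun z => by
    rw [mA_eq_ker]
    exact RingHom.mem_ker
  have hce : constantCoeff p ≠ 0 := by
    intro h0
    apply hs
    have h1 : εA (Ideal.Quotient.mk nodeIdeal p) = evalO p := rfl
    have h2 : εA ((s : Anode)) = 0 := by
      rw [← hp, h1]
      simp [evalO, h0]
    exact (hmem_iff _).mpr h2
  rw [← hp, chiT_mk]
  exact hunit p hce

variable (hunit : ∀ p : Pc, constantCoeff p ≠ 0 → IsUnit (Ideal.Quotient.mk T p))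

/-- the lift `R → ℂ[x,y]/T`. -/
noncomputable def psiT : Rnode →+* Pc ⧸ T :=
  IsLocalization.lift (M := mA.primeCompl) (S := Rnode) (chiT_unit T hT hunit)

lemma psiT_phi (p : Pc) : psiT T hT hunit (phiR p) = Ideal.Quotient.mk T p := by
  have h1 : phiR p = algebraMap Anode Rnode (Ideal.Quotient.mk nodeIdeal p) := rfl
  rw [h1, psiT, IsLocalization.lift_eq, chiT_mk]

end Transfer

lemma binom_mem_of (T : Ideal Pc) (N1 N2 : ℕ)
    (h1 : (X 0 : Pc) ^ N1 ∈ T) (h2 : (X 1 : Pc) ^ N2 ∈ T) (u v : Pc) :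
    (u * X 0 + v * X 1) ^ (N1 + N2) ∈ T := by
  rw [add_pow]
  apply Ideal.sum_mem
  intro t _
  rcases le_or_gt N1 t with h | h
  · have hx : (X 0 : Pc) ^ t ∈ T := by
      obtain ⟨d, rfl⟩ : ∃ d, t = N1 + d := ⟨t - N1, by omega⟩
      rw [pow_add]
      exact Ideal.mul_mem_right _ _ h1
    refine Ideal.mul_mem_right _ _ (Ideal.mul_mem_right _ _ ?_)
    rw [mul_pow]
    exact Ideal.mul_mem_left _ _ hx
  · have hy : (X 1 : Pc) ^ (N1 + N2 - t) ∈ T := by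
      obtain ⟨d, hd⟩ : ∃ d, N1 + N2 - t = N2 + d := ⟨N1 - t, by omega⟩
      rw [hd, pow_add]
      exact Ideal.mul_mem_right _ _ h2
    refine Ideal.mul_mem_right _ _ (Ideal.mul_mem_left _ _ ?_)
    rw [mul_pow]
    exact Ideal.mul_mem_left _ _ hy

lemma isUnit_mk_of (T : Ideal Pc) (N : ℕ)
    (hN : ∀ u v : Pc, (u * X 0 + v * X 1) ^ N ∈ T)
    {p : Pc} (h : constantCoeff p ≠ 0) :
    IsUnit (Ideal.Quotient.mk T p) := by
  obtain ⟨u, v, huv⟩ := Ideal.mem_span_pair.mp (sub_const_mem p)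
  have hnil : IsNilpotent (Ideal.Quotient.mk T (p - C (constantCoeff p))) := by
    refine ⟨N, ?_⟩
    rw [← map_pow, Ideal.Quotient.eq_zero_iff_mem, ← huv]
    exact hN u v
  have hu : IsUnit (Ideal.Quotient.mk T (C (constantCoeff p))) := by
    have := h.isUnit.map ((Ideal.Quotient.mk T).comp (C : ℂ →+* Pc))
    exact this
  have hdecomp : Ideal.Quotient.mk T p
      = Ideal.Quotient.mk T (C (constantCoeff p))
        + Ideal.Quotient.mk T (p - C (constantCoeff p)) := by
    rw [← map_add]
    congr 1
    ring
  rw [hdecomp]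
  exact IsNilpotent.isUnit_add_left_of_commute hnil hu (Commute.all _ _)

section WithParams
variable {n i : ℕ} {a : ℂ}

lemma node_le_Ig : nodeIdeal ≤ Ig n i a := by
  rw [nodeIdeal, Ideal.span_le, Set.singleton_subset_iff]
  exact xy_mem_Ig n i a

lemma node_le_Lq : nodeIdeal ≤ Lq n i := by
  rw [nodeIdeal, Ideal.span_le, Set.singleton_subset_iff]
  exact xy_mem_Lq

lemma hunit_Ig (hn : 1 ≤ n) (hi : 1 ≤ i) (ha : a ≠ 0) :
    ∀ p : Pc, constantCoeff p ≠ 0 → IsUnit (Ideal.Quotient.mk (Ig n i a) p) :=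
  fun _ h => isUnit_mk_of _ ((n+i) + (n+i))
    (binom_mem_of _ _ _ (xpow_mem hn hi ha (by omega)) (ypow_mem hn (by omega))) h

lemma hunit_Lq (hn : 1 ≤ n) (hi : 1 ≤ i) :
    ∀ p : Pc, constantCoeff p ≠ 0 → IsUnit (Ideal.Quotient.mk (Lq n i) p) :=
  fun _ h => isUnit_mk_of _ (n + i)
    (binom_mem_of _ _ _ (xpow_mem_Lq le_rfl) (ypow_mem_Lq le_rfl)) h

end WithParams

end NodeAux
namespace NodeAux

set_option synthInstance.maxHeartbeats 1000000
set_option maxHeartbeats 2000000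

open Finset MvPolynomial

section Main
variable {n i : ℕ} {a : ℂ}

lemma smul_def_R (c : ℂ) (z : Rnode) : c • z = algebraMap ℂ Rnode c * z := by
  rw [← algebraMap_smul (A := Anode) (r := c) (m := z),
    ← algebraMap_smul (A := Rnode) (r := (algebraMap ℂ Anode c)) (m := z), smul_eq_mul]
  rfl

lemma smul_mk_J (J : Ideal Rnode) (c : ℂ) (z : Rnode) :
    c • Ideal.Quotient.mk J z = Ideal.Quotient.mk J (c • z) :=
  (Submodule.Quotient.mk_smul J c z).symm

lemma g_eq_phi (n i : ℕ) (a : ℂ) : phiR (gP n i a) = y ^ i + a • x ^ n := by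
  rw [gP, map_add, map_mul, map_pow, map_pow, phiR_X0, phiR_X1, phiR_C, smul_def_R]

lemma phi_Ig_mem {q : Pc} (hq : q ∈ Ig n i a) :
    phiR q ∈ Ideal.span {y ^ i + a • x ^ n} := by
  obtain ⟨u, v, rfl⟩ := Ideal.mem_span_pair.mp hq
  have hdecomp : phiR (u * (X 0 * X 1) + v * gP n i a)
      = phiR u * (x * y) + phiR v * phiR (gP n i a) := by
    simp only [map_add, map_mul, phiR_X0, phiR_X1]
  rw [hdecomp, xy_zero, mul_zero, zero_add, g_eq_phi]
  exact Ideal.mul_mem_left _ _ (Ideal.subset_span (Set.mem_singleton _))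

lemma ker_psiI (hn : 1 ≤ n) (hi : 1 ≤ i) (ha : a ≠ 0) :
    RingHom.ker (psiT (Ig n i a) node_le_Ig (hunit_Ig hn hi ha))
      = Ideal.span {y ^ i + a • x ^ n} := by
  apply le_antisymm
  · intro z hz
    rw [RingHom.mem_ker] at hz
    obtain ⟨⟨p', s⟩, rfl⟩ := IsLocalization.mk'_surjective mA.primeCompl z
    have hchi : chiT (Ig n i a) node_le_Ig p' = 0 := by
      have hspec := (IsLocalization.lift_mk'_spec (S := Rnode)
        (g := chiT (Ig n i a) node_le_Ig)
        (hg := chiT_unit (Ig n i a) node_le_Ig (hunit_Ig hn hi ha)) p' 0 s).mp hz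
      rwa [mul_zero] at hspec
    obtain ⟨q, rfl⟩ := Ideal.Quotient.mk_surjective p'
    rw [chiT_mk, Ideal.Quotient.eq_zero_iff_mem] at hchi
    have hp' : algebraMap Anode Rnode (Ideal.Quotient.mk nodeIdeal q)
        ∈ Ideal.span {y ^ i + a • x ^ n} := phi_Ig_mem hchi
    show IsLocalization.mk' Rnode _ s ∈ _
    rw [IsLocalization.mk'_eq_mul_mk'_one]
    exact Ideal.mul_mem_right _ _ hp'
  · rw [Ideal.span_le, Set.singleton_subset_iff]
    have : psiT (Ig n i a) node_le_Ig (hunit_Ig hn hi ha) (y ^ i + a • x ^ n) = 0 := by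
      rw [← g_eq_phi, psiT_phi, Ideal.Quotient.eq_zero_iff_mem]
      exact gP_mem_Ig n i a
    exact this
  
lemma sub_phi_mem (hn : 1 ≤ n) (hi : 1 ≤ i) (ha : a ≠ 0) (z : Rnode) :
    ∃ p : Pc, z - phiR p ∈ Ideal.span {y ^ i + a • x ^ n} := by
  obtain ⟨p, hp⟩ := Ideal.Quotient.mk_surjective
    (psiT (Ig n i a) node_le_Ig (hunit_Ig hn hi ha) z)
  refine ⟨p, ?_⟩
  rw [← ker_psiI hn hi ha, RingHom.mem_ker, map_sub, psiT_phi, hp, sub_self]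

lemma finrank_transfer (hn : 1 ≤ n) (hi : 1 ≤ i) (ha : a ≠ 0) (J : Ideal Rnode)
    (hNJ : Ideal.span {y ^ i + a • x ^ n} ≤ J) :
    Module.finrank ℂ (Rnode ⧸ J) = Module.finrank ℂ (Pc ⧸ Ideal.comap phiR J) := by
  set Ψ : Pc →+* Rnode ⧸ J := (Ideal.Quotient.mk J).comp phiR with hΨ
  have hΨ_apply : ∀ p : Pc, Ψ p = Ideal.Quotient.mk J (phiR p) := fun _ => rfl
  have hsurj : Function.Surjective Ψ := by
    intro w
    obtain ⟨z, rfl⟩ := Ideal.Quotient.mk_surjective w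
    obtain ⟨p, hp⟩ := sub_phi_mem hn hi ha z
    refine ⟨p, ?_⟩
    rw [hΨ_apply, Ideal.Quotient.mk_eq_mk_iff_sub_mem]
    have h2 : phiR p - z = -(z - phiR p) := by ring
    rw [h2]
    exact neg_mem (hNJ hp)
  have hker : RingHom.ker Ψ = Ideal.comap phiR J := by
    ext q
    rw [RingHom.mem_ker, Ideal.mem_comap, hΨ_apply, Ideal.Quotient.eq_zero_iff_mem]
  set e := RingHom.quotientKerEquivOfSurjective hsurj with he
  have e_mk : ∀ p : Pc,
      e (Ideal.Quotient.mk (RingHom.ker Ψ) p) = Ideal.Quotient.mk J (phiR p) :=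
    fun p => RingHom.kerLift_mk Ψ p
  have hF : Module.finrank ℂ (Pc ⧸ RingHom.ker Ψ) = Module.finrank ℂ (Rnode ⧸ J) := by
    refine LinearEquiv.finrank_eq ?_
    refine { toFun := e, invFun := e.symm, left_inv := e.symm_apply_apply,
             right_inv := e.apply_symm_apply, map_add' := map_add e, map_smul' := ?_ }
    intro c w
    obtain ⟨p, rfl⟩ := Ideal.Quotient.mk_surjective w
    show e (c • Ideal.Quotient.mk (RingHom.ker Ψ) p)
        = c • e (Ideal.Quotient.mk (RingHom.ker Ψ) p)
    calc e (c • Ideal.Quotient.mk (RingHom.ker Ψ) p)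
        = e (Ideal.Quotient.mk (RingHom.ker Ψ) (c • p)) := by rw [mk_smul]
      _ = Ideal.Quotient.mk J (phiR (c • p)) := e_mk _
      _ = Ideal.Quotient.mk J (c • phiR p) := by
            rw [smul_eq_C_mul, map_mul, phiR_C, ← smul_def_R]
      _ = c • Ideal.Quotient.mk J (phiR p) := by rw [smul_mk_J]
      _ = c • e (Ideal.Quotient.mk (RingHom.ker Ψ) p) := by rw [e_mk]
  rw [hker] at hF
  exact hF.symm

lemma ideal_rec (hn : 1 ≤ n) (hi : 1 ≤ i) (ha : a ≠ 0) (J1 J2 : Ideal Rnode)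
    (h1 : Ideal.span {y ^ i + a • x ^ n} ≤ J1)
    (h2 : Ideal.span {y ^ i + a • x ^ n} ≤ J2)
    (hc : Ideal.comap phiR J1 = Ideal.comap phiR J2) : J1 = J2 := by
  have key : ∀ (A B : Ideal Rnode), Ideal.span {y ^ i + a • x ^ n} ≤ A →
      Ideal.span {y ^ i + a • x ^ n} ≤ B →
      Ideal.comap phiR A ≤ Ideal.comap phiR B → A ≤ B := by
    intro A B hA hB hAB z hz
    obtain ⟨p, hp⟩ := sub_phi_mem hn hi ha z
    have hpA : phiR p ∈ A := by
      have he : phiR p = z - (z - phiR p) := by ring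
      rw [he]
      exact Ideal.sub_mem _ hz (hA hp)
    have hpB : phiR p ∈ B := hAB hpA
    have he2 : z = phiR p + (z - phiR p) := by ring
    rw [he2]
    exact Ideal.add_mem _ hpB (hB hp)
  exact le_antisymm (key _ _ h1 h2 hc.le) (key _ _ h2 h1 hc.ge)

lemma comap_Q (hn : 1 ≤ n) (hi : 1 ≤ i) :
    Ideal.comap phiR (Ideal.span {x ^ n, y ^ i}) = Lq n i := by
  apply le_antisymm
  · intro p hp
    rw [Ideal.mem_comap] at hp
    have hQ : ∀ z ∈ Ideal.span {x ^ n, y ^ i},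
        psiT (Lq n i) node_le_Lq (hunit_Lq hn hi) z = 0 := by
      intro z hzq
      obtain ⟨r1, r2, rfl⟩ := Ideal.mem_span_pair.mp hzq
      rw [map_add, map_mul, map_mul]
      have hx : psiT (Lq n i) node_le_Lq (hunit_Lq hn hi) (x ^ n) = 0 := by
        have hxp : x ^ n = phiR ((X 0 : Pc) ^ n) := by rw [map_pow, phiR_X0]
        rw [hxp, psiT_phi, Ideal.Quotient.eq_zero_iff_mem]
        exact x_pow_mem_Lq
      have hy : psiT (Lq n i) node_le_Lq (hunit_Lq hn hi) (y ^ i) = 0 := by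
        have hyp : y ^ i = phiR ((X 1 : Pc) ^ i) := by rw [map_pow, phiR_X1]
        rw [hyp, psiT_phi, Ideal.Quotient.eq_zero_iff_mem]
        exact y_pow_mem_Lq
      rw [hx, hy, mul_zero, mul_zero, add_zero]
    have hqz := hQ _ hp
    rwa [psiT_phi, Ideal.Quotient.eq_zero_iff_mem] at hqz
  · rw [Lq, Ideal.span_le]
    rintro q hq
    simp only [Set.mem_insert_iff, Set.mem_singleton_iff] at hq
    rcases hq with rfl | rfl | rfl
    · rw [SetLike.mem_coe, Ideal.mem_comap, map_mul, phiR_X0, phiR_X1, xy_zero]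
      exact Ideal.zero_mem _
    · rw [SetLike.mem_coe, Ideal.mem_comap, map_pow, phiR_X0]
      exact Ideal.subset_span (by simp)
    · rw [SetLike.mem_coe, Ideal.mem_comap, map_pow, phiR_X1]
      exact Ideal.subset_span (by simp)

end Main

end NodeAux

set_option synthInstance.maxHeartbeats 1000000 in
set_option maxHeartbeats 2000000 in
theorem unique_colength_sub_one_ideal_containing_I (m i : ℕ) (a : ℂ)
    (hm : 2 ≤ m) (hi1 : 1 ≤ i) (hi2 : i ≤ m - 1) (ha : a ≠ 0) :
    ∀ J : Ideal Rnode,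
      (Ideal.span {y ^ i + a • x ^ (m - i)} ≤ J ∧
        Module.finrank ℂ (Rnode ⧸ J) = m - 1) ↔
      J = Ideal.span {x ^ (m - i), y ^ i} := by
  intro J
  set n := m - i with hn_def
  have hn : 1 ≤ n := by omega
  have hm' : n + i = m := by omega
  have hQg : Ideal.span {y ^ i + a • x ^ n} ≤ Ideal.span {x ^ n, y ^ i} := by
    rw [Ideal.span_le, Set.singleton_subset_iff]
    refine Ideal.add_mem _ (Ideal.subset_span (by simp)) ?_
    rw [NodeAux.smul_def_R]
    exact Ideal.mul_mem_left _ _ (Ideal.subset_span (by simp))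
  constructor
  · rintro ⟨hgJ, hdim⟩
    have hIK : NodeAux.Ig n i a ≤ Ideal.comap NodeAux.phiR J := fun q hq =>
      Ideal.mem_comap.mpr (hgJ (NodeAux.phi_Ig_mem hq))
    have hfrK : Module.finrank ℂ (Pc ⧸ Ideal.comap NodeAux.phiR J) = n + i - 1 := by
      rw [← NodeAux.finrank_transfer hn hi1 ha J hgJ, hdim]
      omega
    have hKLq := NodeAux.polyMain n i a hn hi1 ha _ hIK hfrK
    refine NodeAux.ideal_rec hn hi1 ha J _ hgJ hQg ?_
    rw [hKLq, NodeAux.comap_Q hn hi1]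
  · rintro rfl
    refine ⟨hQg, ?_⟩
    rw [NodeAux.finrank_transfer hn hi1 ha _ hQg, NodeAux.comap_Q hn hi1,
      (NodeAux.finrank_Lq hn hi1).1]
    omega

end
end

section
/- Let m ≥ 3 and 2 ≤ i ≤ m−1. The ideals J of R with Q^m_i ⊆ J and dim_ℂ(R/J) = m−1 are exactly the following: the ideals I^{m−1}_{i−1}(a) = (y^{i−1} + a·x^{m−i}) for a ∈ ℂ, a ≠ 0, together with Q^{m−1}_i = (x^{m−i}, y^i) and Q^{m−1}_{i−1} = (x^{m−i+1}, y^{i−1}). -/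
noncomputable section

open MvPolynomial

set_option synthInstance.maxHeartbeats 1000000
set_option maxHeartbeats 1000000
/-! ### Coefficient toolkit -/

lemma single_le_single_iff (i : Fin 2) (a b : ℕ) :
    Finsupp.single i a ≤ Finsupp.single i b ↔ a ≤ b := by
  rw [Finsupp.single_le_iff, Finsupp.single_eq_same]

lemma single01_not_le {a : ℕ} (b : ℕ) (ha : 1 ≤ a) :
    ¬ Finsupp.single (0 : Fin 2) a ≤ Finsupp.single (1 : Fin 2) b := by
  rw [Finsupp.single_le_iff]
  rw [Finsupp.single_eq_of_ne (by decide)]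
  omega

lemma single10_not_le {a : ℕ} (b : ℕ) (ha : 1 ≤ a) :
    ¬ Finsupp.single (1 : Fin 2) a ≤ Finsupp.single (0 : Fin 2) b := by
  rw [Finsupp.single_le_iff]
  rw [Finsupp.single_eq_of_ne (by decide)]
  omega

lemma coeff0_X0pow (k n : ℕ) :
    coeff (Finsupp.single (0 : Fin 2) k) ((X 0 : Pc) ^ n) = if n = k then 1 else 0 := by
  rw [coeff_X_pow]
  by_cases h : n = k
  · subst h; simp
  · rw [if_neg (fun hc => h (Finsupp.single_injective _ hc)), if_neg h]

lemma coeff1_X1pow (l n : ℕ) :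
    coeff (Finsupp.single (1 : Fin 2) l) ((X 1 : Pc) ^ n) = if n = l then 1 else 0 := by
  rw [coeff_X_pow]
  by_cases h : n = l
  · subst h; simp
  · rw [if_neg (fun hc => h (Finsupp.single_injective _ hc)), if_neg h]

lemma coeff0_X1pow (k n : ℕ) (hn : 1 ≤ n) :
    coeff (Finsupp.single (0 : Fin 2) k) ((X 1 : Pc) ^ n) = 0 := by
  rw [coeff_X_pow, if_neg]
  intro hc
  rw [Finsupp.single_eq_single_iff] at hc
  rcases hc with ⟨h01, -⟩ | ⟨h, -⟩
  · exact absurd h01 (by decide)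
  · omega

lemma coeff1_X0pow (l n : ℕ) (hn : 1 ≤ n) :
    coeff (Finsupp.single (1 : Fin 2) l) ((X 0 : Pc) ^ n) = 0 := by
  rw [coeff_X_pow, if_neg]
  intro hc
  rw [Finsupp.single_eq_single_iff] at hc
  rcases hc with ⟨h01, -⟩ | ⟨h, -⟩
  · exact absurd h01 (by decide)
  · omega

lemma coeff0_mul_X0pow {k n : ℕ} (h : k < n) (q : Pc) :
    coeff (Finsupp.single (0 : Fin 2) k) (q * (X 0) ^ n) = 0 := by
  rw [X_pow_eq_monomial, coeff_mul_monomial', if_neg]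
  rw [single_le_single_iff]; omega

lemma coeff1_mul_X0pow (l : ℕ) {n : ℕ} (hn : 1 ≤ n) (q : Pc) :
    coeff (Finsupp.single (1 : Fin 2) l) (q * (X 0) ^ n) = 0 := by
  rw [X_pow_eq_monomial, coeff_mul_monomial', if_neg (single01_not_le l hn)]

lemma coeff1_mul_X1pow {l n : ℕ} (h : l < n) (q : Pc) :
    coeff (Finsupp.single (1 : Fin 2) l) (q * (X 1) ^ n) = 0 := by
  rw [X_pow_eq_monomial, coeff_mul_monomial', if_neg]
  rw [single_le_single_iff]; omega

lemma coeff0_mul_X1pow (k : ℕ) {n : ℕ} (hn : 1 ≤ n) (q : Pc) :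
    coeff (Finsupp.single (0 : Fin 2) k) (q * (X 1) ^ n) = 0 := by
  rw [X_pow_eq_monomial, coeff_mul_monomial', if_neg (single10_not_le k hn)]

lemma coeff0_mul_X0X1 (k : ℕ) (q : Pc) :
    coeff (Finsupp.single (0 : Fin 2) k) (q * (X 0 * X 1)) = 0 := by
  rw [← mul_assoc, coeff_mul_X', if_neg]
  rw [Finsupp.mem_support_iff]
  simp [Finsupp.single_eq_of_ne (show (0 : Fin 2) ≠ 1 by decide)]

lemma coeff1_mul_X0X1 (l : ℕ) (q : Pc) :
    coeff (Finsupp.single (1 : Fin 2) l) (q * (X 0 * X 1)) = 0 := by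
  rw [show q * (X 0 * X 1) = q * X 1 * X 0 by ring, coeff_mul_X', if_neg]
  rw [Finsupp.mem_support_iff]
  simp [Finsupp.single_eq_of_ne (show (1 : Fin 2) ≠ 0 by decide)]

lemma coeff0_succ_X0mul (k : ℕ) (q : Pc) :
    coeff (Finsupp.single (0 : Fin 2) (k + 1)) (X 0 * q) =
      coeff (Finsupp.single (0 : Fin 2) k) q := by
  rw [coeff_X_mul', if_pos]
  · congr 1
    rw [← Finsupp.single_tsub]
    simp
  · rw [Finsupp.mem_support_iff, Finsupp.single_eq_same]; omega

lemma coeff1_succ_X1mul (l : ℕ) (q : Pc) :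
    coeff (Finsupp.single (1 : Fin 2) (l + 1)) (X 1 * q) =
      coeff (Finsupp.single (1 : Fin 2) l) q := by
  rw [coeff_X_mul', if_pos]
  · congr 1
    rw [← Finsupp.single_tsub]
    simp
  · rw [Finsupp.mem_support_iff, Finsupp.single_eq_same]; omega

lemma coeff1_X0mul (l : ℕ) (q : Pc) :
    coeff (Finsupp.single (1 : Fin 2) l) (X 0 * q) = 0 := by
  rw [coeff_X_mul', if_neg]
  rw [Finsupp.mem_support_iff]
  simp [Finsupp.single_eq_of_ne (show (1 : Fin 2) ≠ 0 by decide)]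

lemma coeff0_X1mul (k : ℕ) (q : Pc) :
    coeff (Finsupp.single (0 : Fin 2) k) (X 1 * q) = 0 := by
  rw [coeff_X_mul', if_neg]
  rw [Finsupp.mem_support_iff]
  simp [Finsupp.single_eq_of_ne (show (0 : Fin 2) ≠ 1 by decide)]

/-! ### The ideal `K0 p j = (xy, x^p, y^j)` and the coefficient map -/

def K0 (p j : ℕ) : Ideal Pc := Ideal.span {X 0 * X 1, X 0 ^ p, X 1 ^ j}

lemma X0X1_mem_K0 (p j : ℕ) : (X 0 : Pc) * X 1 ∈ K0 p j := Ideal.subset_span (by simp)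
lemma X0pow_mem_K0 (p j : ℕ) : (X 0 : Pc) ^ p ∈ K0 p j := Ideal.subset_span (by simp)
lemma X1pow_mem_K0 (p j : ℕ) : (X 1 : Pc) ^ j ∈ K0 p j := Ideal.subset_span (by simp)

lemma mem_K0_iff {p j : ℕ} {z : Pc} :
    z ∈ K0 p j ↔ ∃ r s t : Pc, z = r * (X 0 * X 1) + s * X 0 ^ p + t * X 1 ^ j := by
  constructor
  · intro hz
    rw [K0, Ideal.mem_span_insert] at hz
    obtain ⟨r, u, hu, rfl⟩ := hz
    rw [Ideal.mem_span_insert] at hu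
    obtain ⟨s, w, hw, rfl⟩ := hu
    rw [Ideal.mem_span_singleton'] at hw
    obtain ⟨t, rfl⟩ := hw
    exact ⟨r, s, t, by ring⟩
  · rintro ⟨r, s, t, rfl⟩
    exact Ideal.add_mem _ (Ideal.add_mem _ (Ideal.mul_mem_left _ _ (X0X1_mem_K0 p j))
      (Ideal.mul_mem_left _ _ (X0pow_mem_K0 p j))) (Ideal.mul_mem_left _ _ (X1pow_mem_K0 p j))

/-- The coefficient map recording the coefficients of `1, x, …, x^{p-1}, y, …, y^{j-1}`. -/
def fco (p j : ℕ) : Pc →ₗ[ℂ] (Fin p → ℂ) × (Fin (j - 1) → ℂ) where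
  toFun q := (fun k => coeff (Finsupp.single (0 : Fin 2) (k : ℕ)) q,
              fun l => coeff (Finsupp.single (1 : Fin 2) ((l : ℕ) + 1)) q)
  map_add' q r := by
    refine Prod.ext ?_ ?_ <;> funext k <;> simp [coeff_add]
  map_smul' c q := by
    refine Prod.ext ?_ ?_ <;> funext k <;> simp [coeff_smul]

@[simp] lemma fco_fst (p j : ℕ) (q : Pc) (k : Fin p) :
    (fco p j q).1 k = coeff (Finsupp.single (0 : Fin 2) (k : ℕ)) q := rfl

@[simp] lemma fco_snd (p j : ℕ) (q : Pc) (l : Fin (j - 1)) :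
    (fco p j q).2 l = coeff (Finsupp.single (1 : Fin 2) ((l : ℕ) + 1)) q := rfl

lemma fco_eq_zero_of_mem {p j : ℕ} (hp : 1 ≤ p) (hj : 1 ≤ j) {z : Pc}
    (hz : z ∈ K0 p j) : fco p j z = 0 := by
  obtain ⟨r, s, t, rfl⟩ := mem_K0_iff.mp hz
  refine Prod.ext (funext fun k => ?_) (funext fun l => ?_)
  · rw [fco_fst, coeff_add, coeff_add, coeff0_mul_X0X1, coeff0_mul_X0pow k.isLt,
      coeff0_mul_X1pow _ hj]
    simp
  · have hlt : ((l : ℕ) + 1) < j := by have := l.isLt; omega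
    rw [fco_snd, coeff_add, coeff_add, coeff1_mul_X0X1, coeff1_mul_X0pow _ hp,
      coeff1_mul_X1pow hlt]
    simp

lemma mem_of_fco_eq_zero {p j : ℕ} (hp : 1 ≤ p) {z : Pc}
    (hz : fco p j z = 0) : z ∈ K0 p j := by
  have h0 : ∀ k : ℕ, k < p → coeff (Finsupp.single (0 : Fin 2) k) z = 0 := by
    intro k hk
    simpa using congrFun (congrArg Prod.fst hz) ⟨k, hk⟩
  have h1 : ∀ l : ℕ, 1 ≤ l → l < j → coeff (Finsupp.single (1 : Fin 2) l) z = 0 := by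
    intro l hl1 hlj
    have := congrFun (congrArg Prod.snd hz) ⟨l - 1, by omega⟩
    simpa [show l - 1 + 1 = l by omega] using this
  nth_rewrite 1 [as_sum z]
  refine Ideal.sum_mem _ fun d hd => ?_
  by_cases hboth : 1 ≤ d 0 ∧ 1 ≤ d 1
  · have hle : (Finsupp.single (0 : Fin 2) 1 + Finsupp.single 1 1) ≤ d := by
      rw [Finsupp.le_def]
      intro a
      fin_cases a <;> simp [Finsupp.single_apply] <;> omega
    have key : monomial d (coeff d z) =
        monomial (d - (Finsupp.single 0 1 + Finsupp.single 1 1)) (coeff d z) * (X 0 * X 1) := by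
      rw [show ((X 0 : Pc) * X 1) =
            monomial (Finsupp.single 0 1 + Finsupp.single 1 1) 1 by
          rw [X, X, monomial_mul, one_mul]]
      rw [monomial_mul, mul_one, tsub_add_cancel_of_le hle]
    rw [key]
    exact Ideal.mul_mem_left _ _ (X0X1_mem_K0 p j)
  · by_cases h1d : d 1 = 0
    · have hdeq : d = Finsupp.single (0 : Fin 2) (d 0) := by
        ext a
        fin_cases a <;> simp [Finsupp.single_apply, h1d]
      by_cases hk : d 0 < p
      · rw [hdeq, h0 _ hk, monomial_zero]
        exact Ideal.zero_mem _
      · have harg : Finsupp.single (0 : Fin 2) (d 0 - p) + Finsupp.single 0 p =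
            Finsupp.single (0 : Fin 2) (d 0) := by
          rw [← Finsupp.single_add]
          congr 1
          omega
        have key : monomial d (coeff d z) =
            monomial (Finsupp.single (0 : Fin 2) (d 0 - p)) (coeff d z) * (X 0) ^ p := by
          rw [X_pow_eq_monomial, monomial_mul, mul_one, harg, ← hdeq]
        rw [key]
        exact Ideal.mul_mem_left _ _ (X0pow_mem_K0 p j)
    · have h0d : d 0 = 0 := by
        by_contra h
        exact hboth ⟨by omega, by omega⟩
      have hdeq : d = Finsupp.single (1 : Fin 2) (d 1) := by
        ext a
        fin_cases a <;> simp [Finsupp.single_apply, h0d]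
      by_cases hl : d 1 < j
      · rw [hdeq, h1 _ (by omega) hl, monomial_zero]
        exact Ideal.zero_mem _
      · have harg : Finsupp.single (1 : Fin 2) (d 1 - j) + Finsupp.single 1 j =
            Finsupp.single (1 : Fin 2) (d 1) := by
          rw [← Finsupp.single_add]
          congr 1
          omega
        have key : monomial d (coeff d z) =
            monomial (Finsupp.single (1 : Fin 2) (d 1 - j)) (coeff d z) * (X 1) ^ j := by
          rw [X_pow_eq_monomial, monomial_mul, mul_one, harg, ← hdeq]
        rw [key]
        exact Ideal.mul_mem_left _ _ (X1pow_mem_K0 p j)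

lemma fco_surjective (p j : ℕ) : Function.Surjective (fco p j) := by
  rintro ⟨u, w⟩
  refine ⟨(∑ k : Fin p, u k • (X 0 : Pc) ^ (k : ℕ)) +
          (∑ l : Fin (j - 1), w l • (X 1 : Pc) ^ ((l : ℕ) + 1)), ?_⟩
  refine Prod.ext (funext fun k => ?_) (funext fun l => ?_)
  · rw [fco_fst, coeff_add, coeff_sum, coeff_sum]
    have hA : ∀ k' : Fin p,
        coeff (Finsupp.single (0 : Fin 2) (k : ℕ)) (u k' • (X 0 : Pc) ^ (k' : ℕ)) =
          if k' = k then u k else 0 := by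
      intro k'
      rw [coeff_smul, coeff0_X0pow]
      by_cases h : k' = k
      · subst h; simp
      · rw [if_neg (fun hc => h (Fin.ext hc)), if_neg h, smul_zero]
    have hB : ∀ l : Fin (j - 1),
        coeff (Finsupp.single (0 : Fin 2) (k : ℕ)) (w l • (X 1 : Pc) ^ ((l : ℕ) + 1)) = 0 := by
      intro l
      rw [coeff_smul, coeff0_X1pow _ _ (by omega), smul_zero]
    rw [Finset.sum_congr rfl (fun k' _ => hA k'), Finset.sum_congr rfl (fun l _ => hB l)]
    simp
  · rw [fco_snd, coeff_add, coeff_sum, coeff_sum]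
    have hA : ∀ k' : Fin p,
        coeff (Finsupp.single (1 : Fin 2) ((l : ℕ) + 1)) (u k' • (X 0 : Pc) ^ (k' : ℕ)) =
          0 := by
      intro k'
      by_cases h : (k' : ℕ) = 0
      · rw [h, pow_zero, coeff_smul]
        rw [show ((1 : Pc) = C 1) from (map_one C).symm, coeff_C, if_neg, smul_zero]
        intro hc
        exact Nat.succ_ne_zero _ (Finsupp.single_eq_zero.mp hc.symm)
      · rw [coeff_smul, coeff1_X0pow ((l : ℕ) + 1) (k' : ℕ) (by omega), smul_zero]
    have hB : ∀ l' : Fin (j - 1),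
        coeff (Finsupp.single (1 : Fin 2) ((l : ℕ) + 1)) (w l' • (X 1 : Pc) ^ ((l' : ℕ) + 1)) =
          if l' = l then w l else 0 := by
      intro l'
      rw [coeff_smul, coeff1_X1pow]
      by_cases h : l' = l
      · subst h; simp
      · rw [if_neg (fun hc => h (Fin.ext (by omega))), if_neg h, smul_zero]
    rw [Finset.sum_congr rfl (fun k' _ => hA k'), Finset.sum_congr rfl (fun l' _ => hB l')]
    simp

/-! ### Quotients of `Pc` along kernels of coefficient maps -/

open Module

/-- Descend a `ℂ`-linear map along an ideal quotient. -/
def quotDesc (K : Ideal Pc) {M : Type} [AddCommGroup M] [Module ℂ M]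
    (h : Pc →ₗ[ℂ] M) (hker : ∀ z ∈ K, h z = 0) : (Pc ⧸ K) →ₗ[ℂ] M where
  toFun := fun z => Quotient.liftOn' z h fun a b hab => by
    have hab' : a - b ∈ K := by rwa [Submodule.quotientRel_def] at hab
    have h0 := hker _ hab'
    rw [map_sub, sub_eq_zero] at h0
    exact h0
  map_add' := fun za zb => by
    obtain ⟨a, rfl⟩ := Ideal.Quotient.mk_surjective za
    obtain ⟨b, rfl⟩ := Ideal.Quotient.mk_surjective zb
    rw [← map_add (Ideal.Quotient.mk K)]
    exact map_add h a b
  map_smul' := fun c za => by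
    obtain ⟨a, rfl⟩ := Ideal.Quotient.mk_surjective za
    rw [show (c • Ideal.Quotient.mk K a) = Ideal.Quotient.mk K (c • a) by
      rw [← Ideal.Quotient.mkₐ_eq_mk ℂ K, map_smul]]
    exact map_smul h c a

@[simp] lemma quotDesc_mk (K : Ideal Pc) {M : Type} [AddCommGroup M] [Module ℂ M]
    (h : Pc →ₗ[ℂ] M) (hker : ∀ z ∈ K, h z = 0) (a : Pc) :
    quotDesc K h hker (Ideal.Quotient.mk K a) = h a := rfl

/-- A linear map realizing an ideal as its kernel descends to a linear equivalence. -/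
noncomputable def quotEquivOfKer (K : Ideal Pc) {M : Type} [AddCommGroup M] [Module ℂ M]
    (h : Pc →ₗ[ℂ] M) (hsurj : Function.Surjective h) (hker : ∀ z, z ∈ K ↔ h z = 0) :
    (Pc ⧸ K) ≃ₗ[ℂ] M := by
  refine LinearEquiv.ofBijective (quotDesc K h fun z hz => (hker z).mp hz) ⟨?_, ?_⟩
  · intro za zb hab
    obtain ⟨a, rfl⟩ := Ideal.Quotient.mk_surjective za
    obtain ⟨b, rfl⟩ := Ideal.Quotient.mk_surjective zb
    rw [quotDesc_mk, quotDesc_mk] at hab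
    rw [Ideal.Quotient.eq]
    refine (hker _).mpr ?_
    rw [map_sub, hab, sub_self]
  · intro m
    obtain ⟨z, hz⟩ := hsurj m
    exact ⟨Ideal.Quotient.mk K z, hz⟩

lemma finrank_target (p j : ℕ) :
    finrank ℂ ((Fin p → ℂ) × (Fin (j - 1) → ℂ)) = p + (j - 1) := by
  rw [Module.finrank_prod, Module.finrank_fin_fun, Module.finrank_fin_fun]

lemma finrank_quot_K0 {p j : ℕ} (hp : 1 ≤ p) (hj : 1 ≤ j) :
    finrank ℂ (Pc ⧸ K0 p j) = p + (j - 1) := by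
  rw [(quotEquivOfKer (K0 p j) (fco p j) (fco_surjective p j) fun z =>
      ⟨fco_eq_zero_of_mem hp hj, mem_of_fco_eq_zero hp⟩).finrank_eq, finrank_target]

lemma fco_mul_of {p j : ℕ} (hp : 1 ≤ p) (hj : 1 ≤ j) {v : Pc}
    (hxv : X 0 * v ∈ K0 p j) (hyv : X 1 * v ∈ K0 p j) (r : Pc) :
    fco p j (r * v) = (constantCoeff r) • fco p j v := by
  have hsub : (r - C (constantCoeff r)) * v ∈ K0 p j := by
    obtain ⟨a, b, hab⟩ := Ideal.mem_span_pair.mp (sub_const_mem r)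
    rw [← hab, show (a * X 0 + b * X 1) * v = a * (X 0 * v) + b * (X 1 * v) by ring]
    exact Ideal.add_mem _ (Ideal.mul_mem_left _ _ hxv) (Ideal.mul_mem_left _ _ hyv)
  have h2 : r * v - constantCoeff r • v ∈ K0 p j := by
    rw [smul_eq_C_mul, show r * v - C (constantCoeff r) * v = (r - C (constantCoeff r)) * v
      by ring]
    exact hsub
  have h3 := fco_eq_zero_of_mem hp hj h2
  rw [map_sub, map_smul, sub_eq_zero] at h3
  exact h3

lemma finrank_quot_K0_sup {p j : ℕ} (hp : 1 ≤ p) (hj : 1 ≤ j) {v : Pc}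
    (hxv : X 0 * v ∈ K0 p j) (hyv : X 1 * v ∈ K0 p j) (hv : fco p j v ≠ 0) :
    finrank ℂ (Pc ⧸ (K0 p j ⊔ Ideal.span {v})) + 1 = p + (j - 1) := by
  set U : Submodule ℂ _ := ℂ ∙ (fco p j v) with hU
  have hker : ∀ z, z ∈ K0 p j ⊔ Ideal.span {v} ↔ (U.mkQ ∘ₗ fco p j) z = 0 := by
    intro z
    rw [LinearMap.comp_apply, U.mkQ_apply, Submodule.Quotient.mk_eq_zero]
    constructor
    · intro hz
      obtain ⟨k, hk, w, hw, rfl⟩ := Submodule.mem_sup.mp hz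
      obtain ⟨r, rfl⟩ := Ideal.mem_span_singleton'.mp hw
      rw [map_add, fco_eq_zero_of_mem hp hj hk, zero_add, fco_mul_of hp hj hxv hyv]
      exact Submodule.smul_mem _ _ (Submodule.mem_span_singleton_self _)
    · intro hz
      obtain ⟨c, hc⟩ := Submodule.mem_span_singleton.mp hz
      have h0 : fco p j (z - c • v) = 0 := by rw [map_sub, map_smul, ← hc, sub_self]
      have hzv := mem_of_fco_eq_zero hp h0
      rw [show z = (z - c • v) + c • v by ring]
      refine Submodule.add_mem _ (Submodule.mem_sup_left hzv) (Submodule.mem_sup_right ?_)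
      rw [smul_eq_C_mul]
      exact Ideal.mul_mem_left _ _ (Ideal.subset_span rfl)
  have e := quotEquivOfKer _ _ (U.mkQ_surjective.comp (fco_surjective p j)) hker
  rw [e.finrank_eq]
  have h2 := U.finrank_quotient_add_finrank
  rw [finrank_span_singleton hv] at h2
  rw [h2, finrank_target]

set_option synthInstance.maxHeartbeats 1000000 in
set_option maxHeartbeats 1000000 in
lemma classify_K {p j : ℕ} (hp : 2 ≤ p) (hj : 2 ≤ j) (K : Ideal Pc) (hK0 : K0 p j ≤ K)
    (hrank : finrank ℂ (Pc ⧸ K) + 1 = p + (j - 1)) :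
    ∃ α β : ℂ, ¬(α = 0 ∧ β = 0) ∧
      K = K0 p j ⊔ Ideal.span {α • (X 0 : Pc) ^ (p - 1) + β • (X 1 : Pc) ^ (j - 1)} := by
  have hp1 : 1 ≤ p := by omega
  have hj1 : 1 ≤ j := by omega
  set U : Submodule ℂ ((Fin p → ℂ) × (Fin (j - 1) → ℂ)) :=
    Submodule.map (fco p j) (Submodule.restrictScalars ℂ K) with hUdef
  have hkerK : ∀ z, z ∈ K ↔ fco p j z ∈ U := by
    intro z
    constructor
    · intro hz
      exact Submodule.mem_map_of_mem hz
    · intro hz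
      obtain ⟨k, hk, heq⟩ := Submodule.mem_map.mp hz
      have h0 : fco p j (z - k) = 0 := by rw [map_sub, heq, sub_self]
      have hzk : z - k ∈ K := hK0 (mem_of_fco_eq_zero hp1 h0)
      have := K.add_mem hzk (hk : k ∈ K)
      simpa using this
  have hker : ∀ z, z ∈ K ↔ (U.mkQ ∘ₗ fco p j) z = 0 := fun z => by
    rw [hkerK z, LinearMap.comp_apply, U.mkQ_apply, Submodule.Quotient.mk_eq_zero]
  have e := quotEquivOfKer K _ (U.mkQ_surjective.comp (fco_surjective p j)) hker
  have hU1 : finrank ℂ U = 1 := by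
    have h2 := U.finrank_quotient_add_finrank
    rw [← e.finrank_eq, finrank_target] at h2
    omega
  obtain ⟨u, hu, hune⟩ : ∃ u ∈ U, u ≠ 0 := by
    by_contra hcon
    push_neg at hcon
    have : U = ⊥ := (Submodule.eq_bot_iff U).mpr hcon
    rw [this, finrank_bot] at hU1
    omega
  obtain ⟨v, hvK', hfv⟩ := Submodule.mem_map.mp hu
  have hvK : v ∈ K := hvK'
  have hfvne : fco p j v ≠ 0 := by rw [hfv]; exact hune
  haveI hUfd : FiniteDimensional ℂ U := inferInstance
  have hUspan : U = ℂ ∙ (fco p j v) := by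
    refine (Submodule.eq_of_le_of_finrank_eq ?_ ?_).symm
    · rw [Submodule.span_le, Set.singleton_subset_iff]
      exact (hkerK v).mp hvK
    · rw [finrank_span_singleton hfvne, hU1]
  -- the powers of `X 0` and `X 1` act nilpotently, so `X 0 * v` and `X 1 * v` die
  have hstep : ∀ (g : Pc) (c : ℂ), g ^ p ∈ K0 p j ∨ g ^ j ∈ K0 p j →
      fco p j (g * v) = c • fco p j v → c = 0 := by
    intro g c hgp hc
    have key : ∀ t : ℕ, fco p j (g ^ t * v) = c ^ t • fco p j v := by
      intro t
      induction t with
      | zero => simp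
      | succ t ih =>
        have hmem : g ^ t * (g * v - c • v) ∈ K0 p j := by
          refine Ideal.mul_mem_left _ _ (mem_of_fco_eq_zero hp1 ?_)
          rw [map_sub, map_smul, hc, sub_self]
        have h0 := fco_eq_zero_of_mem hp1 hj1 hmem
        have hexp : g ^ t * (g * v - c • v) = g ^ (t + 1) * v - c • (g ^ t * v) := by
          rw [smul_eq_C_mul, smul_eq_C_mul]; ring
        rw [hexp, map_sub, map_smul, sub_eq_zero] at h0
        rw [h0, ih, smul_smul, pow_succ, mul_comm (c ^ t) c]
    rcases hgp with hgp | hgp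
    · have h0 : (0 : (Fin p → ℂ) × (Fin (j - 1) → ℂ)) = c ^ p • fco p j v := by
        rw [← key p]
        exact (fco_eq_zero_of_mem hp1 hj1 (Ideal.mul_mem_right _ _ hgp)).symm
      rcases smul_eq_zero.mp h0.symm with h | h
      · exact pow_eq_zero_iff (by omega) |>.mp h
      · exact absurd h hfvne
    · have h0 : (0 : (Fin p → ℂ) × (Fin (j - 1) → ℂ)) = c ^ j • fco p j v := by
        rw [← key j]
        exact (fco_eq_zero_of_mem hp1 hj1 (Ideal.mul_mem_right _ _ hgp)).symm
      rcases smul_eq_zero.mp h0.symm with h | h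
      · exact pow_eq_zero_iff (by omega) |>.mp h
      · exact absurd h hfvne
  have hX0v : fco p j (X 0 * v) = 0 := by
    obtain ⟨c, hc⟩ := Submodule.mem_span_singleton.mp
      (hUspan ▸ (hkerK _).mp (K.mul_mem_left (X 0) hvK))
    have hc0 : c = 0 := hstep (X 0) c (Or.inl (X0pow_mem_K0 p j)) hc.symm
    rw [← hc, hc0, zero_smul]
  have hX1v : fco p j (X 1 * v) = 0 := by
    obtain ⟨c, hc⟩ := Submodule.mem_span_singleton.mp
      (hUspan ▸ (hkerK _).mp (K.mul_mem_left (X 1) hvK))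
    have hc0 : c = 0 := hstep (X 1) c (Or.inr (X1pow_mem_K0 p j)) hc.symm
    rw [← hc, hc0, zero_smul]
  have hcx : ∀ k : ℕ, k < p - 1 → coeff (Finsupp.single (0 : Fin 2) k) v = 0 := by
    intro k hk
    have h := congrFun (congrArg Prod.fst hX0v) ⟨k + 1, by omega⟩
    simp only [fco_fst, Pi.zero_apply, Prod.fst_zero] at h
    rwa [coeff0_succ_X0mul] at h
  have hcy : ∀ l : ℕ, l < j - 1 → coeff (Finsupp.single (1 : Fin 2) l) v = 0 := by
    intro l hl
    have h := congrFun (congrArg Prod.snd hX1v) ⟨l, by omega⟩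
    simp only [fco_snd, Pi.zero_apply, Prod.snd_zero] at h
    rwa [coeff1_succ_X1mul] at h
  set α := coeff (Finsupp.single (0 : Fin 2) (p - 1)) v with hα
  set β := coeff (Finsupp.single (1 : Fin 2) (j - 1)) v with hβ
  set w : Pc := α • (X 0 : Pc) ^ (p - 1) + β • (X 1 : Pc) ^ (j - 1) with hw
  have hfw : fco p j w = fco p j v := by
    refine Prod.ext (funext fun k => ?_) (funext fun l => ?_)
    · rw [fco_fst, fco_fst, hw, coeff_add, coeff_smul, coeff_smul,
        coeff0_X0pow, coeff0_X1pow _ _ (by omega), smul_zero, add_zero]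
      by_cases hk : (k : ℕ) = p - 1
      · rw [if_pos hk.symm, hk, smul_eq_mul, mul_one]
      · rw [if_neg (fun hc => hk hc.symm), smul_zero]
        exact (hcx _ (by have := k.isLt; omega)).symm
    · rw [fco_snd, fco_snd, hw, coeff_add, coeff_smul, coeff_smul,
        coeff1_X0pow _ _ (by omega), coeff1_X1pow, smul_zero, zero_add]
      by_cases hl : (l : ℕ) + 1 = j - 1
      · rw [if_pos hl.symm, hl, smul_eq_mul, mul_one]
      · rw [if_neg (fun hc => hl hc.symm), smul_zero]
        exact (hcy _ (by have := l.isLt; omega)).symm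
  have hαβ : ¬(α = 0 ∧ β = 0) := by
    rintro ⟨h1, h2⟩
    apply hfvne
    rw [← hfw, hw, h1, h2, zero_smul, zero_smul, add_zero, map_zero]
  refine ⟨α, β, hαβ, ?_⟩
  apply le_antisymm
  · intro z hz
    obtain ⟨c, hc⟩ := Submodule.mem_span_singleton.mp (hUspan ▸ (hkerK z).mp hz)
    have h0 : fco p j (z - c • w) = 0 := by
      rw [map_sub, map_smul, hfw, hc, sub_self]
    have hm := mem_of_fco_eq_zero hp1 h0
    rw [show z = (z - c • w) + c • w by ring]
    refine Submodule.add_mem _ (Submodule.mem_sup_left hm) (Submodule.mem_sup_right ?_)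
    exact Submodule.smul_of_tower_mem _ c (Ideal.subset_span rfl)
  · refine sup_le hK0 ?_
    rw [Ideal.span_le, Set.singleton_subset_iff]
    refine (hkerK w).mpr ?_
    rw [hfw, hUspan]
    exact Submodule.mem_span_singleton_self _

/-! ### Basic facts about `Anode`, `Rnode` and the map `ℂ[x,y] → R` -/

lemma εA_mk (q : Pc) : εA (Ideal.Quotient.mk nodeIdeal q) = evalO q := rfl

lemma εA_algebraMap (c : ℂ) : εA (algebraMap ℂ Anode c) = c := by
  have h : algebraMap ℂ Anode c = Ideal.Quotient.mk nodeIdeal (C c) := rfl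
  rw [h, εA_mk]
  simp [evalO]

lemma εA_surjective : Function.Surjective εA :=
  fun c => ⟨algebraMap ℂ Anode c, εA_algebraMap c⟩

instance mA_isMaximal : mA.IsMaximal :=
  mA_eq_ker ▸ RingHom.ker_isMaximal_of_surjective εA εA_surjective

lemma xA_mul_yA : xA * yA = 0 := by
  rw [xA, yA, ← map_mul, Ideal.Quotient.eq_zero_iff_mem]
  exact Ideal.subset_span rfl

lemma xA_mul_yA_pow {l : ℕ} (hl : 1 ≤ l) : xA * yA ^ l = 0 := by
  have h : yA ^ l = yA * yA ^ (l - 1) := by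
    rw [← pow_succ']
    congr 1
    omega
  rw [h, ← mul_assoc, xA_mul_yA, zero_mul]

lemma xA_pow_mul_yA {k : ℕ} (hk : 1 ≤ k) : xA ^ k * yA = 0 := by
  have h : xA ^ k = xA * xA ^ (k - 1) := by
    rw [← pow_succ']
    congr 1
    omega
  have h2 : xA * xA ^ (k - 1) * yA = (xA * yA) * xA ^ (k - 1) := by ring
  rw [h, h2, xA_mul_yA, zero_mul]

lemma algebraMap_RC :
    algebraMap ℂ Rnode = (algebraMap Anode Rnode).comp (algebraMap ℂ Anode) := rfl

/-- The canonical map `ℂ[x,y] → R`. -/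
def πP : Pc →ₐ[ℂ] Rnode where
  toRingHom := (algebraMap Anode Rnode).comp (Ideal.Quotient.mk nodeIdeal)
  commutes' := fun c => rfl

lemma πP_apply (q : Pc) :
    πP q = algebraMap Anode Rnode (Ideal.Quotient.mk nodeIdeal q) := rfl

lemma πP_X0 : πP (X 0) = x := rfl
lemma πP_X1 : πP (X 1) = y := rfl

lemma x_mul_y : x * y = 0 := by
  rw [x, y, ← map_mul, xA_mul_yA, map_zero]

lemma x_mul_y_pow {l : ℕ} (hl : 1 ≤ l) : x * y ^ l = 0 := by
  rw [x, y, ← map_pow, ← map_mul, xA_mul_yA_pow hl, map_zero]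

lemma x_pow_mul_y {k : ℕ} (hk : 1 ≤ k) : x ^ k * y = 0 := by
  rw [x, y, ← map_pow, ← map_mul, xA_pow_mul_yA hk, map_zero]

lemma mA_mem_of {a : Anode} (h : εA a = 0) : a ∈ mA := by
  rw [mA_eq_ker]
  exact h

/-- Primary-ideal saturation: contraction of the extension of a suitable ideal. -/
lemma comap_map_loc {JA : Ideal Anode} (hle : JA ≤ mA) {p j : ℕ}
    (hx : xA ^ p ∈ JA) (hy : yA ^ j ∈ JA) :
    ((JA.map (algebraMap Anode Rnode)).comap (algebraMap Anode Rnode) : Ideal Anode) = JA := by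
  refine le_antisymm ?_ Ideal.le_comap_map
  intro a ha
  rw [Ideal.mem_comap] at ha
  obtain ⟨⟨b, s⟩, hb⟩ := (IsLocalization.mem_map_algebraMap_iff mA.primeCompl Rnode).mp ha
  rw [← map_mul] at hb
  obtain ⟨c, hc⟩ := (IsLocalization.eq_iff_exists mA.primeCompl Rnode).mp hb
  have heq : a * ((s : Anode) * c) = (c : Anode) * b := by rw [← hc]; ring
  have hmem : a * ((s : Anode) * c) ∈ JA := heq ▸ Ideal.mul_mem_left _ _ b.2
  have hrad : JA.radical = mA := by
    refine le_antisymm ?_ ?_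
    · calc JA.radical ≤ mA.radical := Ideal.radical_mono hle
        _ = mA := (mA_isMaximal.isPrime).radical
    · rw [mA, Ideal.span_le]
      rintro z hz
      simp only [Set.mem_insert_iff, Set.mem_singleton_iff] at hz
      rcases hz with rfl | rfl
      · exact ⟨p, hx⟩
      · exact ⟨j, hy⟩
  have hprim : JA.IsPrimary := Ideal.isPrimary_of_isMaximal_radical (hrad ▸ mA_isMaximal)
  rcases (Ideal.isPrimary_iff.mp hprim).2 hmem with h | h
  · exact h
  · exfalso
    rw [hrad] at h
    exact (Submonoid.mul_mem _ s.2 c.2 : (s : Anode) * (c : Anode) ∈ mA.primeCompl) h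

lemma mA_pow_mem {u : Anode} (hu : u ∈ mA) {p j : ℕ} (hp : 1 ≤ p) (hj : 1 ≤ j) :
    u ^ (p + j) ∈ Ideal.span {xA ^ p, yA ^ j} := by
  obtain ⟨r, t, hrt⟩ := Ideal.mem_span_pair.mp hu
  rw [← hrt, add_pow]
  refine Ideal.sum_mem _ fun k hk => ?_
  rw [Finset.mem_range] at hk
  by_cases hkp : p ≤ k
  · have hxk : (r * xA) ^ k = r ^ k * xA ^ (k - p) * xA ^ p := by
      rw [mul_pow, mul_assoc, ← pow_add]
      congr 2
      omega
    rw [hxk]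
    refine Ideal.mul_mem_right _ _ (Ideal.mul_mem_right _ _ ?_)
    exact Ideal.mul_mem_left _ _ (Ideal.subset_span (by simp))
  · have hyk : (t * yA) ^ (p + j - k) = t ^ (p + j - k) * yA ^ (p + j - k - j) * yA ^ j := by
      rw [mul_pow, mul_assoc, ← pow_add]
      congr 2
      omega
    rw [hyk]
    refine Ideal.mul_mem_right _ _ ?_
    refine Ideal.mul_mem_left _ _ ?_
    refine Ideal.mul_mem_left _ _ ?_
    exact Ideal.subset_span (by simp)

set_option maxHeartbeats 1000000 in
set_option synthInstance.maxHeartbeats 1000000 in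
/-- The composite `ℂ[x,y] → R → R/J` is surjective whenever `J ⊇ (x^p, y^j)`. -/
lemma pi_surj {p j : ℕ} (hp : 1 ≤ p) (hj : 1 ≤ j) {Qr : Ideal Rnode}
    (hQ : Ideal.span {x ^ p, y ^ j} ≤ Qr) :
    Function.Surjective ((Ideal.Quotient.mkₐ ℂ Qr).comp πP) := by
  set τ := (Ideal.Quotient.mkₐ ℂ Qr).comp πP with hτ
  set φ : Anode →+* (Rnode ⧸ Qr) := (Ideal.Quotient.mk Qr).comp (algebraMap Anode Rnode) with hφ
  have hφ_span : ∀ z ∈ Ideal.span {xA ^ p, yA ^ j}, φ z = 0 := by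
    intro z hz
    obtain ⟨r, t, hrt⟩ := Ideal.mem_span_pair.mp hz
    have h1 : φ (xA ^ p) = 0 := by
      have hx1 : φ (xA ^ p) = Ideal.Quotient.mk Qr (x ^ p) := by
        rw [hφ, RingHom.comp_apply, map_pow]
        rfl
      rw [hx1, Ideal.Quotient.eq_zero_iff_mem]
      exact hQ (Ideal.subset_span (by simp))
    have h2 : φ (yA ^ j) = 0 := by
      have hy1 : φ (yA ^ j) = Ideal.Quotient.mk Qr (y ^ j) := by
        rw [hφ, RingHom.comp_apply, map_pow]
        rfl
      rw [hy1, Ideal.Quotient.eq_zero_iff_mem]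
      exact hQ (Ideal.subset_span (by simp))
    rw [← hrt, map_add, map_mul, map_mul, h1, h2, mul_zero, mul_zero, add_zero]
  intro zb
  obtain ⟨z, rfl⟩ := Ideal.Quotient.mk_surjective zb
  obtain ⟨⟨a, s⟩, hzas⟩ := IsLocalization.mk'_surjective mA.primeCompl z
  have hspec : z * algebraMap Anode Rnode (s : Anode) = algebraMap Anode Rnode a := by
    rw [← hzas]
    exact IsLocalization.mk'_spec Rnode a s
  set c := εA (s : Anode) with hcdef
  have hc0 : c ≠ 0 := by
    intro h0
    exact s.2 (mA_mem_of h0)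
  set n : Anode := (s : Anode) - algebraMap ℂ Anode c with hn
  have hnm : n ∈ mA := by
    refine mA_mem_of ?_
    rw [hn, map_sub, εA_algebraMap, ← hcdef, sub_self]
  have hnil : (φ n) ^ (p + j) = 0 := by
    rw [← map_pow]
    exact hφ_span _ (mA_pow_mem hnm hp hj)
  set tt : Rnode ⧸ Qr := -(algebraMap ℂ _ c⁻¹ * φ n) with htt
  set S : Rnode ⧸ Qr := ∑ k ∈ Finset.range (p + j), tt ^ k with hS
  have hinv : algebraMap ℂ (Rnode ⧸ Qr) c * algebraMap ℂ _ c⁻¹ = 1 := by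
    rw [← map_mul, mul_inv_cancel₀ hc0, map_one]
  have httn : tt ^ (p + j) = 0 := by
    have hodd : tt ^ (p + j) =
        (-1 : Rnode ⧸ Qr) ^ (p + j) * (algebraMap ℂ _ c⁻¹) ^ (p + j) * (φ n) ^ (p + j) := by
      rw [htt]; ring
    rw [hodd, hnil, mul_zero]
  have hφalg : ∀ c' : ℂ, φ (algebraMap ℂ Anode c') = algebraMap ℂ (Rnode ⧸ Qr) c' :=
    fun c' => rfl
  have hs_split : φ (s : Anode) = algebraMap ℂ _ c + φ n := by
    rw [hn, map_sub, hφalg]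
    ring
  have he : φ (s : Anode) * (algebraMap ℂ _ c⁻¹ * S) = 1 := by
    rw [hs_split]
    have expand : (algebraMap ℂ (Rnode ⧸ Qr) c + φ n) * (algebraMap ℂ _ c⁻¹ * S)
        = (algebraMap ℂ _ c * algebraMap ℂ _ c⁻¹) * S + (algebraMap ℂ _ c⁻¹ * φ n) * S := by
      ring
    rw [expand, hinv, one_mul]
    have hneg : (algebraMap ℂ (Rnode ⧸ Qr) c⁻¹ * φ n) * S = -(tt * S) := by
      rw [htt]; ring
    rw [hneg]
    have hgeo := mul_neg_geom_sum tt (p + j)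
    rw [httn, sub_zero] at hgeo
    linear_combination hgeo
  obtain ⟨qn, hqn⟩ := Ideal.Quotient.mk_surjective (I := nodeIdeal) n
  obtain ⟨qa, hqa⟩ := Ideal.Quotient.mk_surjective (I := nodeIdeal) a
  have hτqn : τ qn = φ n := by
    have h0 : τ qn = φ (Ideal.Quotient.mk nodeIdeal qn) := rfl
    rw [h0, hqn]
  have hτqa : τ qa = φ a := by
    have h0 : τ qa = φ (Ideal.Quotient.mk nodeIdeal qa) := rfl
    rw [h0, hqa]
  have hτC : ∀ c' : ℂ, τ (C c') = algebraMap ℂ (Rnode ⧸ Qr) c' := fun c' => by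
    rw [show (C c' : Pc) = algebraMap ℂ Pc c' from rfl]
    exact τ.commutes c'
  refine ⟨qa * (C c⁻¹ * ∑ k ∈ Finset.range (p + j), (-(C c⁻¹ * qn)) ^ k), ?_⟩
  rw [map_mul, map_mul, map_sum]
  simp_rw [map_pow, map_neg, map_mul, hτC, hτqn, hτqa]
  have hza : φ a = Ideal.Quotient.mk Qr z * φ (s : Anode) := by
    rw [hφ, RingHom.comp_apply, ← hspec, map_mul]
    rfl
  rw [hza, mul_assoc, he, mul_one]

lemma comap_pi_eq (I : Ideal Rnode) :
    Ideal.comap πP I =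
      Ideal.comap (Ideal.Quotient.mk nodeIdeal)
        (Ideal.comap (algebraMap Anode Rnode) I) := rfl

lemma smul_Anode (c : ℂ) (a : Anode) : c • a = algebraMap ℂ Anode c * a := by
  obtain ⟨q, rfl⟩ := Ideal.Quotient.mk_surjective a
  rw [show (c • Ideal.Quotient.mk nodeIdeal q) = Ideal.Quotient.mk nodeIdeal (c • q) from
    (Submodule.Quotient.mk_smul nodeIdeal c q).symm]
  rw [smul_eq_C_mul, map_mul]
  rfl

lemma smul_Rnode (c : ℂ) (z : Rnode) : c • z = algebraMap ℂ Rnode c * z := by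
  refine Localization.induction_on z ?_
  rintro ⟨a, s⟩
  rw [Localization.smul_mk]
  rw [show algebraMap ℂ Rnode c = algebraMap Anode Rnode (algebraMap ℂ Anode c) from rfl]
  rw [← Localization.mk_one_eq_algebraMap, Localization.mk_mul, one_mul, smul_Anode]

lemma πP_C (c : ℂ) : πP (C c) = algebraMap ℂ Rnode c := πP.commutes c

lemma πP_smul (c : ℂ) (q : Pc) : πP (c • q) = c • πP q := by
  rw [smul_eq_C_mul, map_mul, πP_C, smul_Rnode]

set_option synthInstance.maxHeartbeats 1000000 in
/-- The composite `ℂ[x,y] → R/J` as a `ℂ`-linear map. -/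
noncomputable def quotCompare (J : Ideal Rnode) : Pc →ₗ[ℂ] (Rnode ⧸ J) where
  toFun q := Ideal.Quotient.mk J (πP q)
  map_add' a b := by
    show Ideal.Quotient.mk J (πP (a + b)) = _
    rw [map_add, map_add]
  map_smul' c q := by
    simp only [RingHom.id_apply]
    rw [πP_smul]
    exact Submodule.Quotient.mk_smul J c (πP q)

set_option synthInstance.maxHeartbeats 1000000 in
lemma quotCompare_surj {J : Ideal Rnode} {p j : ℕ} (hp : 1 ≤ p) (hj : 1 ≤ j)
    (hQ : Ideal.span {x ^ p, y ^ j} ≤ J) :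
    Function.Surjective (quotCompare J) := by
  intro b
  obtain ⟨q, hq⟩ := pi_surj hp hj hQ b
  exact ⟨q, hq⟩

set_option synthInstance.maxHeartbeats 1000000 in
lemma finrank_quot_eq {J : Ideal Rnode} {p j : ℕ} (hp : 1 ≤ p) (hj : 1 ≤ j)
    (hQ : Ideal.span {x ^ p, y ^ j} ≤ J) :
    Module.finrank ℂ (Rnode ⧸ J) = Module.finrank ℂ (Pc ⧸ Ideal.comap πP J) := by
  have e := quotEquivOfKer (Ideal.comap πP J) (quotCompare J)
    (quotCompare_surj hp hj hQ) (fun z => by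
      rw [Ideal.mem_comap]
      show _ ↔ Ideal.Quotient.mk J (πP z) = 0
      rw [Ideal.Quotient.eq_zero_iff_mem])
  exact (e.finrank_eq).symm

set_option synthInstance.maxHeartbeats 1000000 in
lemma map_pi_comap {J : Ideal Rnode} {p j : ℕ} (hp : 1 ≤ p) (hj : 1 ≤ j)
    (hQ : Ideal.span {x ^ p, y ^ j} ≤ J) :
    Ideal.map πP (Ideal.comap πP J) = J := by
  refine le_antisymm (Ideal.map_le_iff_le_comap.mpr le_rfl) ?_
  have hQm : Ideal.span {x ^ p, y ^ j} ≤ Ideal.map πP (Ideal.comap πP J) := by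
    rw [Ideal.span_le]
    rintro z hz
    simp only [Set.mem_insert_iff, Set.mem_singleton_iff] at hz
    rcases hz with rfl | rfl
    · have hx : x ^ p = πP (X 0 ^ p) := by rw [map_pow, πP_X0]
      rw [hx]
      refine Ideal.mem_map_of_mem (f := πP) ?_
      rw [Ideal.mem_comap, map_pow, πP_X0]
      exact hQ (Ideal.subset_span (by simp))
    · have hy : y ^ j = πP (X 1 ^ j) := by rw [map_pow, πP_X1]
      rw [hy]
      refine Ideal.mem_map_of_mem (f := πP) ?_
      rw [Ideal.mem_comap, map_pow, πP_X1]
      exact hQ (Ideal.subset_span (by simp))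
  intro z hz
  obtain ⟨q, hq⟩ := pi_surj hp hj (le_refl (Ideal.span {x ^ p, y ^ j}))
    (Ideal.Quotient.mk (Ideal.span {x ^ p, y ^ j}) z)
  have hq' : z - πP q ∈ Ideal.span {x ^ p, y ^ j} := by
    rw [← Ideal.Quotient.eq]
    exact (show Ideal.Quotient.mk _ (πP q) = _ from hq).symm
  have hπq : πP q ∈ J := by
    have : πP q = z - (z - πP q) := by ring
    rw [this]
    exact Ideal.sub_mem _ hz (hQ hq')
  have h1 : πP q ∈ Ideal.map πP (Ideal.comap πP J) :=
    Ideal.mem_map_of_mem (f := πP) (Ideal.mem_comap.mpr hπq)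
  have : z = (z - πP q) + πP q := by ring
  rw [this]
  exact Ideal.add_mem _ (hQm hq') h1

/-! ### Explicit generators, their images and contractions -/

lemma πP_pow0 (k : ℕ) : πP (X 0 ^ k) = x ^ k := by rw [map_pow, πP_X0]
lemma πP_pow1 (k : ℕ) : πP (X 1 ^ k) = y ^ k := by rw [map_pow, πP_X1]

lemma loc_smul (c : ℂ) (w : Anode) :
    algebraMap Anode Rnode (c • w) = c • algebraMap Anode Rnode w := by
  rw [smul_Anode, map_mul, smul_Rnode]
  rfl

lemma mk_pow0 (k : ℕ) : Ideal.Quotient.mk nodeIdeal (X 0 ^ k) = xA ^ k := by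
  rw [map_pow]; rfl

lemma mk_pow1 (k : ℕ) : Ideal.Quotient.mk nodeIdeal (X 1 ^ k) = yA ^ k := by
  rw [map_pow]; rfl

lemma mk_genA (a : ℂ) (k l : ℕ) :
    Ideal.Quotient.mk nodeIdeal (X 1 ^ l + a • X 0 ^ k) = yA ^ l + a • xA ^ k := by
  have h3 : Ideal.Quotient.mk nodeIdeal (a • X 0 ^ k)
      = a • Ideal.Quotient.mk nodeIdeal (X 0 ^ k) :=
    Submodule.Quotient.mk_smul nodeIdeal a (X 0 ^ k)
  rw [map_add, h3, mk_pow0, mk_pow1]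

lemma loc_genA (a : ℂ) (k l : ℕ) :
    algebraMap Anode Rnode (yA ^ l + a • xA ^ k) = y ^ l + a • x ^ k := by
  rw [map_add, loc_smul, map_pow, map_pow]
  rfl

lemma xA_mem_mA : xA ∈ mA := Ideal.subset_span (by simp)
lemma yA_mem_mA : yA ∈ mA := Ideal.subset_span (by simp)

lemma span_pair_le_mA {p j : ℕ} (hp : 1 ≤ p) (hj : 1 ≤ j) :
    Ideal.span ({xA ^ p, yA ^ j} : Set Anode) ≤ mA := by
  rw [Ideal.span_le]
  rintro z hz
  simp only [Set.mem_insert_iff, Set.mem_singleton_iff] at hz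
  rcases hz with rfl | rfl
  · exact Ideal.pow_mem_of_mem _ xA_mem_mA _ (by omega)
  · exact Ideal.pow_mem_of_mem _ yA_mem_mA _ (by omega)

lemma genA_le_mA {a : ℂ} {k l : ℕ} (hk : 1 ≤ k) (hl : 1 ≤ l) :
    Ideal.span ({yA ^ l + a • xA ^ k} : Set Anode) ≤ mA := by
  rw [Ideal.span_le, Set.singleton_subset_iff]
  refine Ideal.add_mem _ (Ideal.pow_mem_of_mem _ yA_mem_mA _ (by omega)) ?_
  rw [smul_Anode]
  exact Ideal.mul_mem_left _ _ (Ideal.pow_mem_of_mem _ xA_mem_mA _ (by omega))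

lemma xA_pow_mem_genA {a : ℂ} (ha : a ≠ 0) {k l : ℕ} (hk : 1 ≤ k) (hl : 1 ≤ l) :
    xA ^ (k + 1) ∈ Ideal.span ({yA ^ l + a • xA ^ k} : Set Anode) := by
  rw [Ideal.mem_span_singleton']
  refine ⟨algebraMap ℂ Anode a⁻¹ * xA, ?_⟩
  rw [smul_Anode]
  have h0 : xA * yA ^ l = 0 := xA_mul_yA_pow hl
  have h1 : algebraMap ℂ Anode a⁻¹ * algebraMap ℂ Anode a = 1 := by
    rw [← map_mul, inv_mul_cancel₀ ha, map_one]
  linear_combination (algebraMap ℂ Anode a⁻¹) * h0 + xA ^ (k + 1) * h1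

lemma yA_pow_mem_genA {a : ℂ} {k l : ℕ} (hk : 1 ≤ k) :
    yA ^ (l + 1) ∈ Ideal.span ({yA ^ l + a • xA ^ k} : Set Anode) := by
  rw [Ideal.mem_span_singleton']
  refine ⟨yA, ?_⟩
  rw [smul_Anode]
  have h0 : xA ^ k * yA = 0 := xA_pow_mul_yA hk
  linear_combination (algebraMap ℂ Anode a) * h0

lemma x_pow_mem_genR {a : ℂ} (ha : a ≠ 0) {k l : ℕ} (hk : 1 ≤ k) (hl : 1 ≤ l) :
    x ^ (k + 1) ∈ Ideal.span ({y ^ l + a • x ^ k} : Set Rnode) := by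
  rw [Ideal.mem_span_singleton']
  refine ⟨algebraMap ℂ Rnode a⁻¹ * x, ?_⟩
  rw [smul_Rnode]
  have h0 : x * y ^ l = 0 := x_mul_y_pow hl
  have h1 : algebraMap ℂ Rnode a⁻¹ * algebraMap ℂ Rnode a = 1 := by
    rw [← map_mul, inv_mul_cancel₀ ha, map_one]
  linear_combination (algebraMap ℂ Rnode a⁻¹) * h0 + x ^ (k + 1) * h1

lemma y_pow_mem_genR {a : ℂ} {k l : ℕ} (hk : 1 ≤ k) :
    y ^ (l + 1) ∈ Ideal.span ({y ^ l + a • x ^ k} : Set Rnode) := by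
  rw [Ideal.mem_span_singleton']
  refine ⟨y, ?_⟩
  rw [smul_Rnode]
  have h0 : x ^ k * y = 0 := x_pow_mul_y hk
  linear_combination (algebraMap ℂ Rnode a) * h0

lemma Q_le_genR {a : ℂ} (ha : a ≠ 0) {k l : ℕ} (hk : 1 ≤ k) (hl : 1 ≤ l) :
    Ideal.span {x ^ (k + 1), y ^ (l + 1)} ≤ Ideal.span ({y ^ l + a • x ^ k} : Set Rnode) := by
  rw [Ideal.span_le]
  rintro z hz
  simp only [Set.mem_insert_iff, Set.mem_singleton_iff] at hz
  rcases hz with rfl | rfl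
  · exact x_pow_mem_genR ha hk hl
  · exact y_pow_mem_genR hk

lemma map_mk_span_pair (p j : ℕ) :
    (Ideal.span ({X 0 ^ p, X 1 ^ j} : Set Pc)).map (Ideal.Quotient.mk nodeIdeal)
      = Ideal.span {xA ^ p, yA ^ j} := by
  rw [Ideal.map_span, Set.image_insert_eq, Set.image_singleton, mk_pow0, mk_pow1]

lemma map_mk_span_gen (a : ℂ) (k l : ℕ) :
    (Ideal.span ({X 1 ^ l + a • X 0 ^ k} : Set Pc)).map (Ideal.Quotient.mk nodeIdeal)
      = Ideal.span {yA ^ l + a • xA ^ k} := by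
  rw [Ideal.map_span, Set.image_singleton, mk_genA]

lemma QR_eq_map (p j : ℕ) :
    Ideal.span ({x ^ p, y ^ j} : Set Rnode)
      = (Ideal.span ({xA ^ p, yA ^ j} : Set Anode)).map (algebraMap Anode Rnode) := by
  rw [Ideal.map_span, Set.image_insert_eq, Set.image_singleton, map_pow, map_pow]
  rfl

lemma genR_eq_map (a : ℂ) (k l : ℕ) :
    Ideal.span ({y ^ l + a • x ^ k} : Set Rnode)
      = (Ideal.span ({yA ^ l + a • xA ^ k} : Set Anode)).map (algebraMap Anode Rnode) := by
  rw [Ideal.map_span, Set.image_singleton, loc_genA]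

lemma comap_mk_map (JP : Ideal Pc) :
    Ideal.comap (Ideal.Quotient.mk nodeIdeal) (JP.map (Ideal.Quotient.mk nodeIdeal))
      = JP ⊔ nodeIdeal := by
  rw [Ideal.comap_map_of_surjective _ Ideal.Quotient.mk_surjective]
  congr 1
  exact Ideal.mk_ker

lemma spanP_sup_node (p j : ℕ) :
    Ideal.span ({X 0 ^ p, X 1 ^ j} : Set Pc) ⊔ nodeIdeal = K0 p j := by
  rw [nodeIdeal, K0, ← Ideal.span_union]
  congr 1
  ext z
  simp only [Set.mem_union, Set.mem_insert_iff, Set.mem_singleton_iff]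
  tauto

lemma spanV_sup_node {a : ℂ} (ha : a ≠ 0) {k l : ℕ} (hk : 1 ≤ k) (hl : 1 ≤ l) :
    Ideal.span ({X 1 ^ l + a • X 0 ^ k} : Set Pc) ⊔ nodeIdeal
      = K0 (k + 1) (l + 1) ⊔ Ideal.span ({X 1 ^ l + a • X 0 ^ k} : Set Pc) := by
  have hnodeK : nodeIdeal ≤ K0 (k + 1) (l + 1) := by
    rw [nodeIdeal, Ideal.span_le, Set.singleton_subset_iff]
    exact X0X1_mem_K0 _ _
  apply le_antisymm
  · exact sup_le le_sup_right (le_trans hnodeK le_sup_left)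
  · refine sup_le ?_ le_sup_left
    rw [K0, Ideal.span_le]
    rintro z hz
    simp only [Set.mem_insert_iff, Set.mem_singleton_iff] at hz
    have hX1l : (X 1 : Pc) ^ l = X 1 * X 1 ^ (l - 1) := by
      rw [← pow_succ']; congr 1; omega
    have hX0k : (X 0 : Pc) ^ k = X 0 * X 0 ^ (k - 1) := by
      rw [← pow_succ']; congr 1; omega
    have hCC : (C a⁻¹ : Pc) * C a = 1 := by
      rw [← C_mul, inv_mul_cancel₀ ha, C_1]
    rcases hz with rfl | rfl | rfl
    · exact Ideal.mem_sup_right (Ideal.subset_span rfl)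
    · have key : (X 0 : Pc) ^ (k + 1)
          = a⁻¹ • (X 0 * (X 1 ^ l + a • X 0 ^ k) - (X 0 * X 1) * X 1 ^ (l - 1)) := by
        rw [smul_eq_C_mul, smul_eq_C_mul, hX1l]
        linear_combination (-((X 0 : Pc) ^ (k + 1))) * hCC
      rw [key]
      refine Submodule.smul_of_tower_mem _ _ ?_
      refine Submodule.sub_mem _ ?_ ?_
      · exact Ideal.mem_sup_left (Ideal.mul_mem_left _ _ (Ideal.subset_span rfl))
      · exact Ideal.mem_sup_right (Ideal.mul_mem_right _ _ (Ideal.subset_span rfl))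
    · have key : (X 1 : Pc) ^ (l + 1)
          = X 1 * (X 1 ^ l + a • X 0 ^ k) - a • ((X 0 * X 1) * X 0 ^ (k - 1)) := by
        rw [smul_eq_C_mul, smul_eq_C_mul, hX0k]
        ring
      rw [key]
      refine Submodule.sub_mem _ ?_ ?_
      · exact Ideal.mem_sup_left (Ideal.mul_mem_left _ _ (Ideal.subset_span rfl))
      · exact Submodule.smul_of_tower_mem _ _
          (Ideal.mem_sup_right (Ideal.mul_mem_right _ _ (Ideal.subset_span rfl)))

lemma comap_QR {p j : ℕ} (hp : 1 ≤ p) (hj : 1 ≤ j) :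
    Ideal.comap πP (Ideal.span ({x ^ p, y ^ j} : Set Rnode)) = K0 p j := by
  have hA := map_mk_span_pair p j
  rw [QR_eq_map, comap_pi_eq,
    comap_map_loc (p := p) (j := j) (span_pair_le_mA hp hj) (Ideal.subset_span (by simp))
      (Ideal.subset_span (by simp)), ← hA, comap_mk_map, spanP_sup_node]

lemma comap_genR {a : ℂ} (ha : a ≠ 0) {k l : ℕ} (hk : 1 ≤ k) (hl : 1 ≤ l) :
    Ideal.comap πP (Ideal.span ({y ^ l + a • x ^ k} : Set Rnode))
      = K0 (k + 1) (l + 1) ⊔ Ideal.span ({X 1 ^ l + a • X 0 ^ k} : Set Pc) := by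
  have hA := map_mk_span_gen a k l
  rw [genR_eq_map, comap_pi_eq,
    comap_map_loc (p := k + 1) (j := l + 1) (genA_le_mA hk hl)
      (xA_pow_mem_genA ha hk hl) (yA_pow_mem_genA hk),
    ← hA, comap_mk_map, spanV_sup_node ha hk hl]

lemma map_pi_K0 (p j : ℕ) : Ideal.map πP (K0 p j) = Ideal.span {x ^ p, y ^ j} := by
  rw [K0, Ideal.map_span, Set.image_insert_eq, Set.image_insert_eq, Set.image_singleton]
  rw [show πP (X 0 * X 1) = 0 by rw [map_mul, πP_X0, πP_X1, x_mul_y], πP_pow0, πP_pow1]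
  exact Submodule.span_insert_zero

lemma map_pi_span_singleton (w : Pc) :
    Ideal.map πP (Ideal.span {w}) = Ideal.span {πP w} := by
  rw [Ideal.map_span, Set.image_singleton]

lemma span_smul_gen {c : ℂ} (hc : c ≠ 0) (v : Rnode) :
    Ideal.span ({c • v} : Set Rnode) = Ideal.span {v} := by
  apply le_antisymm
  · rw [Ideal.span_le, Set.singleton_subset_iff, SetLike.mem_coe, smul_Rnode]
    exact Ideal.mul_mem_left _ _ (Ideal.subset_span rfl)
  · rw [Ideal.span_le, Set.singleton_subset_iff, SetLike.mem_coe]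
    have hv : algebraMap ℂ Rnode c⁻¹ * (c • v) = v := by
      rw [smul_Rnode, ← mul_assoc, ← map_mul, inv_mul_cancel₀ hc, map_one, one_mul]
    have hmem : algebraMap ℂ Rnode c⁻¹ * (c • v) ∈ Ideal.span ({c • v} : Set Rnode) :=
      Ideal.mul_mem_left _ _ (Ideal.subset_span rfl)
    rwa [hv] at hmem

lemma sup_case_x {k l : ℕ} :
    Ideal.span {x ^ (k + 1), y ^ (l + 1)} ⊔ Ideal.span ({x ^ k} : Set Rnode)
      = Ideal.span {x ^ k, y ^ (l + 1)} := by
  apply le_antisymm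
  · refine sup_le ?_ ?_
    · rw [Ideal.span_le]
      rintro z hz
      simp only [Set.mem_insert_iff, Set.mem_singleton_iff] at hz
      rcases hz with rfl | rfl
      · rw [show (x : Rnode) ^ (k + 1) = x * x ^ k from pow_succ' x k]
        exact Ideal.mul_mem_left _ _ (Ideal.subset_span (by simp))
      · exact Ideal.subset_span (by simp)
    · rw [Ideal.span_le, Set.singleton_subset_iff]
      exact Ideal.subset_span (by simp)
  · rw [Ideal.span_le]
    rintro z hz
    simp only [Set.mem_insert_iff, Set.mem_singleton_iff] at hz
    rcases hz with rfl | rfl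
    · exact Ideal.mem_sup_right (Ideal.subset_span rfl)
    · exact Ideal.mem_sup_left (Ideal.subset_span (by simp))

lemma sup_case_y {k l : ℕ} :
    Ideal.span {x ^ (k + 1), y ^ (l + 1)} ⊔ Ideal.span ({y ^ l} : Set Rnode)
      = Ideal.span {x ^ (k + 1), y ^ l} := by
  apply le_antisymm
  · refine sup_le ?_ ?_
    · rw [Ideal.span_le]
      rintro z hz
      simp only [Set.mem_insert_iff, Set.mem_singleton_iff] at hz
      rcases hz with rfl | rfl
      · exact Ideal.subset_span (by simp)
      · rw [show (y : Rnode) ^ (l + 1) = y * y ^ l from pow_succ' y l]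
        exact Ideal.mul_mem_left _ _ (Ideal.subset_span (by simp))
    · rw [Ideal.span_le, Set.singleton_subset_iff]
      exact Ideal.subset_span (by simp)
  · rw [Ideal.span_le]
    rintro z hz
    simp only [Set.mem_insert_iff, Set.mem_singleton_iff] at hz
    rcases hz with rfl | rfl
    · exact Ideal.mem_sup_left (Ideal.subset_span (by simp))
    · exact Ideal.mem_sup_right (Ideal.subset_span rfl)

lemma sup_case_gen {a : ℂ} (ha : a ≠ 0) {k l : ℕ} (hk : 1 ≤ k) (hl : 1 ≤ l) :
    Ideal.span {x ^ (k + 1), y ^ (l + 1)} ⊔ Ideal.span ({y ^ l + a • x ^ k} : Set Rnode)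
      = Ideal.span {y ^ l + a • x ^ k} :=
  sup_eq_right.mpr (Q_le_genR ha hk hl)

lemma X0_mul_V_mem {a : ℂ} {k l : ℕ} (hk : 1 ≤ k) (hl : 1 ≤ l) :
    (X 0 : Pc) * (X 1 ^ l + a • X 0 ^ k) ∈ K0 (k + 1) (l + 1) := by
  have hX1l : (X 1 : Pc) ^ l = X 1 * X 1 ^ (l - 1) := by
    rw [← pow_succ']; congr 1; omega
  have key : (X 0 : Pc) * (X 1 ^ l + a • X 0 ^ k)
      = X 1 ^ (l - 1) * (X 0 * X 1) + (C a) * X 0 ^ (k + 1) := by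
    rw [smul_eq_C_mul, hX1l]; ring
  rw [key]
  exact Ideal.add_mem _ (Ideal.mul_mem_left _ _ (X0X1_mem_K0 _ _))
    (Ideal.mul_mem_left _ _ (X0pow_mem_K0 _ _))

lemma X1_mul_V_mem {a : ℂ} {k l : ℕ} (hk : 1 ≤ k) (hl : 1 ≤ l) :
    (X 1 : Pc) * (X 1 ^ l + a • X 0 ^ k) ∈ K0 (k + 1) (l + 1) := by
  have hX0k : (X 0 : Pc) ^ k = X 0 * X 0 ^ (k - 1) := by
    rw [← pow_succ']; congr 1; omega
  have key : (X 1 : Pc) * (X 1 ^ l + a • X 0 ^ k)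
      = (C a * X 0 ^ (k - 1)) * (X 0 * X 1) + 1 * X 1 ^ (l + 1) := by
    rw [smul_eq_C_mul, hX0k]; ring
  rw [key]
  exact Ideal.add_mem _ (Ideal.mul_mem_left _ _ (X0X1_mem_K0 _ _))
    (Ideal.mul_mem_left _ _ (X1pow_mem_K0 _ _))

lemma fco_V_ne {a : ℂ} (ha : a ≠ 0) {k l : ℕ} (hk : 1 ≤ k) (hl : 1 ≤ l) :
    fco (k + 1) (l + 1) (X 1 ^ l + a • X 0 ^ k) ≠ 0 := by
  intro h
  have h1 := congrFun (congrArg Prod.fst h) ⟨k, by omega⟩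
  simp only [fco_fst, Pi.zero_apply, Prod.fst_zero] at h1
  have h2 : coeff (Finsupp.single (0 : Fin 2) k) ((X 1 : Pc) ^ l + a • X 0 ^ k) = 0 := by
    simpa using h1
  rw [coeff_add, coeff_smul, coeff0_X1pow _ _ (by omega), coeff0_X0pow, if_pos rfl,
    zero_add, smul_eq_mul, mul_one] at h2
  exact ha h2

set_option synthInstance.maxHeartbeats 1000000 in
theorem colength_sub_one_ideals_containing_Q (m i : ℕ)
    (hm : 3 ≤ m) (hi1 : 2 ≤ i) (hi2 : i ≤ m - 1) :
    ∀ J : Ideal Rnode,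
      (Ideal.span {x ^ (m - i + 1), y ^ i} ≤ J ∧
        Module.finrank ℂ (Rnode ⧸ J) = m - 1) ↔
      ((∃ a : ℂ, a ≠ 0 ∧ J = Ideal.span {y ^ (i - 1) + a • x ^ (m - i)}) ∨
        J = Ideal.span {x ^ (m - i), y ^ i} ∨
        J = Ideal.span {x ^ (m - i + 1), y ^ (i - 1)}) := by
  obtain ⟨l, rfl⟩ : ∃ l, i = l + 1 := ⟨i - 1, by omega⟩
  have hl : 1 ≤ l := by omega
  set k := m - (l + 1) with hkdef
  have hk : 1 ≤ k := by omega
  have hm1 : m - 1 = k + l := by omega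
  intro J
  simp only [Nat.add_sub_cancel]
  rw [hm1]
  constructor
  · rintro ⟨hQ, hrank⟩
    set K := Ideal.comap πP J with hKdef
    have hK0 : K0 (k + 1) (l + 1) ≤ K := by
      rw [K0, Ideal.span_le]
      rintro z hz
      simp only [Set.mem_insert_iff, Set.mem_singleton_iff] at hz
      rcases hz with rfl | rfl | rfl
      · rw [SetLike.mem_coe, hKdef, Ideal.mem_comap, map_mul, πP_X0, πP_X1, x_mul_y]
        exact J.zero_mem
      · rw [SetLike.mem_coe, hKdef, Ideal.mem_comap, πP_pow0]
        exact hQ (Ideal.subset_span (by simp))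
      · rw [SetLike.mem_coe, hKdef, Ideal.mem_comap, πP_pow1]
        exact hQ (Ideal.subset_span (by simp))
    have hrankK : finrank ℂ (Pc ⧸ K) + 1 = (k + 1) + ((l + 1) - 1) := by
      have h1 : finrank ℂ (Pc ⧸ K) = k + l := by
        rw [hKdef, ← finrank_quot_eq (by omega) (by omega) hQ]
        exact hrank
      omega
    obtain ⟨α, β, hαβ, hKeq⟩ := classify_K (by omega) (by omega) K hK0 hrankK
    simp only [Nat.add_sub_cancel] at hKeq
    have hJ : J = Ideal.map πP K := (map_pi_comap (by omega) (by omega) hQ).symm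
    rw [hKeq, Ideal.map_sup, map_pi_K0, map_pi_span_singleton] at hJ
    have hπw : πP (α • X 0 ^ k + β • X 1 ^ l) = α • x ^ k + β • y ^ l := by
      rw [map_add, πP_smul, πP_smul, πP_pow0, πP_pow1]
    rw [hπw] at hJ
    have hzs : ∀ z : Rnode, (0 : ℂ) • z = 0 := fun z => by
      rw [smul_Rnode, map_zero, zero_mul]
    by_cases hβ : β = 0
    · have hα : α ≠ 0 := fun h => hαβ ⟨h, hβ⟩
      right; left
      rw [hJ, hβ, hzs, add_zero, span_smul_gen hα, sup_case_x]
    · by_cases hα0 : α = 0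
      · right; right
        rw [hJ, hα0, hzs, zero_add, span_smul_gen hβ, sup_case_y]
      · left
        refine ⟨α / β, div_ne_zero hα0 hβ, ?_⟩
        have hsm : α • x ^ k + β • y ^ l = β • (y ^ l + (α / β) • x ^ k) := by
          simp only [smul_Rnode]
          have hb : algebraMap ℂ Rnode β * algebraMap ℂ Rnode (α / β) = algebraMap ℂ Rnode α := by
            rw [← map_mul]
            congr 1
            field_simp
          linear_combination (-(x ^ k : Rnode)) * hb
        rw [hJ, hsm, span_smul_gen hβ, sup_case_gen (div_ne_zero hα0 hβ) hk hl]
  · have hQ2 : Ideal.span {x ^ (k + 1), y ^ (l + 1)} ≤ Ideal.span {x ^ k, y ^ (l + 1)} := by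
      rw [Ideal.span_le]
      rintro z hz
      simp only [Set.mem_insert_iff, Set.mem_singleton_iff] at hz
      rcases hz with rfl | rfl
      · rw [show (x : Rnode) ^ (k + 1) = x * x ^ k from pow_succ' x k]
        exact Ideal.mul_mem_left _ _ (Ideal.subset_span (by simp))
      · exact Ideal.subset_span (by simp)
    have hQ3 : Ideal.span {x ^ (k + 1), y ^ (l + 1)} ≤ Ideal.span {x ^ (k + 1), y ^ l} := by
      rw [Ideal.span_le]
      rintro z hz
      simp only [Set.mem_insert_iff, Set.mem_singleton_iff] at hz
      rcases hz with rfl | rfl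
      · exact Ideal.subset_span (by simp)
      · rw [show (y : Rnode) ^ (l + 1) = y * y ^ l from pow_succ' y l]
        exact Ideal.mul_mem_left _ _ (Ideal.subset_span (by simp))
    rintro (⟨a, ha, rfl⟩ | rfl | rfl)
    · refine ⟨Q_le_genR ha hk hl, ?_⟩
      rw [finrank_quot_eq (by omega) (by omega) (Q_le_genR ha hk hl), comap_genR ha hk hl]
      have hkey := finrank_quot_K0_sup (p := k + 1) (j := l + 1) (by omega) (by omega)
        (X0_mul_V_mem hk hl) (X1_mul_V_mem hk hl) (fco_V_ne ha hk hl)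
      simp only [Nat.add_sub_cancel] at hkey
      omega
    · refine ⟨hQ2, ?_⟩
      rw [finrank_quot_eq (by omega) (by omega) hQ2, comap_QR (by omega) (by omega)]
      have hkey := finrank_quot_K0 (p := k) (j := l + 1) (by omega) (by omega)
      simp only [Nat.add_sub_cancel] at hkey
      omega
    · refine ⟨hQ3, ?_⟩
      rw [finrank_quot_eq (by omega) (by omega) hQ3, comap_QR (by omega) (by omega)]
      have hkey := finrank_quot_K0 (p := k + 1) (j := l) (by omega) (by omega)
      omega

end
end

section
/- Fix m ≥ 3 and 2 ≤ i ≤ m−1, and let b, c ∈ 𝔪_S. Then the S-module S[x,y]/(xy, x^{m+1−i} + b·y^{i−1}, y^i + c·x^{m−i}) is free of rank m if and only if b·c = 0. (This is the local equation of the Hilbert scheme of m points of the node at the point Q^m_i: a normal crossing of two smooth m-dimensional components.) -/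
noncomputable section

open MvPolynomial

instance quotAlg (S : Type) [CommRing S] (I : Ideal (MvPolynomial (Fin 2) S)) :
    Algebra S (MvPolynomial (Fin 2) S ⧸ I) := Ideal.Quotient.algebra S

namespace PHSaux

variable {S : Type} [CommRing S]

/-- The ideal cutting out the local model. -/
def gI (S : Type) [CommRing S] (m i : ℕ) (b c : S) : Ideal (MvPolynomial (Fin 2) S) :=
  Ideal.span {X 0 * X 1, X 0 ^ (m + 1 - i) + C b * X 1 ^ (i - 1),
    X 1 ^ i + C c * X 0 ^ (m - i)}

lemma g1_mem (m i : ℕ) (b c : S) : (X 0 * X 1 : MvPolynomial (Fin 2) S) ∈ gI S m i b c :=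
  Ideal.subset_span (by simp)

lemma g2_mem (m i : ℕ) (b c : S) :
    (X 0 ^ (m + 1 - i) + C b * X 1 ^ (i - 1) : MvPolynomial (Fin 2) S) ∈ gI S m i b c :=
  Ideal.subset_span (by simp)

lemma g3_mem (m i : ℕ) (b c : S) :
    (X 1 ^ i + C c * X 0 ^ (m - i) : MvPolynomial (Fin 2) S) ∈ gI S m i b c :=
  Ideal.subset_span (by simp)

lemma X_eq_monomial (k : Fin 2) :
    (X k : MvPolynomial (Fin 2) S) = monomial (Finsupp.single k 1) 1 := by
  rw [← pow_one (X k : MvPolynomial (Fin 2) S), X_pow_eq_monomial]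

lemma mul_gen1 (d : Fin 2 →₀ ℕ) (s : S) :
    (monomial d s : MvPolynomial (Fin 2) S) * (X 0 * X 1)
      = monomial (d + (Finsupp.single 0 1 + Finsupp.single 1 1)) s := by
  rw [X_eq_monomial, X_eq_monomial, monomial_mul, monomial_mul, mul_one, mul_one]

lemma mul_gen2 (d : Fin 2 →₀ ℕ) (s : S) (n e : ℕ) (b : S) :
    (monomial d s : MvPolynomial (Fin 2) S) * (X 0 ^ n + C b * X 1 ^ e)
      = monomial (d + Finsupp.single 0 n) s + monomial (d + Finsupp.single 1 e) (s * b) := by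
  rw [mul_add, X_pow_eq_monomial, C_mul_X_pow_eq_monomial, monomial_mul, monomial_mul, mul_one]

lemma mul_gen3 (d : Fin 2 →₀ ℕ) (s : S) (e n : ℕ) (c : S) :
    (monomial d s : MvPolynomial (Fin 2) S) * (X 1 ^ e + C c * X 0 ^ n)
      = monomial (d + Finsupp.single 1 e) s + monomial (d + Finsupp.single 0 n) (s * c) := by
  rw [mul_add, X_pow_eq_monomial, C_mul_X_pow_eq_monomial, monomial_mul, monomial_mul, mul_one]

/-- coefficient vector of the normal form of a monomial. -/
def wv (m i : ℕ) (b c : S) (d : Fin 2 →₀ ℕ) : Fin m → S := fun j =>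
  (if d 1 = 0 ∧ d 0 < m + 1 - i ∧ (j : ℕ) = d 0 then (1 : S) else 0)
  + (if d 1 = 0 ∧ d 0 = m + 1 - i ∧ (j : ℕ) = m - 1 then -b else 0)
  + (if d 0 = 0 ∧ 0 < d 1 ∧ d 1 < i ∧ (j : ℕ) = m - i + d 1 then 1 else 0)
  + (if d 0 = 0 ∧ d 1 = i ∧ (j : ℕ) = m - i then -c else 0)

/-- the "normal form coefficients" linear map. -/
def psi (m i : ℕ) (b c : S) : MvPolynomial (Fin 2) S →ₗ[S] (Fin m → S) :=
  (MvPolynomial.basisMonomials (Fin 2) S).constr S (wv m i b c)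

lemma psi_monomial (m i : ℕ) (b c : S) (d : Fin 2 →₀ ℕ) (s : S) :
    psi m i b c (monomial d s) = s • wv m i b c d := by
  have h : (monomial d s : MvPolynomial (Fin 2) S) = s • monomial d 1 := by
    rw [smul_monomial, smul_eq_mul, mul_one]
  rw [h, map_smul, psi]
  congr 1
  have := Module.Basis.constr_basis (MvPolynomial.basisMonomials (Fin 2) S) S (wv m i b c) d
  rwa [coe_basisMonomials] at this

set_option maxHeartbeats 4000000 in
lemma wv_gen1 (m i : ℕ) (b c : S) (d : Fin 2 →₀ ℕ) :
    wv m i b c (d + (Finsupp.single 0 1 + Finsupp.single 1 1)) = 0 := by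
  funext j
  simp only [wv, Finsupp.add_apply, Finsupp.single_apply, Pi.zero_apply]
  norm_num

set_option maxHeartbeats 4000000 in
lemma wv_gen2 (m i : ℕ) (b c : S) (hm : 3 ≤ m) (hi1 : 2 ≤ i) (hi2 : i ≤ m - 1)
    (hbc : b * c = 0) (d : Fin 2 →₀ ℕ) (s : S) :
    s • wv m i b c (d + Finsupp.single 0 (m + 1 - i))
      + (s * b) • wv m i b c (d + Finsupp.single 1 (i - 1)) = 0 := by
  funext j
  simp only [wv, Pi.add_apply, Pi.smul_apply, smul_eq_mul, Finsupp.add_apply,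
    Finsupp.single_apply, Pi.zero_apply]
  norm_num
  split_ifs <;>
    first | omega | ring1 | linear_combination s * hbc | linear_combination (-s) * hbc

set_option maxHeartbeats 4000000 in
lemma wv_gen3 (m i : ℕ) (b c : S) (hm : 3 ≤ m) (hi1 : 2 ≤ i) (hi2 : i ≤ m - 1)
    (hbc : b * c = 0) (d : Fin 2 →₀ ℕ) (s : S) :
    s • wv m i b c (d + Finsupp.single 1 i)
      + (s * c) • wv m i b c (d + Finsupp.single 0 (m - i)) = 0 := by
  funext j
  simp only [wv, Pi.add_apply, Pi.smul_apply, smul_eq_mul, Finsupp.add_apply,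
    Finsupp.single_apply, Pi.zero_apply]
  norm_num
  split_ifs <;>
    first | omega | ring1 | linear_combination s * hbc | linear_combination (-s) * hbc

set_option maxHeartbeats 1000000 in
lemma psi_ker (m i : ℕ) (b c : S) (hm : 3 ≤ m) (hi1 : 2 ≤ i) (hi2 : i ≤ m - 1)
    (hbc : b * c = 0) : ∀ p ∈ gI S m i b c, psi m i b c p = 0 := by
  have hmul : ∀ g ∈ ({X 0 * X 1, X 0 ^ (m + 1 - i) + C b * X 1 ^ (i - 1),
      X 1 ^ i + C c * X 0 ^ (m - i)} : Set (MvPolynomial (Fin 2) S)),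
      ∀ q : MvPolynomial (Fin 2) S, psi m i b c (q * g) = 0 := by
    intro g hg
    simp only [Set.mem_insert_iff, Set.mem_singleton_iff] at hg
    rcases hg with rfl | rfl | rfl
    · intro q
      induction q using MvPolynomial.induction_on' with
      | monomial d s => rw [mul_gen1, psi_monomial, wv_gen1, smul_zero]
      | add p q hp hq => rw [add_mul, map_add, hp, hq, add_zero]
    · intro q
      induction q using MvPolynomial.induction_on' with
      | monomial d s =>
          rw [mul_gen2, map_add, psi_monomial, psi_monomial]
          exact wv_gen2 m i b c hm hi1 hi2 hbc d s
      | add p q hp hq => rw [add_mul, map_add, hp, hq, add_zero]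
    · intro q
      induction q using MvPolynomial.induction_on' with
      | monomial d s =>
          rw [mul_gen3, map_add, psi_monomial, psi_monomial]
          exact wv_gen3 m i b c hm hi1 hi2 hbc d s
      | add p q hp hq => rw [add_mul, map_add, hp, hq, add_zero]
  intro p hp
  have key : ∀ q : MvPolynomial (Fin 2) S, psi m i b c (q * p) = 0 := by
    refine Submodule.span_induction
      (p := fun x _ => ∀ q : MvPolynomial (Fin 2) S, psi m i b c (q * x) = 0)
      hmul ?_ ?_ ?_ hp
    · intro q; rw [mul_zero, map_zero]
    · intro x y _ _ h1 h2 q; rw [mul_add, map_add, h1, h2, add_zero]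
    · intro a x _ h q; rw [smul_eq_mul, ← mul_assoc, h]
  simpa using key 1

/-- candidate basis monomials -/
def mu (S : Type) [CommRing S] (m i : ℕ) : Fin m → MvPolynomial (Fin 2) S := fun j =>
  if (j : ℕ) < m + 1 - i then X 0 ^ (j : ℕ) else X 1 ^ ((j : ℕ) - (m - i))

set_option maxHeartbeats 4000000 in
lemma psi_mu (m i : ℕ) (b c : S) (hm : 3 ≤ m) (hi1 : 2 ≤ i) (hi2 : i ≤ m - 1) (j : Fin m) :
    psi m i b c (mu S m i j) = fun k : Fin m => if (k : ℕ) = (j : ℕ) then (1 : S) else 0 := by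
  have hjm : (j : ℕ) < m := j.isLt
  unfold mu
  split_ifs with hj
  · rw [X_pow_eq_monomial, psi_monomial, one_smul]
    funext k
    have hkm : (k : ℕ) < m := k.isLt
    simp only [wv, Finsupp.single_apply]
    norm_num
    split_ifs <;> first | rfl | ring1 | omega
  · rw [X_pow_eq_monomial, psi_monomial, one_smul]
    funext k
    have hkm : (k : ℕ) < m := k.isLt
    simp only [wv, Finsupp.single_apply]
    norm_num
    split_ifs <;> first | rfl | ring1 | omega

set_option maxHeartbeats 1000000 in
lemma exists_basis (m i : ℕ) (b c : S) (hm : 3 ≤ m) (hi1 : 2 ≤ i) (hi2 : i ≤ m - 1)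
    (hbc : b * c = 0) :
    Nonempty (Module.Basis (Fin m) S (MvPolynomial (Fin 2) S ⧸ gI S m i b c)) := by
  classical
  set I := gI S m i b c with hI
  set v : Fin m → (MvPolynomial (Fin 2) S ⧸ I) :=
    fun j => Ideal.Quotient.mk I (mu S m i j) with hv
  have hmks : ∀ (s : S) (p : MvPolynomial (Fin 2) S),
      Ideal.Quotient.mk I (s • p) = s • Ideal.Quotient.mk I p := by
    intro s p
    rw [← Ideal.Quotient.mkₐ_eq_mk S I]
    exact map_smul _ s p
  have hli : LinearIndependent S v := by
    rw [Fintype.linearIndependent_iff]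
    intro g hg j0
    have hmk : Ideal.Quotient.mk I (∑ j, g j • mu S m i j) = 0 := by
      rw [map_sum]
      simp only [hmks]
      exact hg
    have hker := psi_ker m i b c hm hi1 hi2 hbc _ (Ideal.Quotient.eq_zero_iff_mem.mp hmk)
    rw [map_sum] at hker
    simp only [map_smul, psi_mu m i b c hm hi1 hi2] at hker
    have hj0 := congrFun hker j0
    simp only [Finset.sum_apply, Pi.smul_apply, smul_eq_mul, Pi.zero_apply, mul_ite, mul_one,
      mul_zero, Fin.val_eq_val] at hj0
    rwa [Finset.sum_ite_eq Finset.univ j0 g, if_pos (Finset.mem_univ j0)] at hj0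
  have hmk0 : ∀ p ∈ I, Ideal.Quotient.mk I p = 0 :=
    fun p hp => Ideal.Quotient.eq_zero_iff_mem.mpr hp
  have hmix : ∀ a e : ℕ, 0 < a → 0 < e →
      Ideal.Quotient.mk I (X 0 ^ a * X 1 ^ e) = 0 := by
    intro a e ha he
    obtain ⟨a', rfl⟩ : ∃ a', a = a' + 1 := ⟨a - 1, by omega⟩
    obtain ⟨e', rfl⟩ : ∃ e', e = e' + 1 := ⟨e - 1, by omega⟩
    apply hmk0
    have h : (X 0 ^ (a' + 1) * X 1 ^ (e' + 1) : MvPolynomial (Fin 2) S)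
        = (X 0 ^ a' * X 1 ^ e') * (X 0 * X 1) := by ring
    rw [h]
    exact Ideal.mul_mem_left _ _ (g1_mem m i b c)
  have hv1 : ∀ (a : ℕ), a < m + 1 - i →
      Ideal.Quotient.mk I (X 0 ^ a) ∈ Submodule.span S (Set.range v) := by
    intro a h
    have ham : a < m := by omega
    have he : v ⟨a, ham⟩ = Ideal.Quotient.mk I (X 0 ^ a) := by
      simp only [hv, mu]
      rw [if_pos h]
    rw [← he]
    exact Submodule.subset_span (Set.mem_range_self _)
  have hv2 : ∀ (e : ℕ), 0 < e → e < i →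
      Ideal.Quotient.mk I (X 1 ^ e) ∈ Submodule.span S (Set.range v) := by
    intro e h1 h2
    have hem : m - i + e < m := by omega
    have he : v ⟨m - i + e, hem⟩ = Ideal.Quotient.mk I (X 1 ^ e) := by
      simp only [hv, mu]
      have hcond : ¬(((⟨m - i + e, hem⟩ : Fin m) : ℕ) < m + 1 - i) := by
        show ¬(m - i + e < m + 1 - i)
        omega
      rw [if_neg hcond]
      have hexp : ((⟨m - i + e, hem⟩ : Fin m) : ℕ) - (m - i) = e := by
        show m - i + e - (m - i) = e
        omega
      rw [hexp]
    rw [← he]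
    exact Submodule.subset_span (Set.mem_range_self _)
  have hsmulC : ∀ (s : S) (p : MvPolynomial (Fin 2) S),
      Ideal.Quotient.mk I (C s * p) = s • Ideal.Quotient.mk I p := by
    intro s p
    rw [map_mul, ← MvPolynomial.algebraMap_eq, Ideal.Quotient.mk_algebraMap, ← Algebra.smul_def]
  have hxn : Ideal.Quotient.mk I (X 0 ^ (m + 1 - i))
      = -(b • Ideal.Quotient.mk I (X 1 ^ (i - 1))) := by
    have h0 := hmk0 _ (g2_mem m i b c)
    rw [map_add, hsmulC] at h0
    exact eq_neg_of_add_eq_zero_left h0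
  have hyi : Ideal.Quotient.mk I (X 1 ^ i)
      = -(c • Ideal.Quotient.mk I (X 0 ^ (m - i))) := by
    have h0 := hmk0 _ (g3_mem m i b c)
    rw [map_add, hsmulC] at h0
    exact eq_neg_of_add_eq_zero_left h0
  have hpow : ∀ a e : ℕ,
      Ideal.Quotient.mk I (X 0 ^ a * X 1 ^ e) ∈ Submodule.span S (Set.range v) := by
    intro a e
    rcases Nat.eq_zero_or_pos a with ha | ha
    · subst ha
      rw [pow_zero, one_mul]
      rcases Nat.eq_zero_or_pos e with he | he
      · subst he
        rw [pow_zero]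
        have h1 : (1 : MvPolynomial (Fin 2) S) = X 0 ^ 0 := by rw [pow_zero]
        rw [h1]
        exact hv1 0 (by omega)
      · rcases lt_trichotomy e i with h | h | h
        · exact hv2 e he h
        · rw [h, hyi]
          exact Submodule.neg_mem _ (Submodule.smul_mem _ c (hv1 (m - i) (by omega)))
        · have hmem : (X 1 ^ e : MvPolynomial (Fin 2) S) ∈ I := by
            obtain ⟨t, rfl⟩ : ∃ t, e = i + (t + 1) := ⟨e - i - 1, by omega⟩
            obtain ⟨w, hw⟩ : ∃ w, m - i = w + 1 := ⟨m - i - 1, by omega⟩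
            have hcomb : (X 1 ^ (i + (t + 1)) : MvPolynomial (Fin 2) S)
                = (X 1 ^ (t + 1)) * (X 1 ^ i + C c * X 0 ^ (m - i))
                  - (C c * X 1 ^ t * X 0 ^ w) * (X 0 * X 1) := by
              rw [hw]
              ring
            rw [hcomb]
            exact Submodule.sub_mem _ (Ideal.mul_mem_left _ _ (g3_mem m i b c))
              (Ideal.mul_mem_left _ _ (g1_mem m i b c))
          rw [hmk0 _ hmem]
          exact Submodule.zero_mem _
    · rcases Nat.eq_zero_or_pos e with he | he
      · subst he
        rw [pow_zero, mul_one]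
        rcases lt_trichotomy a (m + 1 - i) with h | h | h
        · exact hv1 a h
        · rw [h, hxn]
          exact Submodule.neg_mem _ (Submodule.smul_mem _ b (hv2 (i - 1) (by omega) (by omega)))
        · have hmem : (X 0 ^ a : MvPolynomial (Fin 2) S) ∈ I := by
            obtain ⟨t, rfl⟩ : ∃ t, a = (m + 1 - i) + (t + 1) := ⟨a - (m + 1 - i) - 1, by omega⟩
            obtain ⟨u, hu⟩ : ∃ u, i - 1 = u + 1 := ⟨i - 2, by omega⟩
            have hcomb : (X 0 ^ ((m + 1 - i) + (t + 1)) : MvPolynomial (Fin 2) S)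
                = (X 0 ^ (t + 1)) * (X 0 ^ (m + 1 - i) + C b * X 1 ^ (i - 1))
                  - (C b * X 0 ^ t * X 1 ^ u) * (X 0 * X 1) := by
              rw [hu]
              ring
            rw [hcomb]
            exact Submodule.sub_mem _ (Ideal.mul_mem_left _ _ (g2_mem m i b c))
              (Ideal.mul_mem_left _ _ (g1_mem m i b c))
          rw [hmk0 _ hmem]
          exact Submodule.zero_mem _
      · rw [hmix a e ha he]
        exact Submodule.zero_mem _
  have hall : ∀ p : MvPolynomial (Fin 2) S,
      Ideal.Quotient.mk I p ∈ Submodule.span S (Set.range v) := by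
    intro p
    induction p using MvPolynomial.induction_on' with
    | add p1 p2 h1 h2 =>
        rw [map_add]
        exact Submodule.add_mem _ h1 h2
    | monomial d s =>
        have hd : d = Finsupp.single 0 (d 0) + Finsupp.single 1 (d 1) := by
          ext t
          fin_cases t <;> simp [Finsupp.single_apply]
        have hmon : (monomial d s : MvPolynomial (Fin 2) S)
            = s • (X 0 ^ (d 0) * X 1 ^ (d 1)) := by
          rw [X_pow_eq_monomial, X_pow_eq_monomial, monomial_mul, one_mul, ← hd,
            smul_monomial, smul_eq_mul, mul_one]
        rw [hmon, hmks]
        exact Submodule.smul_mem _ s (hpow (d 0) (d 1))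
  have hsp : ⊤ ≤ Submodule.span S (Set.range v) := by
    intro q _
    obtain ⟨p, rfl⟩ := Ideal.Quotient.mk_surjective q
    exact hall p
  exact ⟨Module.Basis.mk hli hsp⟩

set_option maxHeartbeats 1000000 in
set_option synthInstance.maxHeartbeats 400000 in
lemma bc_zero [IsLocalRing S] (m i : ℕ) (b c : S) (hm : 3 ≤ m) (hi1 : 2 ≤ i)
    (hi2 : i ≤ m - 1) (hb : b ∈ IsLocalRing.maximalIdeal S) (hc : c ∈ IsLocalRing.maximalIdeal S)
    (β : Module.Basis (Fin m) S (MvPolynomial (Fin 2) S ⧸ gI S m i b c)) : b * c = 0 := by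
  classical
  set I := gI S m i b c with hI
  have hcK : algebraMap S (IsLocalRing.ResidueField S) c = 0 := by
    rw [IsLocalRing.ResidueField.algebraMap_eq]
    exact Ideal.Quotient.eq_zero_iff_mem.mpr hc
  set chi : MvPolynomial (Fin 2) S →ₗ[S] IsLocalRing.ResidueField S :=
    (Algebra.linearMap S (IsLocalRing.ResidueField S)).comp
      (lcoeff S (Finsupp.single 0 (m - i))) with hchi
  have hchi_mon : ∀ (d : Fin 2 →₀ ℕ) (s : S), chi (monomial d s)
      = algebraMap S (IsLocalRing.ResidueField S)
        (if d = Finsupp.single 0 (m - i) then s else 0) := by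
    intro d s
    simp only [hchi, LinearMap.comp_apply, Algebra.linearMap_apply]
    congr 1
    simp [lcoeff_apply, coeff_monomial]
  have hker : ∀ p ∈ I, chi p = 0 := by
    have hmul : ∀ g ∈ ({X 0 * X 1, X 0 ^ (m + 1 - i) + C b * X 1 ^ (i - 1),
        X 1 ^ i + C c * X 0 ^ (m - i)} : Set (MvPolynomial (Fin 2) S)),
        ∀ q : MvPolynomial (Fin 2) S, chi (q * g) = 0 := by
      intro g hg
      simp only [Set.mem_insert_iff, Set.mem_singleton_iff] at hg
      rcases hg with rfl | rfl | rfl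
      · intro q
        induction q using MvPolynomial.induction_on' with
        | monomial d s =>
            have hne : d + (Finsupp.single 0 1 + Finsupp.single 1 1)
                ≠ Finsupp.single 0 (m - i) := by
              intro h
              have h1 := DFunLike.congr_fun h (1 : Fin 2)
              simp [Finsupp.single_apply] at h1
            rw [mul_gen1, hchi_mon, if_neg hne, map_zero]
        | add p q hp hq => rw [add_mul, map_add, hp, hq, add_zero]
      · intro q
        induction q using MvPolynomial.induction_on' with
        | monomial d s =>
            have hne1 : d + Finsupp.single 0 (m + 1 - i) ≠ Finsupp.single 0 (m - i) := by
              intro h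
              have h1 := DFunLike.congr_fun h (0 : Fin 2)
              simp [Finsupp.single_apply] at h1
              omega
            have hne2 : d + Finsupp.single 1 (i - 1) ≠ Finsupp.single 0 (m - i) := by
              intro h
              have h1 := DFunLike.congr_fun h (1 : Fin 2)
              simp [Finsupp.single_apply] at h1
              omega
            rw [mul_gen2, map_add, hchi_mon, hchi_mon, if_neg hne1, if_neg hne2, map_zero,
              add_zero]
        | add p q hp hq => rw [add_mul, map_add, hp, hq, add_zero]
      · intro q
        induction q using MvPolynomial.induction_on' with
        | monomial d s =>
            have hne1 : d + Finsupp.single 1 i ≠ Finsupp.single 0 (m - i) := by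
              intro h
              have h1 := DFunLike.congr_fun h (1 : Fin 2)
              simp [Finsupp.single_apply] at h1
              omega
            rw [mul_gen3, map_add, hchi_mon, hchi_mon, if_neg hne1, map_zero, zero_add]
            rcases eq_or_ne (d + Finsupp.single 0 (m - i)) (Finsupp.single 0 (m - i)) with
              hcase | hcase
            · rw [if_pos hcase, map_mul, hcK, mul_zero]
            · rw [if_neg hcase, map_zero]
        | add p q hp hq => rw [add_mul, map_add, hp, hq, add_zero]
    intro p hp
    have key : ∀ q : MvPolynomial (Fin 2) S, chi (q * p) = 0 := by
      refine Submodule.span_induction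
        (p := fun x _ => ∀ q : MvPolynomial (Fin 2) S, chi (q * x) = 0)
        hmul ?_ ?_ ?_ hp
      · intro q; rw [mul_zero, map_zero]
      · intro x y _ _ h1 h2 q; rw [mul_add, map_add, h1, h2, add_zero]
      · intro a x _ h q; rw [smul_eq_mul, ← mul_assoc, h]
    simpa using key 1
  -- the element x^(m-i) is killed by b*c
  have hmemI : (C (b * c) * X 0 ^ (m - i) : MvPolynomial (Fin 2) S) ∈ I := by
    have hcomb : (C (b * c) * X 0 ^ (m - i) : MvPolynomial (Fin 2) S)
        = C b * (X 1 ^ i + C c * X 0 ^ (m - i))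
          - X 1 * (X 0 ^ (m + 1 - i) + C b * X 1 ^ (i - 1))
          + X 0 ^ (m - i) * (X 0 * X 1) := by
      obtain ⟨u, hu⟩ : ∃ u, i = u + 1 := ⟨i - 1, by omega⟩
      obtain ⟨w, hw⟩ : ∃ w, m - i = w := ⟨m - i, rfl⟩
      have e2 : m + 1 - i = w + 1 := by omega
      have e3 : i - 1 = u := by omega
      rw [e2, hw, e3, hu, map_mul]
      ring
    rw [hcomb]
    exact Submodule.add_mem _
      (Submodule.sub_mem _ (Ideal.mul_mem_left _ _ (g3_mem m i b c))
        (Ideal.mul_mem_left _ _ (g2_mem m i b c)))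
      (Ideal.mul_mem_left _ _ (g1_mem m i b c))
  set z : MvPolynomial (Fin 2) S ⧸ I := Ideal.Quotient.mk I (X 0 ^ (m - i)) with hz
  have hmks : ∀ (s : S) (q : MvPolynomial (Fin 2) S),
      Ideal.Quotient.mk I (s • q) = s • Ideal.Quotient.mk I q := by
    intro s q
    rw [← Ideal.Quotient.mkₐ_eq_mk S I]
    exact map_smul _ s q
  have hbcz : (b * c) • z = 0 := by
    rw [hz, ← hmks (b * c) (X 0 ^ (m - i)), MvPolynomial.smul_eq_C_mul]
    exact Ideal.Quotient.eq_zero_iff_mem.mpr hmemI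
  have hrep : ∀ j, (b * c) * β.repr z j = 0 := by
    intro j
    have h0 : β.repr ((b * c) • z) = 0 := by rw [hbcz, map_zero]
    rw [map_smul] at h0
    have := DFunLike.congr_fun h0 j
    simpa using this
  have hunit : ∃ j, IsUnit (β.repr z j) := by
    by_contra hcon
    push_neg at hcon
    have hmem : ∀ j, β.repr z j ∈ IsLocalRing.maximalIdeal S := by
      intro j
      rw [IsLocalRing.mem_maximalIdeal]
      exact hcon j
    choose p hp using fun j => Ideal.Quotient.mk_surjective (I := I) (β j)
    have hdiff : (X 0 ^ (m - i) - ∑ j, β.repr z j • p j : MvPolynomial (Fin 2) S) ∈ I := by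
      rw [← Ideal.Quotient.eq_zero_iff_mem, map_sub, map_sum]
      simp only [hmks, hp]
      rw [← hz, Module.Basis.sum_repr β z, sub_self]
    have hchi0 := hker _ hdiff
    rw [map_sub, map_sum] at hchi0
    have hleft : chi (X 0 ^ (m - i)) = 1 := by
      rw [X_pow_eq_monomial, hchi_mon, if_pos rfl, map_one]
    have hright : ∀ j, chi (β.repr z j • p j) = 0 := by
      intro j
      have hval : algebraMap S (IsLocalRing.ResidueField S) (β.repr z j) = 0 := by
        rw [IsLocalRing.ResidueField.algebraMap_eq]
        exact Ideal.Quotient.eq_zero_iff_mem.mpr (hmem j)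
      rw [map_smul, Algebra.smul_def, hval, zero_mul]
    rw [hleft] at hchi0
    simp only [hright, Finset.sum_const_zero, sub_zero] at hchi0
    exact one_ne_zero hchi0
  obtain ⟨j0, hu⟩ := hunit
  exact (IsUnit.mul_left_eq_zero hu).mp (hrep j0)

end PHSaux

set_option maxHeartbeats 1000000 in
set_option synthInstance.maxHeartbeats 1000000 in
/-- for an Artinian local ℂ-algebra `S` with residue field `ℂ`,
`m ≥ 3`, `2 ≤ i ≤ m−1` and `b, c` in the maximal ideal of `S`, the `S`-module
`S[x,y]/(xy, x^{m+1−i} + b·y^{i−1}, yⁱ + c·x^{m−i})` is free of rank `m` iff `b·c = 0`. -/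
theorem punctual_hilbert_scheme_local_equation_at_Q
    (S : Type) [CommRing S] [Algebra ℂ S] [IsArtinianRing S] [IsLocalRing S]
    (hres : Function.Bijective (algebraMap ℂ (IsLocalRing.ResidueField S)))
    (m i : ℕ) (hm : 3 ≤ m) (hi1 : 2 ≤ i) (hi2 : i ≤ m - 1)
    (b c : S) (hb : b ∈ IsLocalRing.maximalIdeal S) (hc : c ∈ IsLocalRing.maximalIdeal S) :
    Nonempty (Module.Basis (Fin m) S (MvPolynomial (Fin 2) S ⧸
      (Ideal.span {X 0 * X 1, X 0 ^ (m + 1 - i) + C b * X 1 ^ (i - 1),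
        X 1 ^ i + C c * X 0 ^ (m - i)} : Ideal (MvPolynomial (Fin 2) S)))) ↔
    b * c = 0 := by
  constructor
  · rintro ⟨β⟩
    exact PHSaux.bc_zero m i b c hm hi1 hi2 hb hc β
  · intro hbc
    exact PHSaux.exists_basis m i b c hm hi1 hi2 hbc

end
end
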